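/- arXiv:2004.07059 — 2 statements merged into one kernel-verified Lean document; each statement's English description precedes it below -/
import Mathlib

section
/- For every integer m ≥ 2, there exist exactly two equivalence classes of optimal Hermitian LCD quaternary [5m+1, 2, 4m] codes; that is, there exist optimal Hermitian LCD [5m+1, 2, 4m] codes C₁ and C₂ that are not equivalent, such that every optimal Hermitian LCD [5m+1, 2, 4m] code is equivalent to C₁ or to C₂. -/
open Finset

/-- The finite field with four elements. -/
abbrev F4 : Type := GaloisField 2 2

noncomputable instance : Fintype F4 := Fintype.ofFinite F4

lemma F4.card_eq : Fintype.card F4 = 4 := by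
  simpa using GaloisField.card 2 2 (by norm_num)

lemma F4.exists_omega : ∃ x : F4, x ^ 2 + x + 1 = 0 := by
  classical
  obtain ⟨x, hx0, hx1⟩ : ∃ x : F4, x ≠ 0 ∧ x ≠ 1 := by
    by_contra h
    push_neg at h
    have hsub : (Finset.univ : Finset F4) ⊆ {0, 1} := by
      intro x _
      rcases eq_or_ne x 0 with h0 | h0
      · simp [h0]
      · simp [h x h0]
    have h1 := Finset.card_le_card hsub
    have h2 : ({0, 1} : Finset F4).card ≤ 2 := (Finset.card_insert_le _ _).trans (by simp)
    have h3 : (Finset.univ : Finset F4).card = 4 := F4.card_eq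
    omega
  refine ⟨x, ?_⟩
  have hx : x ^ Fintype.card F4 = x := FiniteField.pow_card x
  rw [F4.card_eq] at hx
  have hmul : x * (x - 1) * (x ^ 2 + x + 1) = 0 := by
    have : x * (x - 1) * (x ^ 2 + x + 1) = x ^ 4 - x := by ring
    rw [this, hx, sub_self]
  rcases mul_eq_zero.mp hmul with h | h
  · rcases mul_eq_zero.mp h with h | h
    · exact absurd h hx0
    · exact absurd (sub_eq_zero.mp h) hx1
  · exact h

/-- A fixed root of `X² + X + 1` in `F₄`. -/
noncomputable def ω4 : F4 := Classical.choose F4.exists_omega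

lemma ω4_spec : ω4 ^ 2 + ω4 + 1 = 0 := Classical.choose_spec F4.exists_omega

open scoped Classical in
/-- Hamming weight of a vector. -/
noncomputable def wt {n : ℕ} (x : Fin n → F4) : ℕ :=
  (Finset.univ.filter fun i => x i ≠ 0).card

/-- `C` is a code with minimum (nonzero) weight `d`. -/
noncomputable def hasMinWeight {n : ℕ} (C : Submodule F4 (Fin n → F4)) (d : ℕ) : Prop :=
  (∀ x ∈ C, x ≠ 0 → d ≤ wt x) ∧ ∃ x ∈ C, x ≠ 0 ∧ wt x = d

/-- The Hermitian inner product on `F₄ⁿ`; the conjugate of `x` is `x²`. -/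
noncomputable def hermInner {n : ℕ} (u v : Fin n → F4) : F4 := ∑ i, u i * (v i) ^ 2

/-- The Hermitian dual code. -/
noncomputable def hermDual {n : ℕ} (C : Submodule F4 (Fin n → F4)) : Submodule F4 (Fin n → F4) where
  carrier := {x | ∀ y ∈ C, hermInner x y = 0}
  zero_mem' := by intro y hy; simp [hermInner]
  add_mem' := by
    intro a b ha hb y hy
    have := ha y hy
    have := hb y hy
    simp only [hermInner, Pi.add_apply, add_mul, Finset.sum_add_distrib] at *
    simp [*]
  smul_mem' := by
    intro c a ha y hy
    have h := ha y hy
    simp only [hermInner, Pi.smul_apply, smul_eq_mul, mul_assoc, ← Finset.mul_sum] at *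
    simp [h]

/-- `C` is a Hermitian linear complementary dual code. -/
noncomputable def IsHermLCD {n : ℕ} (C : Submodule F4 (Fin n → F4)) : Prop :=
  C ⊓ hermDual C = ⊥

/-- The monomial linear map given by a permutation of coordinates followed by a
multiplication of each coordinate by a scalar. -/
noncomputable def monoMap {n : ℕ} (σ : Equiv.Perm (Fin n)) (s : Fin n → F4) :
    (Fin n → F4) →ₗ[F4] (Fin n → F4) where
  toFun x := fun i => s i * x (σ i)
  map_add' a b := by funext i; simp [mul_add]
  map_smul' c a := by funext i; simp [smul_eq_mul]; ring

/-- Two codes are equivalent if one is obtained from the other by a permutation of the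
coordinates and multiplication of coordinates by nonzero scalars. -/
noncomputable def codeEquiv {n : ℕ} (C C' : Submodule F4 (Fin n → F4)) : Prop :=
  ∃ (σ : Equiv.Perm (Fin n)) (s : Fin n → F4),
    (∀ i, s i ≠ 0) ∧ Submodule.map (monoMap σ s) C = C'

/-- First row of the generator matrix `G(a₁, a₂, a₃, a₄, a₅)`. -/
noncomputable def row1 (n a₁ : ℕ) : Fin n → F4 := fun i =>
  if i.val = 0 then 1
  else if i.val < 2 + a₁ then 0
  else 1

/-- Second row of the generator matrix `G(a₁, a₂, a₃, a₄, a₅)`. -/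
noncomputable def row2 (n a₁ a₂ a₃ a₄ : ℕ) : Fin n → F4 := fun i =>
  if i.val = 0 then 0
  else if i.val < 2 + a₁ then 1
  else if i.val < 2 + a₁ + a₂ then 0
  else if i.val < 2 + a₁ + a₂ + a₃ then 1
  else if i.val < 2 + a₁ + a₂ + a₃ + a₄ then ω4
  else ω4 ^ 2

set_option linter.unusedVariables false in
/-- The code `C(a₁, a₂, a₃, a₄, a₅)`, of length `n = 2 + a₁ + a₂ + a₃ + a₄ + a₅`:
the span of the rows of the generator matrix `G(a₁, a₂, a₃, a₄, a₅)` whose columns are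
`(1,0)ᵀ`, `(0,1)ᵀ`, `a₁` columns `(0,1)ᵀ`, `a₂` columns `(1,0)ᵀ`, `a₃` columns `(1,1)ᵀ`,
`a₄` columns `(1,ω)ᵀ` and `a₅` columns `(1,ω²)ᵀ`. -/
noncomputable def Ccode (n a₁ a₂ a₃ a₄ a₅ : ℕ) : Submodule F4 (Fin n → F4) :=
  Submodule.span F4 {row1 n a₁, row2 n a₁ a₂ a₃ a₄}

/-- The largest minimum weight among Hermitian LCD `[n,2]` codes. -/
def optimalDist (n : ℕ) : ℕ :=
  if n % 5 = 1 ∨ n % 5 = 2 ∨ n % 5 = 3 then 4 * n / 5 else 4 * n / 5 - 1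

/-- `C` is an optimal Hermitian LCD `[n, 2, d]` code. -/
noncomputable def IsOptimalLCD (n d : ℕ) (C : Submodule F4 (Fin n → F4)) : Prop :=
  Module.finrank F4 C = 2 ∧ hasMinWeight C d ∧ IsHermLCD C ∧ d = optimalDist n

/-- The linear map appending a zero coordinate: `x ↦ (x, 0)`. -/
noncomputable def extendZero (m : ℕ) : (Fin m → F4) →ₗ[F4] (Fin (m + 1) → F4) where
  toFun x := Fin.snoc x 0
  map_add' a b := by
    funext i
    refine Fin.lastCases ?_ ?_ i <;> simp
  map_smul' c a := by
    funext i
    refine Fin.lastCases ?_ ?_ i <;> simp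

-- my part
open scoped Classical

lemma F4.two_eq_zero : (2 : F4) = 0 := CharP.cast_eq_zero F4 2

lemma F4.add_self (x : F4) : x + x = 0 := by
  linear_combination x * F4.two_eq_zero

lemma F4.pow4 (x : F4) : x ^ 4 = x := by
  have hx : x ^ Fintype.card F4 = x := FiniteField.pow_card x
  rwa [F4.card_eq] at hx

lemma F4.cube (x : F4) (hx : x ≠ 0) : x ^ 3 = 1 := by
  have h := F4.pow4 x
  have : x * x ^ 3 = x * 1 := by linear_combination h
  exact mul_left_cancel₀ hx this

lemma ω4_sq : ω4 ^ 2 = ω4 + 1 := by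
  linear_combination ω4_spec - (ω4 + 1) * F4.two_eq_zero

lemma ω4_ne_zero : ω4 ≠ 0 := by
  intro h
  have := ω4_spec
  rw [h] at this
  simp at this

lemma ω4_ne_one : ω4 ≠ 1 := by
  intro h
  have hs := ω4_spec
  rw [h] at hs
  have : (1:F4) = 0 := by linear_combination hs - F4.two_eq_zero
  exact one_ne_zero this

lemma ω4_cube : ω4 ^ 3 = 1 := F4.cube ω4 ω4_ne_zero

lemma ω4_sq_ne_zero : ω4 ^ 2 ≠ 0 := pow_ne_zero 2 ω4_ne_zero

lemma ω4_sq_ne_one : ω4 ^ 2 ≠ 1 := by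
  rw [ω4_sq]
  intro h
  exact ω4_ne_zero (by linear_combination h)

lemma ω4_sq_ne_omega : ω4 ^ 2 ≠ ω4 := by
  rw [ω4_sq]; intro h
  exact one_ne_zero (α := F4) (by linear_combination h)

lemma ω4_mul_sq : ω4 * ω4 ^ 2 = 1 := by linear_combination ω4_cube

lemma ω4_inv : ω4⁻¹ = ω4 ^ 2 := inv_eq_of_mul_eq_one_right ω4_mul_sq

lemma ω4_sq_inv : (ω4 ^ 2)⁻¹ = ω4 :=
  inv_eq_of_mul_eq_one_right (by linear_combination ω4_cube)

lemma F4.cases (x : F4) : x = 0 ∨ x = 1 ∨ x = ω4 ∨ x = ω4 ^ 2 := by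
  have h : x * ((x + 1) * ((x + ω4) * (x + ω4 ^ 2))) = 0 := by
    have h4 := F4.pow4 x
    have hxx := F4.add_self x
    have : x * ((x + 1) * ((x + ω4) * (x + ω4 ^ 2))) = x ^ 4 + x := by
      linear_combination (x^3 + x^2*ω4 + x*(ω4-1)) * ω4_spec
    rw [this, h4]
    exact hxx
  rcases mul_eq_zero.mp h with h1 | h1
  · exact Or.inl h1
  rcases mul_eq_zero.mp h1 with h2 | h2
  · exact Or.inr (Or.inl (by linear_combination h2 - F4.two_eq_zero))
  rcases mul_eq_zero.mp h2 with h3 | h3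
  · exact Or.inr (Or.inr (Or.inl (by linear_combination h3 - ω4 * F4.two_eq_zero)))
  · exact Or.inr (Or.inr (Or.inr (by linear_combination h3 - ω4^2 * F4.two_eq_zero)))

lemma F4.card_set : ({0, 1, ω4, ω4 ^ 2} : Finset F4).card = 4 := by
  rw [Finset.card_insert_of_notMem, Finset.card_insert_of_notMem,
    Finset.card_insert_of_notMem, Finset.card_singleton]
  · simp [Ne.symm ω4_sq_ne_omega]
  · simp [Ne.symm ω4_ne_one, Ne.symm ω4_sq_ne_one]
  · simp [Ne.symm ω4_ne_zero, Ne.symm ω4_sq_ne_zero]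

lemma F4.univ_eq : (Finset.univ : Finset F4) = {0, 1, ω4, ω4 ^ 2} := by
  symm
  apply Finset.eq_of_subset_of_card_le (Finset.subset_univ _)
  rw [F4.card_set]
  exact le_of_eq F4.card_eq

lemma F4.neg_eq' (x : F4) : -x = x := by linear_combination -x * F4.two_eq_zero

lemma F4.add_eq_zero {x y : F4} : x + y = 0 ↔ x = y := by
  constructor
  · intro h; linear_combination h - F4.add_self y
  · intro h; rw [h]; exact F4.add_self y

namespace Aux

abbrev KK := Option (Option F4)

/-- first coordinate of representative column -/
noncomputable def fstK : KK → F4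
  | none => 0
  | some none => 0
  | some (some _) => 1

/-- second coordinate of representative column -/
noncomputable def sndK : KK → F4
  | none => 0
  | some none => 1
  | some (some r) => r

variable {n : ℕ}

/-- key of column i of the pair (v, w) -/
noncomputable def key (v w : Fin n → F4) (i : Fin n) : KK :=
  if v i = 0 then (if w i = 0 then none else some none)
  else some (some (w i * (v i)⁻¹))

noncomputable def cnt (v w : Fin n → F4) (k : KK) : ℕ :=
  (Finset.univ.filter fun i => key v w i = k).card

noncomputable def scale (v w : Fin n → F4) (i : Fin n) : F4 :=
  if v i = 0 then w i else v i

lemma col_v (v w : Fin n → F4) (i : Fin n) :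
    v i = scale v w i * fstK (key v w i) := by
  by_cases hv : v i = 0
  · by_cases hw : w i = 0 <;> simp [key, scale, fstK, hv, hw]
  · simp [key, scale, fstK, hv]

lemma col_w (v w : Fin n → F4) (i : Fin n) :
    w i = scale v w i * sndK (key v w i) := by
  by_cases hv : v i = 0
  · by_cases hw : w i = 0 <;> simp [key, scale, sndK, hv, hw]
  · simp [key, scale, sndK, hv]
    field_simp

lemma scale_ne (v w : Fin n → F4) (i : Fin n) (h : key v w i ≠ none) :
    scale v w i ≠ 0 := by
  by_cases hv : v i = 0
  · by_cases hw : w i = 0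
    · exact absurd (by simp [key, hv, hw]) h
    · simpa [scale, hv] using hw
  · simpa [scale, hv] using hv

/-- the key annihilated by the functional (a, b) -/
noncomputable def perp (a b : F4) : KK :=
  if b = 0 then some none else some (some (a * b⁻¹))

lemma perp_ne_none (a b : F4) : perp a b ≠ none := by
  unfold perp; split <;> simp

lemma zero_iff (v w : Fin n → F4) (a b : F4) (hab : ¬(a = 0 ∧ b = 0)) (i : Fin n) :
    a * v i + b * w i = 0 ↔ (key v w i = none ∨ key v w i = perp a b) := by
  by_cases hv : v i = 0
  · by_cases hw : w i = 0
    · simp [key, hv, hw]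
    · simp only [key, if_pos hv, if_neg hw]
      rw [hv]
      simp only [mul_zero, zero_add, mul_eq_zero]
      by_cases hb : b = 0
      · simp [perp, hb]
      · simp [perp, hb, hw]
  · simp only [key, if_neg hv]
    by_cases hb : b = 0
    · have ha : a ≠ 0 := fun h => hab ⟨h, hb⟩
      rw [hb]
      simp only [zero_mul, add_zero, mul_eq_zero]
      simp [perp, hb, hv, ha]
    · simp only [perp, if_neg hb, Option.some.injEq]
      constructor
      · intro h
        right
        field_simp
        linear_combination h - (a * v i) * F4.two_eq_zero
      · intro h
        rcases h with h | h
        · exact absurd h (by simp)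
        · have hbw : b * w i = a * v i := by
            field_simp at h
            linear_combination h
          linear_combination hbw + (a * v i) * F4.two_eq_zero

end Aux

namespace Aux
variable {n : ℕ}

lemma wt_combo (v w : Fin n → F4) (a b : F4) (hab : ¬(a = 0 ∧ b = 0)) :
    wt (a • v + b • w) = n - (cnt v w none + cnt v w (perp a b)) := by
  classical
  have hx : ∀ i, (a • v + b • w) i = a * v i + b * w i := by
    intro i; simp [Pi.add_apply, Pi.smul_apply, smul_eq_mul]
  have h1 : (Finset.univ.filter fun i => (a • v + b • w) i = 0)
      = (Finset.univ.filter fun i => key v w i = none)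
        ∪ (Finset.univ.filter fun i => key v w i = perp a b) := by
    rw [← Finset.filter_or]
    apply Finset.filter_congr
    intro i _
    rw [hx i]
    exact zero_iff v w a b hab i
  have hdisj : Disjoint (Finset.univ.filter fun i => key v w i = none)
      (Finset.univ.filter fun i => key v w i = perp a b) := by
    rw [Finset.disjoint_left]
    intro i hi1 hi2
    simp only [Finset.mem_filter] at hi1 hi2
    exact perp_ne_none a b (hi1.2 ▸ hi2.2.symm ▸ rfl)
  have hcard : (Finset.univ.filter fun i => (a • v + b • w) i = 0).card
      = cnt v w none + cnt v w (perp a b) := by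
    rw [h1, Finset.card_union_of_disjoint hdisj]; rfl
  have hsplit := Finset.card_filter_add_card_filter_not
    (s := Finset.univ) (p := fun i => (a • v + b • w) i = 0)
  rw [Finset.card_univ, Fintype.card_fin] at hsplit
  have hwt : wt (a • v + b • w)
      = (Finset.univ.filter fun i => ¬ ((a • v + b • w) i = 0)).card := by
    unfold wt
    apply Finset.card_bij (fun x _ => x) <;> simp
  omega

lemma sum_F4 {M : Type*} [AddCommMonoid M] (f : F4 → M) :
    ∑ r : F4, f r = f 0 + f 1 + f ω4 + f (ω4 ^ 2) := by
  classical
  rw [show (Finset.univ : Finset F4) = {0, 1, ω4, ω4 ^ 2} from F4.univ_eq]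
  rw [Finset.sum_insert (by simp [Ne.symm ω4_ne_zero, Ne.symm ω4_sq_ne_zero]),
      Finset.sum_insert (by simp [Ne.symm ω4_ne_one, Ne.symm ω4_sq_ne_one]),
      Finset.sum_insert (by simp [Ne.symm ω4_sq_ne_omega]), Finset.sum_singleton]
  simp [add_assoc]

lemma sum_KK {M : Type*} [AddCommMonoid M] (f : KK → M) :
    ∑ k : KK, f k = f none + f (some none) + f (some (some 0)) + f (some (some 1))
      + f (some (some ω4)) + f (some (some (ω4 ^ 2))) := by
  rw [Fintype.sum_option, Fintype.sum_option, sum_F4]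
  simp [add_assoc]

lemma sum_cnt (v w : Fin n → F4) :
    cnt v w none + cnt v w (some none) + cnt v w (some (some 0)) + cnt v w (some (some 1))
      + cnt v w (some (some ω4)) + cnt v w (some (some (ω4 ^ 2))) = n := by
  classical
  have h := Finset.card_eq_sum_card_fiberwise
    (f := key v w) (s := Finset.univ) (t := Finset.univ) (fun i _ => Finset.mem_univ _)
  rw [Finset.card_univ, Fintype.card_fin, sum_KK] at h
  exact h.symm

lemma sum_key (v w : Fin n → F4) (φ : KK → F4) :
    ∑ i, φ (key v w i) = ∑ k : KK, cnt v w k • φ k := by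
  classical
  rw [← Finset.sum_fiberwise Finset.univ (key v w) (fun i => φ (key v w i))]
  apply Finset.sum_congr rfl
  intro k _
  rw [Finset.sum_congr rfl (fun i hi => by rw [(Finset.mem_filter.mp hi).2]),
    Finset.sum_const]
  rfl

lemma mixed (s F G : F4) (hs : s ≠ 0) : (s * F) * (s * G) ^ 2 = F * G ^ 2 := by
  have h3 : s ^ 3 = 1 := F4.cube s hs
  linear_combination (F * G ^ 2) * h3

lemma herm_general (v w x y : Fin n → F4) (P Q : KK → F4) (hP : P none = 0)
    (hx : ∀ i, x i = scale v w i * P (key v w i))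
    (hy : ∀ i, y i = scale v w i * Q (key v w i)) :
    hermInner x y = ∑ k : KK, cnt v w k • (P k * Q k ^ 2) := by
  unfold hermInner
  have hterm : ∀ i, x i * (y i) ^ 2 = P (key v w i) * Q (key v w i) ^ 2 := by
    intro i
    by_cases h : key v w i = none
    · rw [hx i, hy i, h, hP]; ring
    · rw [hx i, hy i]; exact mixed _ _ _ (scale_ne v w i h)
  rw [Finset.sum_congr rfl (fun i _ => hterm i)]
  simpa using sum_key v w (fun k => P k * Q k ^ 2)

lemma g11_eq (v w : Fin n → F4) :
    hermInner v v = (cnt v w (some (some 0)) + cnt v w (some (some 1))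
      + cnt v w (some (some ω4)) + cnt v w (some (some (ω4 ^ 2)))) • (1 : F4) := by
  rw [herm_general v w v v fstK fstK rfl (col_v v w) (col_v v w), sum_KK]
  simp only [fstK]
  simp [add_smul]

lemma g22_eq (v w : Fin n → F4) :
    hermInner w w = (cnt v w (some none) + cnt v w (some (some 1))
      + cnt v w (some (some ω4)) + cnt v w (some (some (ω4 ^ 2)))) • (1 : F4) := by
  rw [herm_general v w w w sndK sndK rfl (col_w v w) (col_w v w), sum_KK]
  simp only [sndK]
  rw [show ω4 * ω4 ^ 2 = 1 from ω4_mul_sq,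
    show ω4 ^ 2 * (ω4 ^ 2) ^ 2 = 1 by linear_combination (ω4^3 + 1) * ω4_cube]
  simp [add_smul]

lemma g12_eq (v w : Fin n → F4) :
    hermInner v w = cnt v w (some (some 1)) • (1 : F4)
      + cnt v w (some (some ω4)) • ω4 ^ 2 + cnt v w (some (some (ω4 ^ 2))) • ω4 := by
  rw [herm_general v w v w fstK sndK rfl (col_v v w) (col_w v w), sum_KK]
  simp only [fstK, sndK]
  rw [show (ω4 ^ 2) ^ 2 = ω4 by linear_combination ω4 * ω4_cube]
  simp

lemma g21_eq (v w : Fin n → F4) :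
    hermInner w v = cnt v w (some (some 1)) • (1 : F4)
      + cnt v w (some (some ω4)) • ω4 + cnt v w (some (some (ω4 ^ 2))) • ω4 ^ 2 := by
  rw [herm_general v w w v sndK fstK rfl (col_w v w) (col_v v w), sum_KK]
  simp only [fstK, sndK]
  simp

lemma nsmul_mod (k : ℕ) (x : F4) : k • x = (k % 2) • x := by
  conv_lhs => rw [← Nat.div_add_mod k 2]
  rw [add_smul, mul_comm, mul_smul]
  rw [show (2:ℕ) • x = 0 by rw [two_smul]; exact F4.add_self x]
  simp

lemma even_nsmul {k : ℕ} (h : k % 2 = 0) (x : F4) : k • x = 0 := by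
  rw [nsmul_mod, h]; simp

lemma odd_nsmul {k : ℕ} (h : k % 2 = 1) (x : F4) : k • x = x := by
  rw [nsmul_mod, h]; simp

end Aux

namespace Aux
variable {n : ℕ}

lemma mem_hermDual {C : Submodule F4 (Fin n → F4)} {x : Fin n → F4} :
    x ∈ hermDual C ↔ ∀ y ∈ C, hermInner x y = 0 := Iff.rfl

lemma hermInner_exp (v w : Fin n → F4) (a b c d : F4) :
    hermInner (a • v + b • w) (c • v + d • w)
      = c ^ 2 * (a * hermInner v v + b * hermInner w v)
        + d ^ 2 * (a * hermInner v w + b * hermInner w w) := by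
  unfold hermInner
  simp only [Finset.mul_sum, ← Finset.sum_add_distrib]
  apply Finset.sum_congr rfl
  intro i _
  simp only [Pi.add_apply, Pi.smul_apply, smul_eq_mul]
  linear_combination (c * d * v i * w i * (a * v i + b * w i)) * F4.two_eq_zero

lemma mem_span_pair' {v w x : Fin n → F4} :
    x ∈ Submodule.span F4 {v, w} ↔ ∃ a b : F4, a • v + b • w = x :=
  Submodule.mem_span_pair

lemma v_mem_span {v w : Fin n → F4} : v ∈ Submodule.span F4 {v, w} :=
  Submodule.subset_span (Set.mem_insert _ _)

lemma w_mem_span {v w : Fin n → F4} : w ∈ Submodule.span F4 {v, w} :=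
  Submodule.subset_span (Set.mem_insert_of_mem _ rfl)

lemma lcd_of_det (v w : Fin n → F4)
    (hind : ∀ a b : F4, a • v + b • w = 0 → a = 0 ∧ b = 0)
    (hdet : hermInner v v * hermInner w w - hermInner v w * hermInner w v ≠ 0) :
    IsHermLCD (Submodule.span F4 {v, w}) := by
  rw [IsHermLCD, eq_bot_iff]
  intro x hx
  obtain ⟨hx1, hx2⟩ := Submodule.mem_inf.mp hx
  obtain ⟨a, b, rfl⟩ := mem_span_pair'.mp hx1
  have h1 : a * hermInner v v + b * hermInner w v = 0 := by
    have := mem_hermDual.mp hx2 v v_mem_span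
    have he := hermInner_exp v w a b 1 0
    simp only [one_smul, zero_smul, add_zero, zero_add] at he
    rw [this] at he
    linear_combination -he
  have h2 : a * hermInner v w + b * hermInner w w = 0 := by
    have := mem_hermDual.mp hx2 w w_mem_span
    have he := hermInner_exp v w a b 0 1
    simp only [one_smul, zero_smul, add_zero, zero_add] at he
    rw [this] at he
    linear_combination -he
  have ha : a = 0 := by
    by_contra ha
    apply hdet
    have : a * (hermInner v v * hermInner w w - hermInner v w * hermInner w v)
        = (hermInner w w) * (a * hermInner v v + b * hermInner w v)
          - (hermInner w v) * (a * hermInner v w + b * hermInner w w) := by ring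
    rw [h1, h2] at this
    simp only [mul_zero, sub_zero] at this
    exact (mul_eq_zero.mp this).resolve_left ha
  have hb : b = 0 := by
    by_contra hb
    apply hdet
    have : b * (hermInner v v * hermInner w w - hermInner v w * hermInner w v)
        = (hermInner v v) * (a * hermInner v w + b * hermInner w w)
          - (hermInner v w) * (a * hermInner v v + b * hermInner w v) := by ring
    rw [h1, h2] at this
    simp only [mul_zero, sub_zero] at this
    exact (mul_eq_zero.mp this).resolve_left hb
  rw [ha, hb]
  simp

lemma det_of_lcd (v w : Fin n → F4)
    (hind : ∀ a b : F4, a • v + b • w = 0 → a = 0 ∧ b = 0)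
    (h : IsHermLCD (Submodule.span F4 {v, w})) :
    hermInner v v * hermInner w w - hermInner v w * hermInner w v ≠ 0 := by
  intro hdet
  -- find (a, b) ≠ (0,0) in the left kernel of the Gram matrix
  obtain ⟨a, b, hab, hk1, hk2⟩ : ∃ a b : F4, ¬(a = 0 ∧ b = 0)
      ∧ a * hermInner v v + b * hermInner w v = 0
      ∧ a * hermInner v w + b * hermInner w w = 0 := by
    by_cases h1 : hermInner w v = 0 ∧ hermInner v v = 0
    · by_cases h2 : hermInner w w = 0 ∧ hermInner v w = 0
      · exact ⟨1, 0, by simp, by rw [h1.1, h1.2]; ring, by rw [h2.1, h2.2]; ring⟩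
      · refine ⟨hermInner w w, hermInner v w, fun hc => h2 ⟨hc.1, hc.2⟩, ?_, ?_⟩
        · rw [h1.1, h1.2]; ring
        · linear_combination (hermInner v w * hermInner w w) * F4.two_eq_zero
    · refine ⟨hermInner w v, hermInner v v, fun hc => h1 ⟨hc.1, hc.2⟩, ?_, ?_⟩
      · linear_combination (hermInner v v * hermInner w v) * F4.two_eq_zero
      · linear_combination hdet + (hermInner v w * hermInner w v) * F4.two_eq_zero
  set z := a • v + b • w with hz
  have hz0 : z ≠ 0 := by
    intro hc
    obtain ⟨ha, hb⟩ := hind a b hc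
    exact hab ⟨ha, hb⟩
  have hzC : z ∈ Submodule.span F4 {v, w} := mem_span_pair'.mpr ⟨a, b, rfl⟩
  have hzD : z ∈ hermDual (Submodule.span F4 {v, w}) := by
    rw [mem_hermDual]
    intro y hy
    obtain ⟨c, d, rfl⟩ := mem_span_pair'.mp hy
    rw [hz, hermInner_exp, hk1, hk2]
    ring
  have : z ∈ (⊥ : Submodule F4 (Fin n → F4)) := by
    rw [← h]
    exact Submodule.mem_inf.mpr ⟨hzC, hzD⟩
  exact hz0 (Submodule.mem_bot F4 |>.mp this)

lemma range_fin_two {α : Type*} (f : Fin 2 → α) : Set.range f = {f 0, f 1} := by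
  ext x
  constructor
  · rintro ⟨i, rfl⟩
    fin_cases i <;> simp
  · rintro (rfl | rfl)
    exacts [⟨0, rfl⟩, ⟨1, rfl⟩]

lemma indep_pair_iff (v w : Fin n → F4) :
    LinearIndependent F4 ![v, w] ↔ (∀ a b : F4, a • v + b • w = 0 → a = 0 ∧ b = 0) := by
  rw [LinearIndependent.pair_iff]

lemma finrank_span_pair {v w : Fin n → F4}
    (hind : ∀ a b : F4, a • v + b • w = 0 → a = 0 ∧ b = 0) :
    Module.finrank F4 (Submodule.span F4 {v, w}) = 2 := by
  have h := finrank_span_eq_card ((indep_pair_iff v w).mpr hind)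
  rw [range_fin_two] at h
  simp at h
  exact h

lemma exists_basis_of_finrank_two (C : Submodule F4 (Fin n → F4))
    (h : Module.finrank F4 C = 2) :
    ∃ v w : Fin n → F4, (∀ a b : F4, a • v + b • w = 0 → a = 0 ∧ b = 0)
      ∧ C = Submodule.span F4 {v, w} := by
  let b := (Module.finBasis F4 C).reindex (finCongr h)
  refine ⟨C.subtype (b 0), C.subtype (b 1), ?_, ?_⟩
  · have hli : LinearIndependent F4 (C.subtype ∘ b) :=
      (b.linearIndependent).map' C.subtype (Submodule.ker_subtype C)
    intro a c hac
    have := Fintype.linearIndependent_iff.mp hli ![a, c]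
      (by simpa [Fin.sum_univ_two] using hac)
    exact ⟨this 0, this 1⟩
  · have hsp : Submodule.span F4 (Set.range b) = ⊤ := b.span_eq
    have : C = Submodule.map C.subtype ⊤ := (Submodule.map_subtype_top C).symm
    conv_lhs => rw [this, ← hsp]
    rw [Submodule.map_span]
    congr 1
    rw [← Set.range_comp, range_fin_two]
    rfl

lemma monoMap_apply (σ : Equiv.Perm (Fin n)) (s : Fin n → F4) (x : Fin n → F4) :
    monoMap σ s x = fun i => s i * x (σ i) := rfl

lemma codeEquiv_trans {C C' C'' : Submodule F4 (Fin n → F4)} :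
    codeEquiv C C' → codeEquiv C' C'' → codeEquiv C C'' := by
  rintro ⟨σ1, s1, hs1, h1⟩ ⟨σ2, s2, hs2, h2⟩
  refine ⟨σ2.trans σ1, fun i => s2 i * s1 (σ2 i), fun i => mul_ne_zero (hs2 i) (hs1 (σ2 i)), ?_⟩
  have hcomp : monoMap (σ2.trans σ1) (fun i => s2 i * s1 (σ2 i))
      = (monoMap σ2 s2).comp (monoMap σ1 s1) := by
    apply LinearMap.ext
    intro x
    funext i
    simp [monoMap_apply, LinearMap.comp_apply, mul_assoc]
  rw [hcomp, Submodule.map_comp, h1, h2]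

lemma equiv_of_cnt (v w v' w' : Fin n → F4)
    (h : ∀ k, cnt v w k = cnt v' w' k) :
    codeEquiv (Submodule.span F4 {v, w}) (Submodule.span F4 {v', w'}) := by
  classical
  have hcard : ∀ k : KK, Fintype.card {i // key v' w' i = k}
      = Fintype.card {i // key v w i = k} := by
    intro k
    rw [Fintype.card_subtype, Fintype.card_subtype]
    exact (h k).symm
  let e : ∀ k : KK, {i // key v' w' i = k} ≃ {i // key v w i = k} :=
    fun k => Fintype.equivOfCardEq (hcard k)
  let σ : Equiv.Perm (Fin n) :=
    (Equiv.sigmaFiberEquiv (key v' w')).symm.trans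
      ((Equiv.sigmaCongrRight e).trans (Equiv.sigmaFiberEquiv (key v w)))
  have hσ : ∀ i, key v w (σ i) = key v' w' i := by
    intro i
    exact (e (key v' w' i) ⟨i, rfl⟩).property
  let s : Fin n → F4 := fun i =>
    if key v' w' i = none then 1 else scale v' w' i * (scale v w (σ i))⁻¹
  have hs : ∀ i, s i ≠ 0 := by
    intro i
    by_cases h0 : key v' w' i = none
    · simp [s, h0]
    · have h1 : key v w (σ i) ≠ none := by rw [hσ i]; exact h0
      simp only [s, if_neg h0]
      exact mul_ne_zero (scale_ne v' w' i h0) (inv_ne_zero (scale_ne v w (σ i) h1))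
  have key_map : ∀ (x x' : Fin n → F4) (P : KK → F4), P none = 0
      → (∀ i, x i = scale v w i * P (key v w i))
      → (∀ i, x' i = scale v' w' i * P (key v' w' i))
      → (fun i => s i * x (σ i)) = x' := by
    intro x x' P hP hx hx'
    funext i
    by_cases h0 : key v' w' i = none
    · have h1 : key v w (σ i) = none := by rw [hσ i]; exact h0
      rw [hx (σ i), hx' i, h0, h1, hP]
      simp
    · have h1 : key v w (σ i) ≠ none := by rw [hσ i]; exact h0
      have hsc : scale v w (σ i) ≠ 0 := scale_ne v w (σ i) h1
      simp only [s, if_neg h0]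
      rw [hx (σ i), hx' i, hσ i]
      field_simp
  refine ⟨σ, s, hs, ?_⟩
  rw [Submodule.map_span, Set.image_insert_eq, Set.image_singleton]
  have hv : monoMap σ s v = v' := key_map v v' fstK rfl (col_v v w) (col_v v' w')
  have hw : monoMap σ s w = w' := key_map w w' sndK rfl (col_w v w) (col_w v' w')
  rw [hv, hw]

end Aux

namespace Aux
variable {n : ℕ}

/-- first standard generator -/
noncomputable def sv (n c1 c2 : ℕ) : Fin n → F4 := fun i =>
  if i.val < c1 then 1 else if i.val < c1 + c2 then 0 else 1

/-- second standard generator -/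
noncomputable def sw (n c1 c2 c3 c4 : ℕ) : Fin n → F4 := fun i =>
  if i.val < c1 then 0 else if i.val < c1 + c2 then 1 else if i.val < c1 + c2 + c3 then 1
  else if i.val < c1 + c2 + c3 + c4 then ω4 else ω4 ^ 2

lemma card_interval (a b : ℕ) (hb : b ≤ n) :
    (Finset.univ.filter fun i : Fin n => a ≤ i.val ∧ i.val < b).card = b - a := by
  classical
  rw [← Nat.card_Ico a b]
  apply Finset.card_bij (fun (i : Fin n) _ => i.val)
  · intro i hi
    simp only [Finset.mem_filter] at hi
    simp only [Finset.mem_Ico]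
    exact hi.2
  · intro i _ j _ hij
    exact Fin.val_injective hij
  · intro j hj
    simp only [Finset.mem_Ico] at hj
    refine ⟨⟨j, lt_of_lt_of_le hj.2 hb⟩, ?_, rfl⟩
    simp only [Finset.mem_filter]
    exact ⟨Finset.mem_univ _, hj.1, hj.2⟩

lemma cnt_formula (v w : Fin n → F4) (c1 c2 c3 c4 c5 : ℕ) (hn : c1+c2+c3+c4+c5 = n)
    (k1 k2 k3 k4 k5 : KK)
    (hkey : ∀ i : Fin n, key v w i =
      if i.val < c1 then k1 else if i.val < c1+c2 then k2 else if i.val < c1+c2+c3 then k3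
      else if i.val < c1+c2+c3+c4 then k4 else k5) (k : KK) :
    cnt v w k = (if k1 = k then c1 else 0) + (if k2 = k then c2 else 0)
      + (if k3 = k then c3 else 0) + (if k4 = k then c4 else 0)
      + (if k5 = k then c5 else 0) := by
  classical
  unfold cnt
  rw [Finset.card_filter]
  set g : ℕ → ℕ := fun j => if j < c1 then (if k1 = k then 1 else 0)
          else if j < c1+c2 then (if k2 = k then 1 else 0)
          else if j < c1+c2+c3 then (if k3 = k then 1 else 0)
          else if j < c1+c2+c3+c4 then (if k4 = k then 1 else 0)
          else (if k5 = k then 1 else 0) with hg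
  have hterm : ∀ i : Fin n, (if key v w i = k then 1 else 0) = g i.val := by
    intro i
    rw [hkey i]
    simp only [hg]
    by_cases h1 : i.val < c1
    · simp only [if_pos h1]
    · by_cases h2 : i.val < c1+c2
      · simp only [if_neg h1, if_pos h2]
      · by_cases h3 : i.val < c1+c2+c3
        · simp only [if_neg h1, if_neg h2, if_pos h3]
        · by_cases h4 : i.val < c1+c2+c3+c4
          · simp only [if_neg h1, if_neg h2, if_neg h3, if_pos h4]
          · simp only [if_neg h1, if_neg h2, if_neg h3, if_neg h4]
  rw [Finset.sum_congr rfl (fun i _ => hterm i)]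
  rw [Fin.sum_univ_eq_sum_range g n]
  rw [Finset.range_eq_Ico]
  rw [← Finset.sum_Ico_consecutive g (Nat.zero_le c1) (by omega : c1 ≤ n)]
  rw [← Finset.sum_Ico_consecutive (f := fun i => g i) (by omega : (c1:ℕ) ≤ c1+c2) (by omega : c1+c2 ≤ n)]
  rw [← Finset.sum_Ico_consecutive (f := fun i => g i) (by omega : (c1:ℕ)+c2 ≤ c1+c2+c3) (by omega : c1+c2+c3 ≤ n)]
  rw [← Finset.sum_Ico_consecutive (f := fun i => g i) (by omega : (c1:ℕ)+c2+c3 ≤ c1+c2+c3+c4) (by omega : c1+c2+c3+c4 ≤ n)]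
  have e1 : ∑ j ∈ Finset.Ico 0 c1, g j = (if k1 = k then c1 else 0) := by
    rw [Finset.sum_congr rfl (fun j hj => by
      simp only [Finset.mem_Ico] at hj
      show g j = if k1 = k then 1 else 0
      simp only [hg]
      rw [if_pos hj.2])]
    rw [Finset.sum_const, Nat.card_Ico]
    split_ifs <;> simp only [smul_eq_mul, mul_one, mul_zero] <;> omega
  have e2 : ∑ j ∈ Finset.Ico c1 (c1+c2), g j = (if k2 = k then c2 else 0) := by
    rw [Finset.sum_congr rfl (fun j hj => by
      simp only [Finset.mem_Ico] at hj
      show g j = if k2 = k then 1 else 0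
      simp only [hg]
      rw [if_neg (by omega), if_pos hj.2])]
    rw [Finset.sum_const, Nat.card_Ico]
    split_ifs <;> simp only [smul_eq_mul, mul_one, mul_zero] <;> omega
  have e3 : ∑ j ∈ Finset.Ico (c1+c2) (c1+c2+c3), g j = (if k3 = k then c3 else 0) := by
    rw [Finset.sum_congr rfl (fun j hj => by
      simp only [Finset.mem_Ico] at hj
      show g j = if k3 = k then 1 else 0
      simp only [hg]
      rw [if_neg (by omega), if_neg (by omega), if_pos hj.2])]
    rw [Finset.sum_const, Nat.card_Ico]
    split_ifs <;> simp only [smul_eq_mul, mul_one, mul_zero] <;> omega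
  have e4 : ∑ j ∈ Finset.Ico (c1+c2+c3) (c1+c2+c3+c4), g j = (if k4 = k then c4 else 0) := by
    rw [Finset.sum_congr rfl (fun j hj => by
      simp only [Finset.mem_Ico] at hj
      show g j = if k4 = k then 1 else 0
      simp only [hg]
      rw [if_neg (by omega), if_neg (by omega), if_neg (by omega), if_pos hj.2])]
    rw [Finset.sum_const, Nat.card_Ico]
    split_ifs <;> simp only [smul_eq_mul, mul_one, mul_zero] <;> omega
  have e5 : ∑ j ∈ Finset.Ico (c1+c2+c3+c4) n, g j = (if k5 = k then c5 else 0) := by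
    rw [Finset.sum_congr rfl (fun j hj => by
      simp only [Finset.mem_Ico] at hj
      show g j = if k5 = k then 1 else 0
      simp only [hg]
      rw [if_neg (by omega), if_neg (by omega), if_neg (by omega), if_neg (by omega)])]
    rw [Finset.sum_const, Nat.card_Ico]
    split_ifs <;> simp only [smul_eq_mul, mul_one, mul_zero] <;> omega
  rw [e1, e2, e3, e4, e5]
  ring

lemma key_std (c1 c2 c3 c4 c5 : ℕ) (i : Fin n) :
    key (sv n c1 c2) (sw n c1 c2 c3 c4) i =
      if i.val < c1 then some (some 0) else if i.val < c1+c2 then some none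
      else if i.val < c1+c2+c3 then some (some 1)
      else if i.val < c1+c2+c3+c4 then some (some ω4) else some (some (ω4^2)) := by
  unfold key sv sw
  by_cases h1 : i.val < c1
  · simp [h1]
  · by_cases h2 : i.val < c1+c2
    · simp [h1, h2]
    · by_cases h3 : i.val < c1+c2+c3
      · simp [h1, h2, h3]
      · by_cases h4 : i.val < c1+c2+c3+c4
        · simp [h1, h2, h3, h4]
        · simp [h1, h2, h3, h4]

lemma cnt_std (c1 c2 c3 c4 c5 : ℕ) (hn : c1+c2+c3+c4+c5 = n) (k : KK) :
    cnt (sv n c1 c2) (sw n c1 c2 c3 c4) k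
      = (if some (some (0:F4)) = k then c1 else 0) + (if some (none : Option F4) = k then c2 else 0)
      + (if some (some (1:F4)) = k then c3 else 0) + (if some (some ω4) = k then c4 else 0)
      + (if some (some (ω4^2)) = k then c5 else 0) :=
  cnt_formula _ _ c1 c2 c3 c4 c5 hn _ _ _ _ _ (key_std c1 c2 c3 c4 c5) k

lemma std_indep (c1 c2 c3 c4 c5 : ℕ) (hn : c1+c2+c3+c4+c5 = n)
    (h1 : 1 ≤ c1) (h2 : 1 ≤ c2) :
    ∀ a b : F4, a • sv n c1 c2 + b • sw n c1 c2 c3 c4 = 0 → a = 0 ∧ b = 0 := by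
  intro a b hab
  have hn1 : 0 < n := by omega
  have hn2 : c1 < n := by omega
  have ha : a = 0 := by
    have := congrFun hab ⟨0, hn1⟩
    simpa [sv, sw, h1, Nat.lt_of_lt_of_le (Nat.zero_lt_one) h1] using this
  have hb : b = 0 := by
    have := congrFun hab ⟨c1, hn2⟩
    simp only [sv, sw, Pi.add_apply, Pi.smul_apply, smul_eq_mul, Pi.zero_apply] at this
    rw [if_neg (by omega), if_pos (by omega), if_neg (by omega), if_pos (by omega)] at this
    simpa [ha] using this
  exact ⟨ha, hb⟩

end Aux

namespace Aux
variable {n : ℕ}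

lemma one_add_omega : (1 : F4) + ω4 = ω4 ^ 2 := by
  rw [ω4_sq, add_comm]

lemma one_add_omega_sq : (1 : F4) + ω4 ^ 2 = ω4 := by
  rw [ω4_sq]
  linear_combination F4.two_eq_zero

lemma omega_mul_omega : ω4 * ω4 = ω4 ^ 2 := by ring

lemma span_pair_smul (v w : Fin n → F4) (c : F4) (hc : c ≠ 0) :
    Submodule.span F4 {v, c • w} = Submodule.span F4 {v, w} := by
  apply le_antisymm
  · rw [Submodule.span_le]
    intro x hx
    simp only [Set.mem_insert_iff, Set.mem_singleton_iff] at hx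
    rcases hx with rfl | rfl
    · exact v_mem_span
    · exact Submodule.smul_mem _ c w_mem_span
  · rw [Submodule.span_le]
    intro x hx
    simp only [Set.mem_insert_iff, Set.mem_singleton_iff] at hx
    rcases hx with rfl | rfl
    · exact v_mem_span
    · have h := Submodule.smul_mem (Submodule.span F4 {v, c • x}) c⁻¹ w_mem_span
      rwa [smul_smul, inv_mul_cancel₀ hc, one_smul] at h

lemma span_pair_add (v w : Fin n → F4) :
    Submodule.span F4 {v, v + w} = Submodule.span F4 {v, w} := by
  apply le_antisymm
  · rw [Submodule.span_le]
    intro x hx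
    simp only [Set.mem_insert_iff, Set.mem_singleton_iff] at hx
    rcases hx with rfl | rfl
    · exact v_mem_span
    · exact Submodule.add_mem _ v_mem_span w_mem_span
  · rw [Submodule.span_le]
    intro x hx
    simp only [Set.mem_insert_iff, Set.mem_singleton_iff] at hx
    rcases hx with rfl | rfl
    · exact v_mem_span
    · have h := Submodule.sub_mem (Submodule.span F4 {v, v + x}) w_mem_span v_mem_span
      rwa [add_sub_cancel_left] at h

lemma key_swap_std (c1 c2 c3 c4 : ℕ) (i : Fin n) :
    key (sw n c1 c2 c3 c4) (sv n c1 c2) i =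
      if i.val < c1 then some none else if i.val < c1+c2 then some (some 0)
      else if i.val < c1+c2+c3 then some (some 1)
      else if i.val < c1+c2+c3+c4 then some (some (ω4^2)) else some (some ω4) := by
  unfold key sv sw
  by_cases h1 : i.val < c1
  · simp [h1]
  · by_cases h2 : i.val < c1+c2
    · simp [h1, h2]
    · by_cases h3 : i.val < c1+c2+c3
      · simp [h1, h2, h3]
      · by_cases h4 : i.val < c1+c2+c3+c4
        · simp [h1, h2, h3, h4, ω4_ne_zero, ω4_inv]
        · simp [h1, h2, h3, h4, ω4_sq_ne_zero, ω4_sq_inv, ω4_ne_zero]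

lemma key_smul_std (c1 c2 c3 c4 : ℕ) (i : Fin n) :
    key (sv n c1 c2) (ω4 • sw n c1 c2 c3 c4) i =
      if i.val < c1 then some (some 0) else if i.val < c1+c2 then some none
      else if i.val < c1+c2+c3 then some (some ω4)
      else if i.val < c1+c2+c3+c4 then some (some (ω4^2)) else some (some 1) := by
  unfold key sv sw
  simp only [Pi.smul_apply, smul_eq_mul]
  by_cases h1 : i.val < c1
  · simp [h1]
  · by_cases h2 : i.val < c1+c2
    · simp [h1, h2, ω4_ne_zero]
    · by_cases h3 : i.val < c1+c2+c3
      · simp [h1, h2, h3]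
      · by_cases h4 : i.val < c1+c2+c3+c4
        · simp [h1, h2, h3, h4, omega_mul_omega]
        · simp [h1, h2, h3, h4, ω4_mul_sq]

lemma key_add_std (c1 c2 c3 c4 : ℕ) (i : Fin n) :
    key (sv n c1 c2) (sv n c1 c2 + sw n c1 c2 c3 c4) i =
      if i.val < c1 then some (some 1) else if i.val < c1+c2 then some none
      else if i.val < c1+c2+c3 then some (some 0)
      else if i.val < c1+c2+c3+c4 then some (some (ω4^2)) else some (some ω4) := by
  unfold key sv sw
  simp only [Pi.add_apply]
  by_cases h1 : i.val < c1
  · simp [h1]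
  · by_cases h2 : i.val < c1+c2
    · simp [h1, h2]
    · by_cases h3 : i.val < c1+c2+c3
      · simp [h1, h2, h3, F4.add_self]
      · by_cases h4 : i.val < c1+c2+c3+c4
        · simp [h1, h2, h3, h4, one_add_omega]
        · simp [h1, h2, h3, h4, one_add_omega_sq]

lemma move_swap (c1 c2 c3 c4 c5 : ℕ) (hn : c1+c2+c3+c4+c5 = n) :
    codeEquiv (Submodule.span F4 {sv n c1 c2, sw n c1 c2 c3 c4})
      (Submodule.span F4 {sv n c2 c1, sw n c2 c1 c3 c5}) := by
  have h := equiv_of_cnt (sw n c1 c2 c3 c4) (sv n c1 c2) (sv n c2 c1) (sw n c2 c1 c3 c5)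
    (fun k => by
      rw [cnt_formula _ _ c1 c2 c3 c4 c5 hn _ _ _ _ _ (key_swap_std c1 c2 c3 c4) k,
        cnt_std c2 c1 c3 c5 c4 (by omega) k]
      ring)
  rw [show ({sw n c1 c2 c3 c4, sv n c1 c2} : Set (Fin n → F4))
    = {sv n c1 c2, sw n c1 c2 c3 c4} from Set.pair_comm _ _] at h
  exact h

lemma move_smul (c1 c2 c3 c4 c5 : ℕ) (hn : c1+c2+c3+c4+c5 = n) :
    codeEquiv (Submodule.span F4 {sv n c1 c2, sw n c1 c2 c3 c4})
      (Submodule.span F4 {sv n c1 c2, sw n c1 c2 c5 c3}) := by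
  have h := equiv_of_cnt (sv n c1 c2) (ω4 • sw n c1 c2 c3 c4) (sv n c1 c2) (sw n c1 c2 c5 c3)
    (fun k => by
      rw [cnt_formula _ _ c1 c2 c3 c4 c5 hn _ _ _ _ _ (key_smul_std c1 c2 c3 c4) k,
        cnt_std c1 c2 c5 c3 c4 (by omega) k]
      ring)
  rwa [span_pair_smul _ _ ω4 ω4_ne_zero] at h

lemma move_add (c1 c2 c3 c4 c5 : ℕ) (hn : c1+c2+c3+c4+c5 = n) :
    codeEquiv (Submodule.span F4 {sv n c1 c2, sw n c1 c2 c3 c4})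
      (Submodule.span F4 {sv n c3 c2, sw n c3 c2 c1 c5}) := by
  have h := equiv_of_cnt (sv n c1 c2) (sv n c1 c2 + sw n c1 c2 c3 c4) (sv n c3 c2) (sw n c3 c2 c1 c5)
    (fun k => by
      rw [cnt_formula _ _ c1 c2 c3 c4 c5 hn _ _ _ _ _ (key_add_std c1 c2 c3 c4) k,
        cnt_std c3 c2 c1 c5 c4 (by omega) k]
      ring)
  rwa [span_pair_add] at h

end Aux

namespace Aux
variable {n : ℕ}

lemma g11_d (v w : Fin n → F4) (m d1 d3 d4 d5 : ℕ)
    (h1 : cnt v w (some (some 0)) = m+1-d1) (h3 : cnt v w (some (some 1)) = m+1-d3)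
    (h4 : cnt v w (some (some ω4)) = m+1-d4) (h5 : cnt v w (some (some (ω4^2))) = m+1-d5)
    (hd1 : d1 ≤ m+1) (hd3 : d3 ≤ m+1) (hd4 : d4 ≤ m+1) (hd5 : d5 ≤ m+1) :
    hermInner v v = (d1:F4) + (d3:F4) + (d4:F4) + (d5:F4) := by
  rw [g11_eq v w, h1, h3, h4, h5, nsmul_eq_mul, mul_one]
  rw [Nat.cast_add, Nat.cast_add, Nat.cast_add, Nat.cast_sub hd1, Nat.cast_sub hd3,
    Nat.cast_sub hd4, Nat.cast_sub hd5, Nat.cast_add, Nat.cast_one]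
  linear_combination (2*((m:F4)+1) - (d1:F4) - (d3:F4) - (d4:F4) - (d5:F4)) * F4.two_eq_zero

lemma g22_d (v w : Fin n → F4) (m d2 d3 d4 d5 : ℕ)
    (h2 : cnt v w (some none) = m+1-d2) (h3 : cnt v w (some (some 1)) = m+1-d3)
    (h4 : cnt v w (some (some ω4)) = m+1-d4) (h5 : cnt v w (some (some (ω4^2))) = m+1-d5)
    (hd2 : d2 ≤ m+1) (hd3 : d3 ≤ m+1) (hd4 : d4 ≤ m+1) (hd5 : d5 ≤ m+1) :
    hermInner w w = (d2:F4) + (d3:F4) + (d4:F4) + (d5:F4) := by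
  rw [g22_eq v w, h2, h3, h4, h5, nsmul_eq_mul, mul_one]
  rw [Nat.cast_add, Nat.cast_add, Nat.cast_add, Nat.cast_sub hd2, Nat.cast_sub hd3,
    Nat.cast_sub hd4, Nat.cast_sub hd5, Nat.cast_add, Nat.cast_one]
  linear_combination (2*((m:F4)+1) - (d2:F4) - (d3:F4) - (d4:F4) - (d5:F4)) * F4.two_eq_zero

lemma g12_d (v w : Fin n → F4) (m d3 d4 d5 : ℕ)
    (h3 : cnt v w (some (some 1)) = m+1-d3) (h4 : cnt v w (some (some ω4)) = m+1-d4)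
    (h5 : cnt v w (some (some (ω4^2))) = m+1-d5)
    (hd3 : d3 ≤ m+1) (hd4 : d4 ≤ m+1) (hd5 : d5 ≤ m+1) :
    hermInner v w = (d3:F4) + (d4:F4) * ω4^2 + (d5:F4) * ω4 := by
  rw [g12_eq v w, h3, h4, h5, nsmul_eq_mul, mul_one, nsmul_eq_mul, nsmul_eq_mul]
  rw [Nat.cast_sub hd3, Nat.cast_sub hd4, Nat.cast_sub hd5, Nat.cast_add, Nat.cast_one]
  linear_combination ((m:F4)+1) * ω4_spec
    - ((d3:F4) + (d4:F4)*ω4^2 + (d5:F4)*ω4) * F4.two_eq_zero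

lemma g21_d (v w : Fin n → F4) (m d3 d4 d5 : ℕ)
    (h3 : cnt v w (some (some 1)) = m+1-d3) (h4 : cnt v w (some (some ω4)) = m+1-d4)
    (h5 : cnt v w (some (some (ω4^2))) = m+1-d5)
    (hd3 : d3 ≤ m+1) (hd4 : d4 ≤ m+1) (hd5 : d5 ≤ m+1) :
    hermInner w v = (d3:F4) + (d4:F4) * ω4 + (d5:F4) * ω4^2 := by
  rw [g21_eq v w, h3, h4, h5, nsmul_eq_mul, mul_one, nsmul_eq_mul, nsmul_eq_mul]
  rw [Nat.cast_sub hd3, Nat.cast_sub hd4, Nat.cast_sub hd5, Nat.cast_add, Nat.cast_one]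
  linear_combination ((m:F4)+1) * ω4_spec
    - ((d3:F4) + (d4:F4)*ω4 + (d5:F4)*ω4^2) * F4.two_eq_zero

lemma cnt_eq_all (v w : Fin n → F4) (a1 a2 a3 a4 a5 : ℕ)
    (hz : cnt v w none = 0)
    (h1 : cnt v w (some (some 0)) = a1) (h2 : cnt v w (some none) = a2)
    (h3 : cnt v w (some (some 1)) = a3) (h4 : cnt v w (some (some ω4)) = a4)
    (h5 : cnt v w (some (some (ω4^2))) = a5) (k : KK) :
    cnt v w k = (if some (some (0:F4)) = k then a1 else 0)
      + (if (some none : KK) = k then a2 else 0)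
      + (if some (some (1:F4)) = k then a3 else 0)
      + (if some (some ω4) = k then a4 else 0)
      + (if some (some (ω4^2)) = k then a5 else 0) := by
  rcases k with _ | k
  · simp [hz]
  rcases k with _ | r
  · simp [h2]
  rcases F4.cases r with h | h | h | h <;> subst h
  · simp [h1, ω4_ne_zero, ω4_sq_ne_zero]
  · simp [h3, ω4_ne_one, ω4_sq_ne_one, F4.neg_eq']
  · simp [h4, ω4_ne_zero.symm, ω4_ne_one.symm, ω4_sq_ne_omega]
  · simp [h5, ω4_sq_ne_zero.symm, ω4_sq_ne_one.symm, ω4_sq_ne_omega.symm]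

lemma perp_10 : perp (1:F4) 0 = some none := by simp [perp]
lemma perp_01 : perp (0:F4) 1 = some (some 0) := by simp [perp]
lemma perp_11 : perp (1:F4) 1 = some (some 1) := by simp [perp]
lemma perp_w1 : perp ω4 1 = some (some ω4) := by simp [perp]
lemma perp_w21 : perp (ω4^2) 1 = some (some (ω4^2)) := by simp [perp]

lemma perp_cases (a b : F4) :
    perp a b = some none ∨ perp a b = some (some 0) ∨ perp a b = some (some 1)
      ∨ perp a b = some (some ω4) ∨ perp a b = some (some (ω4^2)) := by
  unfold perp
  by_cases hb : b = 0
  · simp [hb]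
  · simp only [if_neg hb]
    rcases F4.cases (a * b⁻¹) with h | h | h | h <;> rw [h] <;> simp

lemma wt_zero : wt (0 : Fin n → F4) = 0 := by
  unfold wt
  simp

lemma wt_pos_ne_zero {x : Fin n → F4} (h : 0 < wt x) : x ≠ 0 := by
  intro hx
  rw [hx, wt_zero] at h
  omega

lemma wt_mono (σ : Equiv.Perm (Fin n)) (s : Fin n → F4) (hs : ∀ i, s i ≠ 0)
    (x : Fin n → F4) : wt (monoMap σ s x) = wt x := by
  classical
  unfold wt
  have h1 : ∀ i, (monoMap σ s x i ≠ 0) ↔ (x (σ i) ≠ 0) := by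
    intro i
    have hmm : monoMap σ s x i = s i * x (σ i) := rfl
    rw [hmm, mul_ne_zero_iff]
    simp [hs i]
  rw [Finset.filter_congr (fun i _ => by rw [h1 i])]
  apply Finset.card_bij (fun i _ => σ i)
  · intro i hi
    simp only [Finset.mem_filter] at hi ⊢
    exact ⟨Finset.mem_univ _, hi.2⟩
  · intro i _ j _ hij
    exact σ.injective hij
  · intro j hj
    simp only [Finset.mem_filter] at hj
    exact ⟨σ.symm j, by simp [Finset.mem_filter, hj.2], by simp⟩

lemma optimalDist_eq (m : ℕ) : optimalDist (5*m+1) = 4*m := by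
  unfold optimalDist
  rw [if_pos (Or.inl (by omega : (5*m+1) % 5 = 1))]
  omega

end Aux

namespace Aux

lemma cnt_std_vals {n : ℕ} (c1 c2 c3 c4 c5 : ℕ) (hn : c1+c2+c3+c4+c5 = n) :
    cnt (sv n c1 c2) (sw n c1 c2 c3 c4) none = 0
    ∧ cnt (sv n c1 c2) (sw n c1 c2 c3 c4) (some (some 0)) = c1
    ∧ cnt (sv n c1 c2) (sw n c1 c2 c3 c4) (some none) = c2
    ∧ cnt (sv n c1 c2) (sw n c1 c2 c3 c4) (some (some 1)) = c3
    ∧ cnt (sv n c1 c2) (sw n c1 c2 c3 c4) (some (some ω4)) = c4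
    ∧ cnt (sv n c1 c2) (sw n c1 c2 c3 c4) (some (some (ω4^2))) = c5 := by
  refine ⟨?_, ?_, ?_, ?_, ?_, ?_⟩ <;> rw [cnt_std c1 c2 c3 c4 c5 hn] <;>
    simp [ω4_ne_zero, ω4_sq_ne_zero, ω4_ne_one, ω4_sq_ne_one, ω4_sq_ne_omega,
      ω4_ne_zero.symm, ω4_sq_ne_zero.symm, ω4_ne_one.symm, ω4_sq_ne_one.symm,
      ω4_sq_ne_omega.symm, F4.neg_eq']

lemma std_minwt (m c1 c2 c3 c4 c5 : ℕ) (hm : 2 ≤ m)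
    (hsum : c1+c2+c3+c4+c5 = 5*m+1)
    (hub : c1 ≤ m+1 ∧ c2 ≤ m+1 ∧ c3 ≤ m+1 ∧ c4 ≤ m+1 ∧ c5 ≤ m+1)
    (hc2 : c2 = m+1) (h1 : 1 ≤ c1) :
    hasMinWeight (Submodule.span F4 {sv (5*m+1) c1 c2, sw (5*m+1) c1 c2 c3 c4}) (4*m) := by
  obtain ⟨hz, h01, h02, h03, h04, h05⟩ := cnt_std_vals c1 c2 c3 c4 c5 hsum
  constructor
  · intro x hx hx0
    obtain ⟨a, b, rfl⟩ := mem_span_pair'.mp hx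
    have hab : ¬(a = 0 ∧ b = 0) := by
      rintro ⟨rfl, rfl⟩
      simp at hx0
    rw [wt_combo _ _ a b hab, hz]
    have hle : cnt (sv (5*m+1) c1 c2) (sw (5*m+1) c1 c2 c3 c4) (perp a b) ≤ m+1 := by
      rcases perp_cases a b with h | h | h | h | h <;> rw [h]
      · rw [h02]; omega
      · rw [h01]; omega
      · rw [h03]; omega
      · rw [h04]; omega
      · rw [h05]; omega
    omega
  · refine ⟨sv (5*m+1) c1 c2, v_mem_span, ?_, ?_⟩
    · intro h
      have := std_indep c1 c2 c3 c4 c5 hsum h1 (by omega) 1 0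
        (by rw [h]; simp)
      exact one_ne_zero this.1
    · have h := wt_combo (sv (5*m+1) c1 c2) (sw (5*m+1) c1 c2 c3 c4) 1 0 (by simp)
      rw [perp_10, hz, h02] at h
      simp only [one_smul, zero_smul, add_zero] at h
      omega

/-- canonical code A: counts (m+1, m+1, m+1, m, m-2) -/
noncomputable def codeA (m : ℕ) : Submodule F4 (Fin (5*m+1) → F4) :=
  Submodule.span F4 {sv (5*m+1) (m+1) (m+1), sw (5*m+1) (m+1) (m+1) (m+1) m}

/-- canonical code B: counts (m+1, m+1, m, m, m-1) -/
noncomputable def codeB (m : ℕ) : Submodule F4 (Fin (5*m+1) → F4) :=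
  Submodule.span F4 {sv (5*m+1) (m+1) (m+1), sw (5*m+1) (m+1) (m+1) m m}

lemma sumA (m : ℕ) (hm : 2 ≤ m) : (m+1)+(m+1)+(m+1)+m+(m-2) = 5*m+1 := by omega
lemma sumB (m : ℕ) (hm : 2 ≤ m) : (m+1)+(m+1)+m+m+(m-1) = 5*m+1 := by omega

lemma detA (m : ℕ) (hm : 2 ≤ m) :
    hermInner (sv (5*m+1) (m+1) (m+1)) (sv (5*m+1) (m+1) (m+1))
      * hermInner (sw (5*m+1) (m+1) (m+1) (m+1) m) (sw (5*m+1) (m+1) (m+1) (m+1) m)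
    - hermInner (sv (5*m+1) (m+1) (m+1)) (sw (5*m+1) (m+1) (m+1) (m+1) m)
      * hermInner (sw (5*m+1) (m+1) (m+1) (m+1) m) (sv (5*m+1) (m+1) (m+1)) ≠ 0 := by
  obtain ⟨hz, h01, h02, h03, h04, h05⟩ := cnt_std_vals (m+1) (m+1) (m+1) m (m-2) (sumA m hm)
  have e11 := g11_d (sv (5*m+1) (m+1) (m+1)) (sw (5*m+1) (m+1) (m+1) (m+1) m) m 0 0 1 3
    (by rw [h01]; omega) (by rw [h03]; omega) (by rw [h04]; omega) (by rw [h05]; omega)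
    (by omega) (by omega) (by omega) (by omega)
  have e22 := g22_d (sv (5*m+1) (m+1) (m+1)) (sw (5*m+1) (m+1) (m+1) (m+1) m) m 0 0 1 3
    (by rw [h02]; omega) (by rw [h03]; omega) (by rw [h04]; omega) (by rw [h05]; omega)
    (by omega) (by omega) (by omega) (by omega)
  have e12 := g12_d (sv (5*m+1) (m+1) (m+1)) (sw (5*m+1) (m+1) (m+1) (m+1) m) m 0 1 3
    (by rw [h03]; omega) (by rw [h04]; omega) (by rw [h05]; omega)
    (by omega) (by omega) (by omega)
  have e21 := g21_d (sv (5*m+1) (m+1) (m+1)) (sw (5*m+1) (m+1) (m+1) (m+1) m) m 0 1 3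
    (by rw [h03]; omega) (by rw [h04]; omega) (by rw [h05]; omega)
    (by omega) (by omega) (by omega)
  rw [e11, e22, e12, e21]
  push_cast
  intro h
  apply one_ne_zero (α := F4)
  linear_combination h - ((-3)*ω4^2 + (-7)*ω4 + 7) * ω4_spec - 4 * F4.two_eq_zero

lemma detB (m : ℕ) (hm : 2 ≤ m) :
    hermInner (sv (5*m+1) (m+1) (m+1)) (sv (5*m+1) (m+1) (m+1))
      * hermInner (sw (5*m+1) (m+1) (m+1) m m) (sw (5*m+1) (m+1) (m+1) m m)
    - hermInner (sv (5*m+1) (m+1) (m+1)) (sw (5*m+1) (m+1) (m+1) m m)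
      * hermInner (sw (5*m+1) (m+1) (m+1) m m) (sv (5*m+1) (m+1) (m+1)) ≠ 0 := by
  obtain ⟨hz, h01, h02, h03, h04, h05⟩ := cnt_std_vals (m+1) (m+1) m m (m-1) (sumB m hm)
  have e11 := g11_d (sv (5*m+1) (m+1) (m+1)) (sw (5*m+1) (m+1) (m+1) m m) m 0 1 1 2
    (by rw [h01]; omega) (by rw [h03]; omega) (by rw [h04]; omega) (by rw [h05]; omega)
    (by omega) (by omega) (by omega) (by omega)
  have e22 := g22_d (sv (5*m+1) (m+1) (m+1)) (sw (5*m+1) (m+1) (m+1) m m) m 0 1 1 2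
    (by rw [h02]; omega) (by rw [h03]; omega) (by rw [h04]; omega) (by rw [h05]; omega)
    (by omega) (by omega) (by omega) (by omega)
  have e12 := g12_d (sv (5*m+1) (m+1) (m+1)) (sw (5*m+1) (m+1) (m+1) m m) m 1 1 2
    (by rw [h03]; omega) (by rw [h04]; omega) (by rw [h05]; omega)
    (by omega) (by omega) (by omega)
  have e21 := g21_d (sv (5*m+1) (m+1) (m+1)) (sw (5*m+1) (m+1) (m+1) m m) m 1 1 2
    (by rw [h03]; omega) (by rw [h04]; omega) (by rw [h05]; omega)
    (by omega) (by omega) (by omega)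
  rw [e11, e22, e12, e21]
  push_cast
  intro h
  apply one_ne_zero (α := F4)
  linear_combination h - ((-2)*ω4^2 + (-3)*ω4) * ω4_spec - 7 * F4.two_eq_zero

lemma optA (m : ℕ) (hm : 2 ≤ m) : IsOptimalLCD (5*m+1) (4*m) (codeA m) := by
  have hind := std_indep (n := 5*m+1) (m+1) (m+1) (m+1) m (m-2) (sumA m hm)
    (by omega) (by omega)
  refine ⟨finrank_span_pair hind, ?_, ?_, (optimalDist_eq m).symm⟩
  · exact std_minwt m (m+1) (m+1) (m+1) m (m-2) hm (sumA m hm)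
      ⟨by omega, by omega, by omega, by omega, by omega⟩ rfl (by omega)
  · exact lcd_of_det _ _ hind (detA m hm)

lemma optB (m : ℕ) (hm : 2 ≤ m) : IsOptimalLCD (5*m+1) (4*m) (codeB m) := by
  have hind := std_indep (n := 5*m+1) (m+1) (m+1) m m (m-1) (sumB m hm)
    (by omega) (by omega)
  refine ⟨finrank_span_pair hind, ?_, ?_, (optimalDist_eq m).symm⟩
  · exact std_minwt m (m+1) (m+1) m m (m-1) hm (sumB m hm)
      ⟨by omega, by omega, by omega, by omega, by omega⟩ rfl (by omega)
  · exact lcd_of_det _ _ hind (detB m hm)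

set_option maxHeartbeats 1000000 in
lemma notequivAB (m : ℕ) (hm : 2 ≤ m) : ¬ codeEquiv (codeA m) (codeB m) := by
  rintro ⟨σ, s, hs, hmap⟩
  obtain ⟨hzA, hA1, hA2, hA3, hA4, hA5⟩ := cnt_std_vals (m+1) (m+1) (m+1) m (m-2) (sumA m hm)
  obtain ⟨hzB, hB1, hB2, hB3, hB4, hB5⟩ := cnt_std_vals (m+1) (m+1) m m (m-1) (sumB m hm)
  have hab1 : ¬((ω4^2 : F4) = 0 ∧ (1:F4) = 0) := fun hc => one_ne_zero hc.2
  have hxwt : wt ((ω4^2) • sv (5*m+1) (m+1) (m+1)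
      + (1:F4) • sw (5*m+1) (m+1) (m+1) (m+1) m) = 4*m+3 := by
    rw [wt_combo _ _ _ _ hab1, perp_w21, hzA, hA5]
    omega
  have hxA : (ω4^2) • sv (5*m+1) (m+1) (m+1)
      + (1:F4) • sw (5*m+1) (m+1) (m+1) (m+1) m ∈ codeA m :=
    mem_span_pair'.mpr ⟨_, _, rfl⟩
  have hyB : monoMap σ s ((ω4^2) • sv (5*m+1) (m+1) (m+1)
      + (1:F4) • sw (5*m+1) (m+1) (m+1) (m+1) m) ∈ codeB m := by
    rw [← hmap]
    exact Submodule.mem_map_of_mem hxA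
  have hywt : wt (monoMap σ s ((ω4^2) • sv (5*m+1) (m+1) (m+1)
      + (1:F4) • sw (5*m+1) (m+1) (m+1) (m+1) m)) = 4*m+3 := by
    rw [wt_mono σ s hs, hxwt]
  obtain ⟨a, b, hab⟩ := mem_span_pair'.mp hyB
  have hab0 : ¬(a = 0 ∧ b = 0) := by
    rintro ⟨rfl, rfl⟩
    rw [← hab] at hywt
    have h0 : (0:F4) • sv (5*m+1) (m+1) (m+1) + (0:F4) • sw (5*m+1) (m+1) (m+1) m m
        = (0 : Fin (5*m+1) → F4) := by simp
    rw [h0, wt_zero] at hywt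
    omega
  have h := wt_combo (sv (5*m+1) (m+1) (m+1)) (sw (5*m+1) (m+1) (m+1) m m) a b hab0
  rw [hab, hywt, hzB] at h
  have hge : m - 1 ≤ cnt (sv (5*m+1) (m+1) (m+1)) (sw (5*m+1) (m+1) (m+1) m m) (perp a b) := by
    rcases perp_cases a b with hp | hp | hp | hp | hp <;> rw [hp]
    · rw [hB2]; omega
    · rw [hB1]; omega
    · rw [hB3]; omega
    · rw [hB4]; omega
    · rw [hB5]
  omega

end Aux

namespace Aux
variable {n : ℕ}

lemma F4.cast_even {k : ℕ} (h : k % 2 = 0) : (k : F4) = 0 := by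
  obtain ⟨j, rfl⟩ : ∃ j, k = 2*j := ⟨k/2, by omega⟩
  push_cast
  linear_combination (j : F4) * F4.two_eq_zero

lemma F4.cast_odd {k : ℕ} (h : k % 2 = 1) : (k : F4) = 1 := by
  obtain ⟨j, rfl⟩ : ∃ j, k = 2*j+1 := ⟨k/2, by omega⟩
  push_cast
  linear_combination (j : F4) * F4.two_eq_zero

lemma det_same_parity (v w : Fin n → F4) (m d1 d2 d3 d4 d5 : ℕ)
    (h1 : cnt v w (some (some 0)) = m+1-d1) (h2 : cnt v w (some none) = m+1-d2)
    (h3 : cnt v w (some (some 1)) = m+1-d3) (h4 : cnt v w (some (some ω4)) = m+1-d4)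
    (h5 : cnt v w (some (some (ω4^2))) = m+1-d5)
    (hd1 : d1 ≤ m+1) (hd2 : d2 ≤ m+1) (hd3 : d3 ≤ m+1) (hd4 : d4 ≤ m+1) (hd5 : d5 ≤ m+1)
    (hp : d1 % 2 = d2 % 2 ∧ d2 % 2 = d3 % 2 ∧ d3 % 2 = d4 % 2 ∧ d4 % 2 = d5 % 2) :
    hermInner v v * hermInner w w - hermInner v w * hermInner w v = 0 := by
  rw [g11_d v w m d1 d3 d4 d5 h1 h3 h4 h5 hd1 hd3 hd4 hd5,
    g22_d v w m d2 d3 d4 d5 h2 h3 h4 h5 hd2 hd3 hd4 hd5,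
    g12_d v w m d3 d4 d5 h3 h4 h5 hd3 hd4 hd5,
    g21_d v w m d3 d4 d5 h3 h4 h5 hd3 hd4 hd5]
  rcases Nat.even_or_odd d1 with he | ho
  · have e1 : d1 % 2 = 0 := Nat.even_iff.mp he
    rw [F4.cast_even e1, F4.cast_even (by omega : d2 % 2 = 0),
      F4.cast_even (by omega : d3 % 2 = 0), F4.cast_even (by omega : d4 % 2 = 0),
      F4.cast_even (by omega : d5 % 2 = 0)]
    ring
  · have e1 : d1 % 2 = 1 := Nat.odd_iff.mp ho
    rw [F4.cast_odd e1, F4.cast_odd (by omega : d2 % 2 = 1),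
      F4.cast_odd (by omega : d3 % 2 = 1), F4.cast_odd (by omega : d4 % 2 = 1),
      F4.cast_odd (by omega : d5 % 2 = 1)]
    linear_combination (-(ω4^2+ω4+1)) * ω4_spec + 8 * F4.two_eq_zero

end Aux

namespace Aux

set_option maxHeartbeats 4000000 in
lemma classify (m : ℕ) (hm : 2 ≤ m) (C : Submodule F4 (Fin (5*m+1) → F4))
    (hopt : IsOptimalLCD (5*m+1) (4*m) C) :
    codeEquiv C (codeA m) ∨ codeEquiv C (codeB m) := by
  obtain ⟨hrk, hmw, hlcd, hdopt⟩ := hopt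
  obtain ⟨v, w, hind, rfl⟩ := exists_basis_of_finrank_two C hrk
  have hdet := det_of_lcd v w hind hlcd
  have hsum := sum_cnt v w
  have key_le : ∀ (a b : F4), ¬(a = 0 ∧ b = 0) →
      cnt v w none + cnt v w (perp a b) ≤ m+1 := by
    intro a b hab
    have hw := hmw.1 _ (mem_span_pair'.mpr ⟨a, b, rfl⟩) (fun h => hab (hind a b h))
    rw [wt_combo v w a b hab] at hw
    have hle : cnt v w none + cnt v w (perp a b) ≤ 5*m+1 := by
      rcases perp_cases a b with h|h|h|h|h <;> rw [h] <;> omega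
    omega
  have hq1 := key_le 0 1 (by simp)
  rw [perp_01] at hq1
  have hq2 := key_le 1 0 (by simp)
  rw [perp_10] at hq2
  have hq3 := key_le 1 1 (by simp)
  rw [perp_11] at hq3
  have hq4 := key_le ω4 1 (by simp [ω4_ne_zero])
  rw [perp_w1] at hq4
  have hq5 := key_le (ω4^2) 1 (by simp [ω4_sq_ne_zero])
  rw [perp_w21] at hq5
  have hz : cnt v w none = 0 := by
    by_contra hz0
    apply hdet
    exact det_same_parity v w m 1 1 1 1 1 (by omega) (by omega) (by omega) (by omega)
      (by omega) (by omega) (by omega) (by omega) (by omega) (by omega) (by omega)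
  obtain ⟨d1, hN1, hd1a, hd1b⟩ : ∃ d, cnt v w (some (some 0)) = m+1-d ∧ d ≤ m+1 ∧ d ≤ 4 :=
    ⟨m+1 - cnt v w (some (some 0)), by omega, by omega, by omega⟩
  obtain ⟨d2, hN2, hd2a, hd2b⟩ : ∃ d, cnt v w (some none) = m+1-d ∧ d ≤ m+1 ∧ d ≤ 4 :=
    ⟨m+1 - cnt v w (some none), by omega, by omega, by omega⟩
  obtain ⟨d3, hN3, hd3a, hd3b⟩ : ∃ d, cnt v w (some (some 1)) = m+1-d ∧ d ≤ m+1 ∧ d ≤ 4 :=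
    ⟨m+1 - cnt v w (some (some 1)), by omega, by omega, by omega⟩
  obtain ⟨d4, hN4, hd4a, hd4b⟩ : ∃ d, cnt v w (some (some ω4)) = m+1-d ∧ d ≤ m+1 ∧ d ≤ 4 :=
    ⟨m+1 - cnt v w (some (some ω4)), by omega, by omega, by omega⟩
  obtain ⟨d5, hN5, hd5a, hd5b⟩ : ∃ d, cnt v w (some (some (ω4^2))) = m+1-d ∧ d ≤ m+1 ∧ d ≤ 4 :=
    ⟨m+1 - cnt v w (some (some (ω4^2))), by omega, by omega, by omega⟩
  rcases (by omega : d1 = 0 ∨ d1 = 1 ∨ d1 = 2 ∨ d1 = 3 ∨ d1 = 4) with rfl|rfl|rfl|rfl|rfl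
  · rcases (by omega : d2 = 0 ∨ d2 = 1 ∨ d2 = 2 ∨ d2 = 3 ∨ d2 = 4) with rfl|rfl|rfl|rfl|rfl
    · rcases (by omega : d3 = 0 ∨ d3 = 1 ∨ d3 = 2 ∨ d3 = 3 ∨ d3 = 4) with rfl|rfl|rfl|rfl|rfl
      · rcases (by omega : d4 = 0 ∨ d4 = 1 ∨ d4 = 2 ∨ d4 = 3 ∨ d4 = 4) with rfl|rfl|rfl|rfl|rfl
        · obtain rfl : d5 = 4 := by omega
          exact absurd (det_same_parity v w m 0 0 0 0 4 hN1 hN2 hN3 hN4 hN5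
            hd1a hd2a hd3a hd4a hd5a (by omega)) hdet
        · obtain rfl : d5 = 3 := by omega
          exact Or.inl (equiv_of_cnt v w (sv (5*m+1) (m+1-0) (m+1-0)) (sw (5*m+1) (m+1-0) (m+1-0) (m+1-0) (m+1-1))
              (fun k => by rw [cnt_eq_all v w (m+1-0) (m+1-0) (m+1-0) (m+1-1) (m+1-3) hz hN1 hN2 hN3 hN4 hN5 k,
                cnt_std (m+1-0) (m+1-0) (m+1-0) (m+1-1) (m+1-3) (by omega) k]))
        · obtain rfl : d5 = 2 := by omega
          exact absurd (det_same_parity v w m 0 0 0 2 2 hN1 hN2 hN3 hN4 hN5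
            hd1a hd2a hd3a hd4a hd5a (by omega)) hdet
        · obtain rfl : d5 = 1 := by omega
          exact Or.inl (codeEquiv_trans (equiv_of_cnt v w (sv (5*m+1) (m+1-0) (m+1-0)) (sw (5*m+1) (m+1-0) (m+1-0) (m+1-0) (m+1-3))
              (fun k => by rw [cnt_eq_all v w (m+1-0) (m+1-0) (m+1-0) (m+1-3) (m+1-1) hz hN1 hN2 hN3 hN4 hN5 k,
                cnt_std (m+1-0) (m+1-0) (m+1-0) (m+1-3) (m+1-1) (by omega) k])) (move_swap (m+1-0) (m+1-0) (m+1-0) (m+1-3) (m+1-1) (by omega)))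
        · obtain rfl : d5 = 0 := by omega
          exact absurd (det_same_parity v w m 0 0 0 4 0 hN1 hN2 hN3 hN4 hN5
            hd1a hd2a hd3a hd4a hd5a (by omega)) hdet
      · rcases (by omega : d4 = 0 ∨ d4 = 1 ∨ d4 = 2 ∨ d4 = 3) with rfl|rfl|rfl|rfl
        · obtain rfl : d5 = 3 := by omega
          exact Or.inl (codeEquiv_trans (codeEquiv_trans (equiv_of_cnt v w (sv (5*m+1) (m+1-0) (m+1-0)) (sw (5*m+1) (m+1-0) (m+1-0) (m+1-1) (m+1-0))
              (fun k => by rw [cnt_eq_all v w (m+1-0) (m+1-0) (m+1-1) (m+1-0) (m+1-3) hz hN1 hN2 hN3 hN4 hN5 k,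
                cnt_std (m+1-0) (m+1-0) (m+1-1) (m+1-0) (m+1-3) (by omega) k])) (move_swap (m+1-0) (m+1-0) (m+1-1) (m+1-0) (m+1-3) (by omega))) (move_smul (m+1-0) (m+1-0) (m+1-1) (m+1-3) (m+1-0) (by omega)))
        · obtain rfl : d5 = 2 := by omega
          exact Or.inr (equiv_of_cnt v w (sv (5*m+1) (m+1-0) (m+1-0)) (sw (5*m+1) (m+1-0) (m+1-0) (m+1-1) (m+1-1))
              (fun k => by rw [cnt_eq_all v w (m+1-0) (m+1-0) (m+1-1) (m+1-1) (m+1-2) hz hN1 hN2 hN3 hN4 hN5 k,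
                cnt_std (m+1-0) (m+1-0) (m+1-1) (m+1-1) (m+1-2) (by omega) k]))
        · obtain rfl : d5 = 1 := by omega
          exact Or.inr (codeEquiv_trans (equiv_of_cnt v w (sv (5*m+1) (m+1-0) (m+1-0)) (sw (5*m+1) (m+1-0) (m+1-0) (m+1-1) (m+1-2))
              (fun k => by rw [cnt_eq_all v w (m+1-0) (m+1-0) (m+1-1) (m+1-2) (m+1-1) hz hN1 hN2 hN3 hN4 hN5 k,
                cnt_std (m+1-0) (m+1-0) (m+1-1) (m+1-2) (m+1-1) (by omega) k])) (move_swap (m+1-0) (m+1-0) (m+1-1) (m+1-2) (m+1-1) (by omega)))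
        · obtain rfl : d5 = 0 := by omega
          exact Or.inl (codeEquiv_trans (equiv_of_cnt v w (sv (5*m+1) (m+1-0) (m+1-0)) (sw (5*m+1) (m+1-0) (m+1-0) (m+1-1) (m+1-3))
              (fun k => by rw [cnt_eq_all v w (m+1-0) (m+1-0) (m+1-1) (m+1-3) (m+1-0) hz hN1 hN2 hN3 hN4 hN5 k,
                cnt_std (m+1-0) (m+1-0) (m+1-1) (m+1-3) (m+1-0) (by omega) k])) (move_smul (m+1-0) (m+1-0) (m+1-1) (m+1-3) (m+1-0) (by omega)))
      · rcases (by omega : d4 = 0 ∨ d4 = 1 ∨ d4 = 2) with rfl|rfl|rfl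
        · obtain rfl : d5 = 2 := by omega
          exact absurd (det_same_parity v w m 0 0 2 0 2 hN1 hN2 hN3 hN4 hN5
            hd1a hd2a hd3a hd4a hd5a (by omega)) hdet
        · obtain rfl : d5 = 1 := by omega
          exact Or.inr (codeEquiv_trans (codeEquiv_trans (equiv_of_cnt v w (sv (5*m+1) (m+1-0) (m+1-0)) (sw (5*m+1) (m+1-0) (m+1-0) (m+1-2) (m+1-1))
              (fun k => by rw [cnt_eq_all v w (m+1-0) (m+1-0) (m+1-2) (m+1-1) (m+1-1) hz hN1 hN2 hN3 hN4 hN5 k,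
                cnt_std (m+1-0) (m+1-0) (m+1-2) (m+1-1) (m+1-1) (by omega) k])) (move_smul (m+1-0) (m+1-0) (m+1-2) (m+1-1) (m+1-1) (by omega))) (move_swap (m+1-0) (m+1-0) (m+1-1) (m+1-2) (m+1-1) (by omega)))
        · obtain rfl : d5 = 0 := by omega
          exact absurd (det_same_parity v w m 0 0 2 2 0 hN1 hN2 hN3 hN4 hN5
            hd1a hd2a hd3a hd4a hd5a (by omega)) hdet
      · rcases (by omega : d4 = 0 ∨ d4 = 1) with rfl|rfl
        · obtain rfl : d5 = 1 := by omega
          exact Or.inl (codeEquiv_trans (codeEquiv_trans (equiv_of_cnt v w (sv (5*m+1) (m+1-0) (m+1-0)) (sw (5*m+1) (m+1-0) (m+1-0) (m+1-3) (m+1-0))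
              (fun k => by rw [cnt_eq_all v w (m+1-0) (m+1-0) (m+1-3) (m+1-0) (m+1-1) hz hN1 hN2 hN3 hN4 hN5 k,
                cnt_std (m+1-0) (m+1-0) (m+1-3) (m+1-0) (m+1-1) (by omega) k])) (move_smul (m+1-0) (m+1-0) (m+1-3) (m+1-0) (m+1-1) (by omega))) (move_smul (m+1-0) (m+1-0) (m+1-1) (m+1-3) (m+1-0) (by omega)))
        · obtain rfl : d5 = 0 := by omega
          exact Or.inl (codeEquiv_trans (codeEquiv_trans (equiv_of_cnt v w (sv (5*m+1) (m+1-0) (m+1-0)) (sw (5*m+1) (m+1-0) (m+1-0) (m+1-3) (m+1-1))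
              (fun k => by rw [cnt_eq_all v w (m+1-0) (m+1-0) (m+1-3) (m+1-1) (m+1-0) hz hN1 hN2 hN3 hN4 hN5 k,
                cnt_std (m+1-0) (m+1-0) (m+1-3) (m+1-1) (m+1-0) (by omega) k])) (move_smul (m+1-0) (m+1-0) (m+1-3) (m+1-1) (m+1-0) (by omega))) (move_swap (m+1-0) (m+1-0) (m+1-0) (m+1-3) (m+1-1) (by omega)))
      · rcases (by omega : d4 = 0) with rfl
        · obtain rfl : d5 = 0 := by omega
          exact absurd (det_same_parity v w m 0 0 4 0 0 hN1 hN2 hN3 hN4 hN5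
            hd1a hd2a hd3a hd4a hd5a (by omega)) hdet
    · rcases (by omega : d3 = 0 ∨ d3 = 1 ∨ d3 = 2 ∨ d3 = 3) with rfl|rfl|rfl|rfl
      · rcases (by omega : d4 = 0 ∨ d4 = 1 ∨ d4 = 2 ∨ d4 = 3) with rfl|rfl|rfl|rfl
        · obtain rfl : d5 = 3 := by omega
          exact Or.inl (codeEquiv_trans (codeEquiv_trans (codeEquiv_trans (codeEquiv_trans (equiv_of_cnt v w (sv (5*m+1) (m+1-0) (m+1-1)) (sw (5*m+1) (m+1-0) (m+1-1) (m+1-0) (m+1-0))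
              (fun k => by rw [cnt_eq_all v w (m+1-0) (m+1-1) (m+1-0) (m+1-0) (m+1-3) hz hN1 hN2 hN3 hN4 hN5 k,
                cnt_std (m+1-0) (m+1-1) (m+1-0) (m+1-0) (m+1-3) (by omega) k])) (move_swap (m+1-0) (m+1-1) (m+1-0) (m+1-0) (m+1-3) (by omega))) (move_smul (m+1-1) (m+1-0) (m+1-0) (m+1-3) (m+1-0) (by omega))) (move_add (m+1-1) (m+1-0) (m+1-0) (m+1-0) (m+1-3) (by omega))) (move_smul (m+1-0) (m+1-0) (m+1-1) (m+1-3) (m+1-0) (by omega)))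
        · obtain rfl : d5 = 2 := by omega
          exact Or.inr (codeEquiv_trans (codeEquiv_trans (equiv_of_cnt v w (sv (5*m+1) (m+1-0) (m+1-1)) (sw (5*m+1) (m+1-0) (m+1-1) (m+1-0) (m+1-1))
              (fun k => by rw [cnt_eq_all v w (m+1-0) (m+1-1) (m+1-0) (m+1-1) (m+1-2) hz hN1 hN2 hN3 hN4 hN5 k,
                cnt_std (m+1-0) (m+1-1) (m+1-0) (m+1-1) (m+1-2) (by omega) k])) (move_swap (m+1-0) (m+1-1) (m+1-0) (m+1-1) (m+1-2) (by omega))) (move_add (m+1-1) (m+1-0) (m+1-0) (m+1-2) (m+1-1) (by omega)))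
        · obtain rfl : d5 = 1 := by omega
          exact Or.inr (codeEquiv_trans (codeEquiv_trans (codeEquiv_trans (equiv_of_cnt v w (sv (5*m+1) (m+1-0) (m+1-1)) (sw (5*m+1) (m+1-0) (m+1-1) (m+1-0) (m+1-2))
              (fun k => by rw [cnt_eq_all v w (m+1-0) (m+1-1) (m+1-0) (m+1-2) (m+1-1) hz hN1 hN2 hN3 hN4 hN5 k,
                cnt_std (m+1-0) (m+1-1) (m+1-0) (m+1-2) (m+1-1) (by omega) k])) (move_swap (m+1-0) (m+1-1) (m+1-0) (m+1-2) (m+1-1) (by omega))) (move_add (m+1-1) (m+1-0) (m+1-0) (m+1-1) (m+1-2) (by omega))) (move_swap (m+1-0) (m+1-0) (m+1-1) (m+1-2) (m+1-1) (by omega)))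
        · obtain rfl : d5 = 0 := by omega
          exact Or.inl (codeEquiv_trans (codeEquiv_trans (codeEquiv_trans (equiv_of_cnt v w (sv (5*m+1) (m+1-0) (m+1-1)) (sw (5*m+1) (m+1-0) (m+1-1) (m+1-0) (m+1-3))
              (fun k => by rw [cnt_eq_all v w (m+1-0) (m+1-1) (m+1-0) (m+1-3) (m+1-0) hz hN1 hN2 hN3 hN4 hN5 k,
                cnt_std (m+1-0) (m+1-1) (m+1-0) (m+1-3) (m+1-0) (by omega) k])) (move_swap (m+1-0) (m+1-1) (m+1-0) (m+1-3) (m+1-0) (by omega))) (move_add (m+1-1) (m+1-0) (m+1-0) (m+1-0) (m+1-3) (by omega))) (move_smul (m+1-0) (m+1-0) (m+1-1) (m+1-3) (m+1-0) (by omega)))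
      · rcases (by omega : d4 = 0 ∨ d4 = 1 ∨ d4 = 2) with rfl|rfl|rfl
        · obtain rfl : d5 = 2 := by omega
          exact Or.inr (codeEquiv_trans (codeEquiv_trans (codeEquiv_trans (codeEquiv_trans (equiv_of_cnt v w (sv (5*m+1) (m+1-0) (m+1-1)) (sw (5*m+1) (m+1-0) (m+1-1) (m+1-1) (m+1-0))
              (fun k => by rw [cnt_eq_all v w (m+1-0) (m+1-1) (m+1-1) (m+1-0) (m+1-2) hz hN1 hN2 hN3 hN4 hN5 k,
                cnt_std (m+1-0) (m+1-1) (m+1-1) (m+1-0) (m+1-2) (by omega) k])) (move_swap (m+1-0) (m+1-1) (m+1-1) (m+1-0) (m+1-2) (by omega))) (move_smul (m+1-1) (m+1-0) (m+1-1) (m+1-2) (m+1-0) (by omega))) (move_add (m+1-1) (m+1-0) (m+1-0) (m+1-1) (m+1-2) (by omega))) (move_swap (m+1-0) (m+1-0) (m+1-1) (m+1-2) (m+1-1) (by omega)))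
        · obtain rfl : d5 = 1 := by omega
          exfalso
          apply hdet
          rw [g11_d v w m 0 1 1 1 hN1 hN3 hN4 hN5 hd1a hd3a hd4a hd5a,
            g22_d v w m 1 1 1 1 hN2 hN3 hN4 hN5 hd2a hd3a hd4a hd5a,
            g12_d v w m 1 1 1 hN3 hN4 hN5 hd3a hd4a hd5a,
            g21_d v w m 1 1 1 hN3 hN4 hN5 hd3a hd4a hd5a]
          push_cast
          linear_combination ((-1)*ω4^2 + (-1)*ω4 + (-1)) * ω4_spec + ((6)) * F4.two_eq_zero
        · obtain rfl : d5 = 0 := by omega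
          exact Or.inr (codeEquiv_trans (codeEquiv_trans (codeEquiv_trans (equiv_of_cnt v w (sv (5*m+1) (m+1-0) (m+1-1)) (sw (5*m+1) (m+1-0) (m+1-1) (m+1-1) (m+1-2))
              (fun k => by rw [cnt_eq_all v w (m+1-0) (m+1-1) (m+1-1) (m+1-2) (m+1-0) hz hN1 hN2 hN3 hN4 hN5 k,
                cnt_std (m+1-0) (m+1-1) (m+1-1) (m+1-2) (m+1-0) (by omega) k])) (move_smul (m+1-0) (m+1-1) (m+1-1) (m+1-2) (m+1-0) (by omega))) (move_swap (m+1-0) (m+1-1) (m+1-0) (m+1-1) (m+1-2) (by omega))) (move_add (m+1-1) (m+1-0) (m+1-0) (m+1-2) (m+1-1) (by omega)))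
      · rcases (by omega : d4 = 0 ∨ d4 = 1) with rfl|rfl
        · obtain rfl : d5 = 1 := by omega
          exact Or.inr (codeEquiv_trans (codeEquiv_trans (codeEquiv_trans (equiv_of_cnt v w (sv (5*m+1) (m+1-0) (m+1-1)) (sw (5*m+1) (m+1-0) (m+1-1) (m+1-2) (m+1-0))
              (fun k => by rw [cnt_eq_all v w (m+1-0) (m+1-1) (m+1-2) (m+1-0) (m+1-1) hz hN1 hN2 hN3 hN4 hN5 k,
                cnt_std (m+1-0) (m+1-1) (m+1-2) (m+1-0) (m+1-1) (by omega) k])) (move_swap (m+1-0) (m+1-1) (m+1-2) (m+1-0) (m+1-1) (by omega))) (move_smul (m+1-1) (m+1-0) (m+1-2) (m+1-1) (m+1-0) (by omega))) (move_add (m+1-1) (m+1-0) (m+1-0) (m+1-2) (m+1-1) (by omega)))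
        · obtain rfl : d5 = 0 := by omega
          exact Or.inr (codeEquiv_trans (codeEquiv_trans (codeEquiv_trans (codeEquiv_trans (equiv_of_cnt v w (sv (5*m+1) (m+1-0) (m+1-1)) (sw (5*m+1) (m+1-0) (m+1-1) (m+1-2) (m+1-1))
              (fun k => by rw [cnt_eq_all v w (m+1-0) (m+1-1) (m+1-2) (m+1-1) (m+1-0) hz hN1 hN2 hN3 hN4 hN5 k,
                cnt_std (m+1-0) (m+1-1) (m+1-2) (m+1-1) (m+1-0) (by omega) k])) (move_smul (m+1-0) (m+1-1) (m+1-2) (m+1-1) (m+1-0) (by omega))) (move_swap (m+1-0) (m+1-1) (m+1-0) (m+1-2) (m+1-1) (by omega))) (move_add (m+1-1) (m+1-0) (m+1-0) (m+1-1) (m+1-2) (by omega))) (move_swap (m+1-0) (m+1-0) (m+1-1) (m+1-2) (m+1-1) (by omega)))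
      · rcases (by omega : d4 = 0) with rfl
        · obtain rfl : d5 = 0 := by omega
          exact Or.inl (codeEquiv_trans (codeEquiv_trans (codeEquiv_trans (codeEquiv_trans (equiv_of_cnt v w (sv (5*m+1) (m+1-0) (m+1-1)) (sw (5*m+1) (m+1-0) (m+1-1) (m+1-3) (m+1-0))
              (fun k => by rw [cnt_eq_all v w (m+1-0) (m+1-1) (m+1-3) (m+1-0) (m+1-0) hz hN1 hN2 hN3 hN4 hN5 k,
                cnt_std (m+1-0) (m+1-1) (m+1-3) (m+1-0) (m+1-0) (by omega) k])) (move_smul (m+1-0) (m+1-1) (m+1-3) (m+1-0) (m+1-0) (by omega))) (move_swap (m+1-0) (m+1-1) (m+1-0) (m+1-3) (m+1-0) (by omega))) (move_add (m+1-1) (m+1-0) (m+1-0) (m+1-0) (m+1-3) (by omega))) (move_smul (m+1-0) (m+1-0) (m+1-1) (m+1-3) (m+1-0) (by omega)))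
    · rcases (by omega : d3 = 0 ∨ d3 = 1 ∨ d3 = 2) with rfl|rfl|rfl
      · rcases (by omega : d4 = 0 ∨ d4 = 1 ∨ d4 = 2) with rfl|rfl|rfl
        · obtain rfl : d5 = 2 := by omega
          exact absurd (det_same_parity v w m 0 2 0 0 2 hN1 hN2 hN3 hN4 hN5
            hd1a hd2a hd3a hd4a hd5a (by omega)) hdet
        · obtain rfl : d5 = 1 := by omega
          exact Or.inr (codeEquiv_trans (codeEquiv_trans (codeEquiv_trans (codeEquiv_trans (equiv_of_cnt v w (sv (5*m+1) (m+1-0) (m+1-2)) (sw (5*m+1) (m+1-0) (m+1-2) (m+1-0) (m+1-1))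
              (fun k => by rw [cnt_eq_all v w (m+1-0) (m+1-2) (m+1-0) (m+1-1) (m+1-1) hz hN1 hN2 hN3 hN4 hN5 k,
                cnt_std (m+1-0) (m+1-2) (m+1-0) (m+1-1) (m+1-1) (by omega) k])) (move_swap (m+1-0) (m+1-2) (m+1-0) (m+1-1) (m+1-1) (by omega))) (move_add (m+1-2) (m+1-0) (m+1-0) (m+1-1) (m+1-1) (by omega))) (move_smul (m+1-0) (m+1-0) (m+1-2) (m+1-1) (m+1-1) (by omega))) (move_swap (m+1-0) (m+1-0) (m+1-1) (m+1-2) (m+1-1) (by omega)))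
        · obtain rfl : d5 = 0 := by omega
          exact absurd (det_same_parity v w m 0 2 0 2 0 hN1 hN2 hN3 hN4 hN5
            hd1a hd2a hd3a hd4a hd5a (by omega)) hdet
      · rcases (by omega : d4 = 0 ∨ d4 = 1) with rfl|rfl
        · obtain rfl : d5 = 1 := by omega
          exact Or.inr (codeEquiv_trans (codeEquiv_trans (codeEquiv_trans (codeEquiv_trans (codeEquiv_trans (equiv_of_cnt v w (sv (5*m+1) (m+1-0) (m+1-2)) (sw (5*m+1) (m+1-0) (m+1-2) (m+1-1) (m+1-0))
              (fun k => by rw [cnt_eq_all v w (m+1-0) (m+1-2) (m+1-1) (m+1-0) (m+1-1) hz hN1 hN2 hN3 hN4 hN5 k,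
                cnt_std (m+1-0) (m+1-2) (m+1-1) (m+1-0) (m+1-1) (by omega) k])) (move_swap (m+1-0) (m+1-2) (m+1-1) (m+1-0) (m+1-1) (by omega))) (move_smul (m+1-2) (m+1-0) (m+1-1) (m+1-1) (m+1-0) (by omega))) (move_add (m+1-2) (m+1-0) (m+1-0) (m+1-1) (m+1-1) (by omega))) (move_smul (m+1-0) (m+1-0) (m+1-2) (m+1-1) (m+1-1) (by omega))) (move_swap (m+1-0) (m+1-0) (m+1-1) (m+1-2) (m+1-1) (by omega)))
        · obtain rfl : d5 = 0 := by omega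
          exact Or.inr (codeEquiv_trans (codeEquiv_trans (codeEquiv_trans (codeEquiv_trans (equiv_of_cnt v w (sv (5*m+1) (m+1-0) (m+1-2)) (sw (5*m+1) (m+1-0) (m+1-2) (m+1-1) (m+1-1))
              (fun k => by rw [cnt_eq_all v w (m+1-0) (m+1-2) (m+1-1) (m+1-1) (m+1-0) hz hN1 hN2 hN3 hN4 hN5 k,
                cnt_std (m+1-0) (m+1-2) (m+1-1) (m+1-1) (m+1-0) (by omega) k])) (move_swap (m+1-0) (m+1-2) (m+1-1) (m+1-1) (m+1-0) (by omega))) (move_add (m+1-2) (m+1-0) (m+1-1) (m+1-0) (m+1-1) (by omega))) (move_smul (m+1-1) (m+1-0) (m+1-2) (m+1-1) (m+1-0) (by omega))) (move_add (m+1-1) (m+1-0) (m+1-0) (m+1-2) (m+1-1) (by omega)))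
      · rcases (by omega : d4 = 0) with rfl
        · obtain rfl : d5 = 0 := by omega
          exact absurd (det_same_parity v w m 0 2 2 0 0 hN1 hN2 hN3 hN4 hN5
            hd1a hd2a hd3a hd4a hd5a (by omega)) hdet
    · rcases (by omega : d3 = 0 ∨ d3 = 1) with rfl|rfl
      · rcases (by omega : d4 = 0 ∨ d4 = 1) with rfl|rfl
        · obtain rfl : d5 = 1 := by omega
          exact Or.inl (codeEquiv_trans (codeEquiv_trans (codeEquiv_trans (codeEquiv_trans (equiv_of_cnt v w (sv (5*m+1) (m+1-0) (m+1-3)) (sw (5*m+1) (m+1-0) (m+1-3) (m+1-0) (m+1-0))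
              (fun k => by rw [cnt_eq_all v w (m+1-0) (m+1-3) (m+1-0) (m+1-0) (m+1-1) hz hN1 hN2 hN3 hN4 hN5 k,
                cnt_std (m+1-0) (m+1-3) (m+1-0) (m+1-0) (m+1-1) (by omega) k])) (move_swap (m+1-0) (m+1-3) (m+1-0) (m+1-0) (m+1-1) (by omega))) (move_add (m+1-3) (m+1-0) (m+1-0) (m+1-1) (m+1-0) (by omega))) (move_smul (m+1-0) (m+1-0) (m+1-3) (m+1-0) (m+1-1) (by omega))) (move_smul (m+1-0) (m+1-0) (m+1-1) (m+1-3) (m+1-0) (by omega)))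
        · obtain rfl : d5 = 0 := by omega
          exact Or.inl (codeEquiv_trans (codeEquiv_trans (codeEquiv_trans (codeEquiv_trans (equiv_of_cnt v w (sv (5*m+1) (m+1-0) (m+1-3)) (sw (5*m+1) (m+1-0) (m+1-3) (m+1-0) (m+1-1))
              (fun k => by rw [cnt_eq_all v w (m+1-0) (m+1-3) (m+1-0) (m+1-1) (m+1-0) hz hN1 hN2 hN3 hN4 hN5 k,
                cnt_std (m+1-0) (m+1-3) (m+1-0) (m+1-1) (m+1-0) (by omega) k])) (move_swap (m+1-0) (m+1-3) (m+1-0) (m+1-1) (m+1-0) (by omega))) (move_add (m+1-3) (m+1-0) (m+1-0) (m+1-0) (m+1-1) (by omega))) (move_smul (m+1-0) (m+1-0) (m+1-3) (m+1-1) (m+1-0) (by omega))) (move_swap (m+1-0) (m+1-0) (m+1-0) (m+1-3) (m+1-1) (by omega)))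
      · rcases (by omega : d4 = 0) with rfl
        · obtain rfl : d5 = 0 := by omega
          exact Or.inl (codeEquiv_trans (codeEquiv_trans (codeEquiv_trans (codeEquiv_trans (codeEquiv_trans (equiv_of_cnt v w (sv (5*m+1) (m+1-0) (m+1-3)) (sw (5*m+1) (m+1-0) (m+1-3) (m+1-1) (m+1-0))
              (fun k => by rw [cnt_eq_all v w (m+1-0) (m+1-3) (m+1-1) (m+1-0) (m+1-0) hz hN1 hN2 hN3 hN4 hN5 k,
                cnt_std (m+1-0) (m+1-3) (m+1-1) (m+1-0) (m+1-0) (by omega) k])) (move_swap (m+1-0) (m+1-3) (m+1-1) (m+1-0) (m+1-0) (by omega))) (move_smul (m+1-3) (m+1-0) (m+1-1) (m+1-0) (m+1-0) (by omega))) (move_add (m+1-3) (m+1-0) (m+1-0) (m+1-1) (m+1-0) (by omega))) (move_smul (m+1-0) (m+1-0) (m+1-3) (m+1-0) (m+1-1) (by omega))) (move_smul (m+1-0) (m+1-0) (m+1-1) (m+1-3) (m+1-0) (by omega)))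
    · rcases (by omega : d3 = 0) with rfl
      · rcases (by omega : d4 = 0) with rfl
        · obtain rfl : d5 = 0 := by omega
          exact absurd (det_same_parity v w m 0 4 0 0 0 hN1 hN2 hN3 hN4 hN5
            hd1a hd2a hd3a hd4a hd5a (by omega)) hdet
  · rcases (by omega : d2 = 0 ∨ d2 = 1 ∨ d2 = 2 ∨ d2 = 3) with rfl|rfl|rfl|rfl
    · rcases (by omega : d3 = 0 ∨ d3 = 1 ∨ d3 = 2 ∨ d3 = 3) with rfl|rfl|rfl|rfl
      · rcases (by omega : d4 = 0 ∨ d4 = 1 ∨ d4 = 2 ∨ d4 = 3) with rfl|rfl|rfl|rfl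
        · obtain rfl : d5 = 3 := by omega
          exact Or.inl (codeEquiv_trans (codeEquiv_trans (equiv_of_cnt v w (sv (5*m+1) (m+1-1) (m+1-0)) (sw (5*m+1) (m+1-1) (m+1-0) (m+1-0) (m+1-0))
              (fun k => by rw [cnt_eq_all v w (m+1-1) (m+1-0) (m+1-0) (m+1-0) (m+1-3) hz hN1 hN2 hN3 hN4 hN5 k,
                cnt_std (m+1-1) (m+1-0) (m+1-0) (m+1-0) (m+1-3) (by omega) k])) (move_add (m+1-1) (m+1-0) (m+1-0) (m+1-0) (m+1-3) (by omega))) (move_smul (m+1-0) (m+1-0) (m+1-1) (m+1-3) (m+1-0) (by omega)))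
        · obtain rfl : d5 = 2 := by omega
          exact Or.inr (codeEquiv_trans (codeEquiv_trans (equiv_of_cnt v w (sv (5*m+1) (m+1-1) (m+1-0)) (sw (5*m+1) (m+1-1) (m+1-0) (m+1-0) (m+1-1))
              (fun k => by rw [cnt_eq_all v w (m+1-1) (m+1-0) (m+1-0) (m+1-1) (m+1-2) hz hN1 hN2 hN3 hN4 hN5 k,
                cnt_std (m+1-1) (m+1-0) (m+1-0) (m+1-1) (m+1-2) (by omega) k])) (move_add (m+1-1) (m+1-0) (m+1-0) (m+1-1) (m+1-2) (by omega))) (move_swap (m+1-0) (m+1-0) (m+1-1) (m+1-2) (m+1-1) (by omega)))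
        · obtain rfl : d5 = 1 := by omega
          exact Or.inr (codeEquiv_trans (equiv_of_cnt v w (sv (5*m+1) (m+1-1) (m+1-0)) (sw (5*m+1) (m+1-1) (m+1-0) (m+1-0) (m+1-2))
              (fun k => by rw [cnt_eq_all v w (m+1-1) (m+1-0) (m+1-0) (m+1-2) (m+1-1) hz hN1 hN2 hN3 hN4 hN5 k,
                cnt_std (m+1-1) (m+1-0) (m+1-0) (m+1-2) (m+1-1) (by omega) k])) (move_add (m+1-1) (m+1-0) (m+1-0) (m+1-2) (m+1-1) (by omega)))
        · obtain rfl : d5 = 0 := by omega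
          exact Or.inl (codeEquiv_trans (codeEquiv_trans (codeEquiv_trans (equiv_of_cnt v w (sv (5*m+1) (m+1-1) (m+1-0)) (sw (5*m+1) (m+1-1) (m+1-0) (m+1-0) (m+1-3))
              (fun k => by rw [cnt_eq_all v w (m+1-1) (m+1-0) (m+1-0) (m+1-3) (m+1-0) hz hN1 hN2 hN3 hN4 hN5 k,
                cnt_std (m+1-1) (m+1-0) (m+1-0) (m+1-3) (m+1-0) (by omega) k])) (move_smul (m+1-1) (m+1-0) (m+1-0) (m+1-3) (m+1-0) (by omega))) (move_add (m+1-1) (m+1-0) (m+1-0) (m+1-0) (m+1-3) (by omega))) (move_smul (m+1-0) (m+1-0) (m+1-1) (m+1-3) (m+1-0) (by omega)))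
      · rcases (by omega : d4 = 0 ∨ d4 = 1 ∨ d4 = 2) with rfl|rfl|rfl
        · obtain rfl : d5 = 2 := by omega
          exact Or.inr (codeEquiv_trans (codeEquiv_trans (codeEquiv_trans (equiv_of_cnt v w (sv (5*m+1) (m+1-1) (m+1-0)) (sw (5*m+1) (m+1-1) (m+1-0) (m+1-1) (m+1-0))
              (fun k => by rw [cnt_eq_all v w (m+1-1) (m+1-0) (m+1-1) (m+1-0) (m+1-2) hz hN1 hN2 hN3 hN4 hN5 k,
                cnt_std (m+1-1) (m+1-0) (m+1-1) (m+1-0) (m+1-2) (by omega) k])) (move_smul (m+1-1) (m+1-0) (m+1-1) (m+1-0) (m+1-2) (by omega))) (move_smul (m+1-1) (m+1-0) (m+1-2) (m+1-1) (m+1-0) (by omega))) (move_add (m+1-1) (m+1-0) (m+1-0) (m+1-2) (m+1-1) (by omega)))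
        · obtain rfl : d5 = 1 := by omega
          exfalso
          apply hdet
          rw [g11_d v w m 1 1 1 1 hN1 hN3 hN4 hN5 hd1a hd3a hd4a hd5a,
            g22_d v w m 0 1 1 1 hN2 hN3 hN4 hN5 hd2a hd3a hd4a hd5a,
            g12_d v w m 1 1 1 hN3 hN4 hN5 hd3a hd4a hd5a,
            g21_d v w m 1 1 1 hN3 hN4 hN5 hd3a hd4a hd5a]
          push_cast
          linear_combination ((-1)*ω4^2 + (-1)*ω4 + (-1)) * ω4_spec + ((6)) * F4.two_eq_zero
        · obtain rfl : d5 = 0 := by omega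
          exact Or.inr (codeEquiv_trans (codeEquiv_trans (codeEquiv_trans (equiv_of_cnt v w (sv (5*m+1) (m+1-1) (m+1-0)) (sw (5*m+1) (m+1-1) (m+1-0) (m+1-1) (m+1-2))
              (fun k => by rw [cnt_eq_all v w (m+1-1) (m+1-0) (m+1-1) (m+1-2) (m+1-0) hz hN1 hN2 hN3 hN4 hN5 k,
                cnt_std (m+1-1) (m+1-0) (m+1-1) (m+1-2) (m+1-0) (by omega) k])) (move_smul (m+1-1) (m+1-0) (m+1-1) (m+1-2) (m+1-0) (by omega))) (move_add (m+1-1) (m+1-0) (m+1-0) (m+1-1) (m+1-2) (by omega))) (move_swap (m+1-0) (m+1-0) (m+1-1) (m+1-2) (m+1-1) (by omega)))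
      · rcases (by omega : d4 = 0 ∨ d4 = 1) with rfl|rfl
        · obtain rfl : d5 = 1 := by omega
          exact Or.inr (codeEquiv_trans (codeEquiv_trans (codeEquiv_trans (codeEquiv_trans (equiv_of_cnt v w (sv (5*m+1) (m+1-1) (m+1-0)) (sw (5*m+1) (m+1-1) (m+1-0) (m+1-2) (m+1-0))
              (fun k => by rw [cnt_eq_all v w (m+1-1) (m+1-0) (m+1-2) (m+1-0) (m+1-1) hz hN1 hN2 hN3 hN4 hN5 k,
                cnt_std (m+1-1) (m+1-0) (m+1-2) (m+1-0) (m+1-1) (by omega) k])) (move_smul (m+1-1) (m+1-0) (m+1-2) (m+1-0) (m+1-1) (by omega))) (move_smul (m+1-1) (m+1-0) (m+1-1) (m+1-2) (m+1-0) (by omega))) (move_add (m+1-1) (m+1-0) (m+1-0) (m+1-1) (m+1-2) (by omega))) (move_swap (m+1-0) (m+1-0) (m+1-1) (m+1-2) (m+1-1) (by omega)))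
        · obtain rfl : d5 = 0 := by omega
          exact Or.inr (codeEquiv_trans (codeEquiv_trans (equiv_of_cnt v w (sv (5*m+1) (m+1-1) (m+1-0)) (sw (5*m+1) (m+1-1) (m+1-0) (m+1-2) (m+1-1))
              (fun k => by rw [cnt_eq_all v w (m+1-1) (m+1-0) (m+1-2) (m+1-1) (m+1-0) hz hN1 hN2 hN3 hN4 hN5 k,
                cnt_std (m+1-1) (m+1-0) (m+1-2) (m+1-1) (m+1-0) (by omega) k])) (move_smul (m+1-1) (m+1-0) (m+1-2) (m+1-1) (m+1-0) (by omega))) (move_add (m+1-1) (m+1-0) (m+1-0) (m+1-2) (m+1-1) (by omega)))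
      · rcases (by omega : d4 = 0) with rfl
        · obtain rfl : d5 = 0 := by omega
          exact Or.inl (codeEquiv_trans (codeEquiv_trans (codeEquiv_trans (codeEquiv_trans (equiv_of_cnt v w (sv (5*m+1) (m+1-1) (m+1-0)) (sw (5*m+1) (m+1-1) (m+1-0) (m+1-3) (m+1-0))
              (fun k => by rw [cnt_eq_all v w (m+1-1) (m+1-0) (m+1-3) (m+1-0) (m+1-0) hz hN1 hN2 hN3 hN4 hN5 k,
                cnt_std (m+1-1) (m+1-0) (m+1-3) (m+1-0) (m+1-0) (by omega) k])) (move_smul (m+1-1) (m+1-0) (m+1-3) (m+1-0) (m+1-0) (by omega))) (move_smul (m+1-1) (m+1-0) (m+1-0) (m+1-3) (m+1-0) (by omega))) (move_add (m+1-1) (m+1-0) (m+1-0) (m+1-0) (m+1-3) (by omega))) (move_smul (m+1-0) (m+1-0) (m+1-1) (m+1-3) (m+1-0) (by omega)))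
    · rcases (by omega : d3 = 0 ∨ d3 = 1 ∨ d3 = 2) with rfl|rfl|rfl
      · rcases (by omega : d4 = 0 ∨ d4 = 1 ∨ d4 = 2) with rfl|rfl|rfl
        · obtain rfl : d5 = 2 := by omega
          exact Or.inr (codeEquiv_trans (codeEquiv_trans (codeEquiv_trans (codeEquiv_trans (equiv_of_cnt v w (sv (5*m+1) (m+1-1) (m+1-1)) (sw (5*m+1) (m+1-1) (m+1-1) (m+1-0) (m+1-0))
              (fun k => by rw [cnt_eq_all v w (m+1-1) (m+1-1) (m+1-0) (m+1-0) (m+1-2) hz hN1 hN2 hN3 hN4 hN5 k,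
                cnt_std (m+1-1) (m+1-1) (m+1-0) (m+1-0) (m+1-2) (by omega) k])) (move_add (m+1-1) (m+1-1) (m+1-0) (m+1-0) (m+1-2) (by omega))) (move_smul (m+1-0) (m+1-1) (m+1-1) (m+1-2) (m+1-0) (by omega))) (move_swap (m+1-0) (m+1-1) (m+1-0) (m+1-1) (m+1-2) (by omega))) (move_add (m+1-1) (m+1-0) (m+1-0) (m+1-2) (m+1-1) (by omega)))
        · obtain rfl : d5 = 1 := by omega
          exfalso
          apply hdet
          rw [g11_d v w m 1 0 1 1 hN1 hN3 hN4 hN5 hd1a hd3a hd4a hd5a,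
            g22_d v w m 1 0 1 1 hN2 hN3 hN4 hN5 hd2a hd3a hd4a hd5a,
            g12_d v w m 0 1 1 hN3 hN4 hN5 hd3a hd4a hd5a,
            g21_d v w m 0 1 1 hN3 hN4 hN5 hd3a hd4a hd5a]
          push_cast
          linear_combination ((-1)*ω4^2 + (-1)*ω4 + (1)) * ω4_spec + ((4)) * F4.two_eq_zero
        · obtain rfl : d5 = 0 := by omega
          exact Or.inr (codeEquiv_trans (codeEquiv_trans (codeEquiv_trans (codeEquiv_trans (codeEquiv_trans (equiv_of_cnt v w (sv (5*m+1) (m+1-1) (m+1-1)) (sw (5*m+1) (m+1-1) (m+1-1) (m+1-0) (m+1-2))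
              (fun k => by rw [cnt_eq_all v w (m+1-1) (m+1-1) (m+1-0) (m+1-2) (m+1-0) hz hN1 hN2 hN3 hN4 hN5 k,
                cnt_std (m+1-1) (m+1-1) (m+1-0) (m+1-2) (m+1-0) (by omega) k])) (move_swap (m+1-1) (m+1-1) (m+1-0) (m+1-2) (m+1-0) (by omega))) (move_add (m+1-1) (m+1-1) (m+1-0) (m+1-0) (m+1-2) (by omega))) (move_smul (m+1-0) (m+1-1) (m+1-1) (m+1-2) (m+1-0) (by omega))) (move_swap (m+1-0) (m+1-1) (m+1-0) (m+1-1) (m+1-2) (by omega))) (move_add (m+1-1) (m+1-0) (m+1-0) (m+1-2) (m+1-1) (by omega)))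
      · rcases (by omega : d4 = 0 ∨ d4 = 1) with rfl|rfl
        · obtain rfl : d5 = 1 := by omega
          exfalso
          apply hdet
          rw [g11_d v w m 1 1 0 1 hN1 hN3 hN4 hN5 hd1a hd3a hd4a hd5a,
            g22_d v w m 1 1 0 1 hN2 hN3 hN4 hN5 hd2a hd3a hd4a hd5a,
            g12_d v w m 1 0 1 hN3 hN4 hN5 hd3a hd4a hd5a,
            g21_d v w m 1 0 1 hN3 hN4 hN5 hd3a hd4a hd5a]
          push_cast
          linear_combination ((-1)*ω4) * ω4_spec + ((4)) * F4.two_eq_zero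
        · obtain rfl : d5 = 0 := by omega
          exfalso
          apply hdet
          rw [g11_d v w m 1 1 1 0 hN1 hN3 hN4 hN5 hd1a hd3a hd4a hd5a,
            g22_d v w m 1 1 1 0 hN2 hN3 hN4 hN5 hd2a hd3a hd4a hd5a,
            g12_d v w m 1 1 0 hN3 hN4 hN5 hd3a hd4a hd5a,
            g21_d v w m 1 1 0 hN3 hN4 hN5 hd3a hd4a hd5a]
          push_cast
          linear_combination ((-1)*ω4) * ω4_spec + ((4)) * F4.two_eq_zero
      · rcases (by omega : d4 = 0) with rfl
        · obtain rfl : d5 = 0 := by omega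
          exact Or.inr (codeEquiv_trans (codeEquiv_trans (codeEquiv_trans (codeEquiv_trans (codeEquiv_trans (codeEquiv_trans (equiv_of_cnt v w (sv (5*m+1) (m+1-1) (m+1-1)) (sw (5*m+1) (m+1-1) (m+1-1) (m+1-2) (m+1-0))
              (fun k => by rw [cnt_eq_all v w (m+1-1) (m+1-1) (m+1-2) (m+1-0) (m+1-0) hz hN1 hN2 hN3 hN4 hN5 k,
                cnt_std (m+1-1) (m+1-1) (m+1-2) (m+1-0) (m+1-0) (by omega) k])) (move_smul (m+1-1) (m+1-1) (m+1-2) (m+1-0) (m+1-0) (by omega))) (move_swap (m+1-1) (m+1-1) (m+1-0) (m+1-2) (m+1-0) (by omega))) (move_add (m+1-1) (m+1-1) (m+1-0) (m+1-0) (m+1-2) (by omega))) (move_smul (m+1-0) (m+1-1) (m+1-1) (m+1-2) (m+1-0) (by omega))) (move_swap (m+1-0) (m+1-1) (m+1-0) (m+1-1) (m+1-2) (by omega))) (move_add (m+1-1) (m+1-0) (m+1-0) (m+1-2) (m+1-1) (by omega)))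
    · rcases (by omega : d3 = 0 ∨ d3 = 1) with rfl|rfl
      · rcases (by omega : d4 = 0 ∨ d4 = 1) with rfl|rfl
        · obtain rfl : d5 = 1 := by omega
          exact Or.inr (codeEquiv_trans (codeEquiv_trans (codeEquiv_trans (codeEquiv_trans (codeEquiv_trans (equiv_of_cnt v w (sv (5*m+1) (m+1-1) (m+1-2)) (sw (5*m+1) (m+1-1) (m+1-2) (m+1-0) (m+1-0))
              (fun k => by rw [cnt_eq_all v w (m+1-1) (m+1-2) (m+1-0) (m+1-0) (m+1-1) hz hN1 hN2 hN3 hN4 hN5 k,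
                cnt_std (m+1-1) (m+1-2) (m+1-0) (m+1-0) (m+1-1) (by omega) k])) (move_swap (m+1-1) (m+1-2) (m+1-0) (m+1-0) (m+1-1) (by omega))) (move_add (m+1-2) (m+1-1) (m+1-0) (m+1-1) (m+1-0) (by omega))) (move_swap (m+1-0) (m+1-1) (m+1-2) (m+1-0) (m+1-1) (by omega))) (move_smul (m+1-1) (m+1-0) (m+1-2) (m+1-1) (m+1-0) (by omega))) (move_add (m+1-1) (m+1-0) (m+1-0) (m+1-2) (m+1-1) (by omega)))
        · obtain rfl : d5 = 0 := by omega
          exact Or.inr (codeEquiv_trans (codeEquiv_trans (codeEquiv_trans (codeEquiv_trans (codeEquiv_trans (codeEquiv_trans (equiv_of_cnt v w (sv (5*m+1) (m+1-1) (m+1-2)) (sw (5*m+1) (m+1-1) (m+1-2) (m+1-0) (m+1-1))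
              (fun k => by rw [cnt_eq_all v w (m+1-1) (m+1-2) (m+1-0) (m+1-1) (m+1-0) hz hN1 hN2 hN3 hN4 hN5 k,
                cnt_std (m+1-1) (m+1-2) (m+1-0) (m+1-1) (m+1-0) (by omega) k])) (move_swap (m+1-1) (m+1-2) (m+1-0) (m+1-1) (m+1-0) (by omega))) (move_add (m+1-2) (m+1-1) (m+1-0) (m+1-0) (m+1-1) (by omega))) (move_smul (m+1-0) (m+1-1) (m+1-2) (m+1-1) (m+1-0) (by omega))) (move_swap (m+1-0) (m+1-1) (m+1-0) (m+1-2) (m+1-1) (by omega))) (move_add (m+1-1) (m+1-0) (m+1-0) (m+1-1) (m+1-2) (by omega))) (move_swap (m+1-0) (m+1-0) (m+1-1) (m+1-2) (m+1-1) (by omega)))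
      · rcases (by omega : d4 = 0) with rfl
        · obtain rfl : d5 = 0 := by omega
          exact Or.inr (codeEquiv_trans (codeEquiv_trans (codeEquiv_trans (codeEquiv_trans (codeEquiv_trans (codeEquiv_trans (equiv_of_cnt v w (sv (5*m+1) (m+1-1) (m+1-2)) (sw (5*m+1) (m+1-1) (m+1-2) (m+1-1) (m+1-0))
              (fun k => by rw [cnt_eq_all v w (m+1-1) (m+1-2) (m+1-1) (m+1-0) (m+1-0) hz hN1 hN2 hN3 hN4 hN5 k,
                cnt_std (m+1-1) (m+1-2) (m+1-1) (m+1-0) (m+1-0) (by omega) k])) (move_swap (m+1-1) (m+1-2) (m+1-1) (m+1-0) (m+1-0) (by omega))) (move_smul (m+1-2) (m+1-1) (m+1-1) (m+1-0) (m+1-0) (by omega))) (move_add (m+1-2) (m+1-1) (m+1-0) (m+1-1) (m+1-0) (by omega))) (move_swap (m+1-0) (m+1-1) (m+1-2) (m+1-0) (m+1-1) (by omega))) (move_smul (m+1-1) (m+1-0) (m+1-2) (m+1-1) (m+1-0) (by omega))) (move_add (m+1-1) (m+1-0) (m+1-0) (m+1-2) (m+1-1) (by omega)))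
    · rcases (by omega : d3 = 0) with rfl
      · rcases (by omega : d4 = 0) with rfl
        · obtain rfl : d5 = 0 := by omega
          exact Or.inl (codeEquiv_trans (codeEquiv_trans (codeEquiv_trans (codeEquiv_trans (codeEquiv_trans (codeEquiv_trans (equiv_of_cnt v w (sv (5*m+1) (m+1-1) (m+1-3)) (sw (5*m+1) (m+1-1) (m+1-3) (m+1-0) (m+1-0))
              (fun k => by rw [cnt_eq_all v w (m+1-1) (m+1-3) (m+1-0) (m+1-0) (m+1-0) hz hN1 hN2 hN3 hN4 hN5 k,
                cnt_std (m+1-1) (m+1-3) (m+1-0) (m+1-0) (m+1-0) (by omega) k])) (move_swap (m+1-1) (m+1-3) (m+1-0) (m+1-0) (m+1-0) (by omega))) (move_add (m+1-3) (m+1-1) (m+1-0) (m+1-0) (m+1-0) (by omega))) (move_smul (m+1-0) (m+1-1) (m+1-3) (m+1-0) (m+1-0) (by omega))) (move_swap (m+1-0) (m+1-1) (m+1-0) (m+1-3) (m+1-0) (by omega))) (move_add (m+1-1) (m+1-0) (m+1-0) (m+1-0) (m+1-3) (by omega))) (move_smul (m+1-0) (m+1-0) (m+1-1) (m+1-3)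 (m+1-0) (by omega)))
  · rcases (by omega : d2 = 0 ∨ d2 = 1 ∨ d2 = 2) with rfl|rfl|rfl
    · rcases (by omega : d3 = 0 ∨ d3 = 1 ∨ d3 = 2) with rfl|rfl|rfl
      · rcases (by omega : d4 = 0 ∨ d4 = 1 ∨ d4 = 2) with rfl|rfl|rfl
        · obtain rfl : d5 = 2 := by omega
          exact absurd (det_same_parity v w m 2 0 0 0 2 hN1 hN2 hN3 hN4 hN5
            hd1a hd2a hd3a hd4a hd5a (by omega)) hdet
        · obtain rfl : d5 = 1 := by omega
          exact Or.inr (codeEquiv_trans (codeEquiv_trans (codeEquiv_trans (equiv_of_cnt v w (sv (5*m+1) (m+1-2) (m+1-0)) (sw (5*m+1) (m+1-2) (m+1-0) (m+1-0) (m+1-1))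
              (fun k => by rw [cnt_eq_all v w (m+1-2) (m+1-0) (m+1-0) (m+1-1) (m+1-1) hz hN1 hN2 hN3 hN4 hN5 k,
                cnt_std (m+1-2) (m+1-0) (m+1-0) (m+1-1) (m+1-1) (by omega) k])) (move_add (m+1-2) (m+1-0) (m+1-0) (m+1-1) (m+1-1) (by omega))) (move_smul (m+1-0) (m+1-0) (m+1-2) (m+1-1) (m+1-1) (by omega))) (move_swap (m+1-0) (m+1-0) (m+1-1) (m+1-2) (m+1-1) (by omega)))
        · obtain rfl : d5 = 0 := by omega
          exact absurd (det_same_parity v w m 2 0 0 2 0 hN1 hN2 hN3 hN4 hN5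
            hd1a hd2a hd3a hd4a hd5a (by omega)) hdet
      · rcases (by omega : d4 = 0 ∨ d4 = 1) with rfl|rfl
        · obtain rfl : d5 = 1 := by omega
          exact Or.inr (codeEquiv_trans (codeEquiv_trans (codeEquiv_trans (equiv_of_cnt v w (sv (5*m+1) (m+1-2) (m+1-0)) (sw (5*m+1) (m+1-2) (m+1-0) (m+1-1) (m+1-0))
              (fun k => by rw [cnt_eq_all v w (m+1-2) (m+1-0) (m+1-1) (m+1-0) (m+1-1) hz hN1 hN2 hN3 hN4 hN5 k,
                cnt_std (m+1-2) (m+1-0) (m+1-1) (m+1-0) (m+1-1) (by omega) k])) (move_add (m+1-2) (m+1-0) (m+1-1) (m+1-0) (m+1-1) (by omega))) (move_smul (m+1-1) (m+1-0) (m+1-2) (m+1-1) (m+1-0) (by omega))) (move_add (m+1-1) (m+1-0) (m+1-0) (m+1-2) (m+1-1) (by omega)))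
        · obtain rfl : d5 = 0 := by omega
          exact Or.inr (codeEquiv_trans (codeEquiv_trans (codeEquiv_trans (codeEquiv_trans (equiv_of_cnt v w (sv (5*m+1) (m+1-2) (m+1-0)) (sw (5*m+1) (m+1-2) (m+1-0) (m+1-1) (m+1-1))
              (fun k => by rw [cnt_eq_all v w (m+1-2) (m+1-0) (m+1-1) (m+1-1) (m+1-0) hz hN1 hN2 hN3 hN4 hN5 k,
                cnt_std (m+1-2) (m+1-0) (m+1-1) (m+1-1) (m+1-0) (by omega) k])) (move_smul (m+1-2) (m+1-0) (m+1-1) (m+1-1) (m+1-0) (by omega))) (move_add (m+1-2) (m+1-0) (m+1-0) (m+1-1) (m+1-1) (by omega))) (move_smul (m+1-0) (m+1-0) (m+1-2) (m+1-1) (m+1-1) (by omega))) (move_swap (m+1-0) (m+1-0) (m+1-1) (m+1-2) (m+1-1) (by omega)))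
      · rcases (by omega : d4 = 0) with rfl
        · obtain rfl : d5 = 0 := by omega
          exact absurd (det_same_parity v w m 2 0 2 0 0 hN1 hN2 hN3 hN4 hN5
            hd1a hd2a hd3a hd4a hd5a (by omega)) hdet
    · rcases (by omega : d3 = 0 ∨ d3 = 1) with rfl|rfl
      · rcases (by omega : d4 = 0 ∨ d4 = 1) with rfl|rfl
        · obtain rfl : d5 = 1 := by omega
          exact Or.inr (codeEquiv_trans (codeEquiv_trans (codeEquiv_trans (codeEquiv_trans (codeEquiv_trans (equiv_of_cnt v w (sv (5*m+1) (m+1-2) (m+1-1)) (sw (5*m+1) (m+1-2) (m+1-1) (m+1-0) (m+1-0))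
              (fun k => by rw [cnt_eq_all v w (m+1-2) (m+1-1) (m+1-0) (m+1-0) (m+1-1) hz hN1 hN2 hN3 hN4 hN5 k,
                cnt_std (m+1-2) (m+1-1) (m+1-0) (m+1-0) (m+1-1) (by omega) k])) (move_add (m+1-2) (m+1-1) (m+1-0) (m+1-0) (m+1-1) (by omega))) (move_smul (m+1-0) (m+1-1) (m+1-2) (m+1-1) (m+1-0) (by omega))) (move_swap (m+1-0) (m+1-1) (m+1-0) (m+1-2) (m+1-1) (by omega))) (move_add (m+1-1) (m+1-0) (m+1-0) (m+1-1) (m+1-2) (by omega))) (move_swap (m+1-0) (m+1-0) (m+1-1) (m+1-2) (m+1-1) (by omega)))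
        · obtain rfl : d5 = 0 := by omega
          exact Or.inr (codeEquiv_trans (codeEquiv_trans (codeEquiv_trans (codeEquiv_trans (equiv_of_cnt v w (sv (5*m+1) (m+1-2) (m+1-1)) (sw (5*m+1) (m+1-2) (m+1-1) (m+1-0) (m+1-1))
              (fun k => by rw [cnt_eq_all v w (m+1-2) (m+1-1) (m+1-0) (m+1-1) (m+1-0) hz hN1 hN2 hN3 hN4 hN5 k,
                cnt_std (m+1-2) (m+1-1) (m+1-0) (m+1-1) (m+1-0) (by omega) k])) (move_add (m+1-2) (m+1-1) (m+1-0) (m+1-1) (m+1-0) (by omega))) (move_swap (m+1-0) (m+1-1) (m+1-2) (m+1-0) (m+1-1) (by omega))) (move_smul (m+1-1) (m+1-0) (m+1-2) (m+1-1) (m+1-0) (by omega))) (move_add (m+1-1) (m+1-0) (m+1-0) (m+1-2) (m+1-1) (by omega)))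
      · rcases (by omega : d4 = 0) with rfl
        · obtain rfl : d5 = 0 := by omega
          exact Or.inr (codeEquiv_trans (codeEquiv_trans (codeEquiv_trans (codeEquiv_trans (codeEquiv_trans (equiv_of_cnt v w (sv (5*m+1) (m+1-2) (m+1-1)) (sw (5*m+1) (m+1-2) (m+1-1) (m+1-1) (m+1-0))
              (fun k => by rw [cnt_eq_all v w (m+1-2) (m+1-1) (m+1-1) (m+1-0) (m+1-0) hz hN1 hN2 hN3 hN4 hN5 k,
                cnt_std (m+1-2) (m+1-1) (m+1-1) (m+1-0) (m+1-0) (by omega) k])) (move_smul (m+1-2) (m+1-1) (m+1-1) (m+1-0) (m+1-0) (by omega))) (move_add (m+1-2) (m+1-1) (m+1-0) (m+1-1) (m+1-0) (by omega))) (move_swap (m+1-0) (m+1-1) (m+1-2) (m+1-0) (m+1-1) (by omega))) (move_smul (m+1-1) (m+1-0) (m+1-2) (m+1-1) (m+1-0) (by omega))) (move_add (m+1-1) (m+1-0) (m+1-0) (m+1-2) (m+1-1) (by omega)))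
    · rcases (by omega : d3 = 0) with rfl
      · rcases (by omega : d4 = 0) with rfl
        · obtain rfl : d5 = 0 := by omega
          exact absurd (det_same_parity v w m 2 2 0 0 0 hN1 hN2 hN3 hN4 hN5
            hd1a hd2a hd3a hd4a hd5a (by omega)) hdet
  · rcases (by omega : d2 = 0 ∨ d2 = 1) with rfl|rfl
    · rcases (by omega : d3 = 0 ∨ d3 = 1) with rfl|rfl
      · rcases (by omega : d4 = 0 ∨ d4 = 1) with rfl|rfl
        · obtain rfl : d5 = 1 := by omega
          exact Or.inl (codeEquiv_trans (codeEquiv_trans (codeEquiv_trans (equiv_of_cnt v w (sv (5*m+1) (m+1-3) (m+1-0)) (sw (5*m+1) (m+1-3) (m+1-0) (m+1-0) (m+1-0))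
              (fun k => by rw [cnt_eq_all v w (m+1-3) (m+1-0) (m+1-0) (m+1-0) (m+1-1) hz hN1 hN2 hN3 hN4 hN5 k,
                cnt_std (m+1-3) (m+1-0) (m+1-0) (m+1-0) (m+1-1) (by omega) k])) (move_add (m+1-3) (m+1-0) (m+1-0) (m+1-0) (m+1-1) (by omega))) (move_smul (m+1-0) (m+1-0) (m+1-3) (m+1-1) (m+1-0) (by omega))) (move_swap (m+1-0) (m+1-0) (m+1-0) (m+1-3) (m+1-1) (by omega)))
        · obtain rfl : d5 = 0 := by omega
          exact Or.inl (codeEquiv_trans (codeEquiv_trans (codeEquiv_trans (equiv_of_cnt v w (sv (5*m+1) (m+1-3) (m+1-0)) (sw (5*m+1) (m+1-3) (m+1-0) (m+1-0) (m+1-1))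
              (fun k => by rw [cnt_eq_all v w (m+1-3) (m+1-0) (m+1-0) (m+1-1) (m+1-0) hz hN1 hN2 hN3 hN4 hN5 k,
                cnt_std (m+1-3) (m+1-0) (m+1-0) (m+1-1) (m+1-0) (by omega) k])) (move_add (m+1-3) (m+1-0) (m+1-0) (m+1-1) (m+1-0) (by omega))) (move_smul (m+1-0) (m+1-0) (m+1-3) (m+1-0) (m+1-1) (by omega))) (move_smul (m+1-0) (m+1-0) (m+1-1) (m+1-3) (m+1-0) (by omega)))
      · rcases (by omega : d4 = 0) with rfl
        · obtain rfl : d5 = 0 := by omega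
          exact Or.inl (codeEquiv_trans (codeEquiv_trans (codeEquiv_trans (codeEquiv_trans (equiv_of_cnt v w (sv (5*m+1) (m+1-3) (m+1-0)) (sw (5*m+1) (m+1-3) (m+1-0) (m+1-1) (m+1-0))
              (fun k => by rw [cnt_eq_all v w (m+1-3) (m+1-0) (m+1-1) (m+1-0) (m+1-0) hz hN1 hN2 hN3 hN4 hN5 k,
                cnt_std (m+1-3) (m+1-0) (m+1-1) (m+1-0) (m+1-0) (by omega) k])) (move_smul (m+1-3) (m+1-0) (m+1-1) (m+1-0) (m+1-0) (by omega))) (move_add (m+1-3) (m+1-0) (m+1-0) (m+1-1) (m+1-0) (by omega))) (move_smul (m+1-0) (m+1-0) (m+1-3) (m+1-0) (m+1-1) (by omega))) (move_smul (m+1-0) (m+1-0) (m+1-1) (m+1-3) (m+1-0) (by omega)))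
    · rcases (by omega : d3 = 0) with rfl
      · rcases (by omega : d4 = 0) with rfl
        · obtain rfl : d5 = 0 := by omega
          exact Or.inl (codeEquiv_trans (codeEquiv_trans (codeEquiv_trans (codeEquiv_trans (codeEquiv_trans (equiv_of_cnt v w (sv (5*m+1) (m+1-3) (m+1-1)) (sw (5*m+1) (m+1-3) (m+1-1) (m+1-0) (m+1-0))
              (fun k => by rw [cnt_eq_all v w (m+1-3) (m+1-1) (m+1-0) (m+1-0) (m+1-0) hz hN1 hN2 hN3 hN4 hN5 k,
                cnt_std (m+1-3) (m+1-1) (m+1-0) (m+1-0) (m+1-0) (by omega) k])) (move_add (m+1-3) (m+1-1) (m+1-0) (m+1-0) (m+1-0) (by omega))) (move_smul (m+1-0) (m+1-1) (m+1-3) (m+1-0) (m+1-0) (by omega))) (move_swap (m+1-0) (m+1-1) (m+1-0) (m+1-3) (m+1-0) (by omega))) (move_add (m+1-1) (m+1-0) (m+1-0) (m+1-0) (m+1-3) (by omega))) (move_smul (m+1-0) (m+1-0) (m+1-1) (m+1-3) (m+1-0) (by omega)))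
  · rcases (by omega : d2 = 0) with rfl
    · rcases (by omega : d3 = 0) with rfl
      · rcases (by omega : d4 = 0) with rfl
        · obtain rfl : d5 = 0 := by omega
          exact absurd (det_same_parity v w m 4 0 0 0 0 hN1 hN2 hN3 hN4 hN5
            hd1a hd2a hd3a hd4a hd5a (by omega)) hdet

end Aux


/-- for `m ≥ 2` there are exactly two equivalence classes of optimal
Hermitian LCD `[5m + 1, 2, 4m]` codes. -/
theorem stmt10 (m : ℕ) (hm : 2 ≤ m) :
    ∃ C₁ C₂ : Submodule F4 (Fin (5 * m + 1) → F4),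
      IsOptimalLCD (5 * m + 1) (4 * m) C₁ ∧ IsOptimalLCD (5 * m + 1) (4 * m) C₂ ∧
      ¬ codeEquiv C₁ C₂ ∧
      ∀ C : Submodule F4 (Fin (5 * m + 1) → F4), IsOptimalLCD (5 * m + 1) (4 * m) C →
        (codeEquiv C C₁ ∨ codeEquiv C C₂) := by
  refine ⟨Aux.codeA m, Aux.codeB m, Aux.optA m hm, Aux.optB m hm, Aux.notequivAB m hm, ?_⟩
  intro C hC
  exact Aux.classify m hm C hC
end

section
/- For every integer m ≥ 0, there exists an optimal Hermitian LCD quaternary [5m+2, 2, 4m+1] code, and any two optimal Hermitian LCD [5m+2, 2, 4m+1] codes are equivalent. -/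
open Finset

namespace Stmt11

open scoped Classical

/-! ### Field facts -/

lemma two_zero : (2 : F4) = 0 := by exact_mod_cast CharP.cast_eq_zero F4 2
lemma add_self_zero (x : F4) : x + x = 0 := by linear_combination x * two_zero
lemma pow4 (x : F4) : x ^ 4 = x := by
  have h := FiniteField.pow_card x
  rwa [F4.card_eq] at h
lemma o_sq : ω4 ^ 2 = ω4 + 1 := by linear_combination ω4_spec - (ω4+1) * two_zero
lemma o_cube : ω4 ^ 3 = 1 := by linear_combination (ω4 - 1) * ω4_spec
lemma o_sum : 1 + ω4 + ω4 ^ 2 = 0 := by linear_combination ω4_spec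
lemma o_sum2 : ω4 ^ 2 + ω4 = 1 := by linear_combination ω4_spec - two_zero
lemma o_ne0 : ω4 ≠ 0 := fun h => by
  have h2 := ω4_spec; rw [h] at h2; simp at h2
lemma o_ne1 : ω4 ≠ 1 := fun h => by
  have h2 := ω4_spec; rw [h] at h2
  have h1 : (1:F4) = 0 := by linear_combination h2 - two_zero
  simp at h1
lemma o1_ne0 : ω4 + 1 ≠ 0 := fun h => o_ne1 (by linear_combination h - two_zero)
lemma o2_ne0 : ω4 ^ 2 ≠ 0 := pow_ne_zero 2 o_ne0
lemma o2_ne1 : ω4 ^ 2 ≠ 1 := fun h => o_ne0 (by linear_combination h - o_sq)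
lemma o_ne_o2 : ω4 ≠ ω4 ^ 2 := fun h => by
  have : (1:F4) = 0 := by linear_combination ω4*two_zero - o_sum2 - h
  simp at this
lemma cube_one (x : F4) (hx : x ≠ 0) : x ^ 3 = 1 := by
  have h4 := pow4 x
  have : x * (x ^ 3 - 1) = 0 := by linear_combination h4
  rcases mul_eq_zero.mp this with h | h
  · exact absurd h hx
  · linear_combination h
lemma F4cases (x : F4) : x = 0 ∨ x = 1 ∨ x = ω4 ∨ x = ω4 ^ 2 := by
  by_cases h0 : x = 0
  · exact Or.inl h0
  by_cases h1 : x = 1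
  · exact Or.inr (Or.inl h1)
  right; right
  have h4 := pow4 x
  have hmul : x * (x - 1) * ((x - ω4) * (x - ω4 ^ 2)) = 0 := by
    have hexp : (x - ω4) * (x - ω4 ^ 2) = x ^ 2 + x + 1 := by
      linear_combination (-x) * o_sq + o_cube - x*(ω4+1)*two_zero
    rw [hexp]
    have : x * (x - 1) * (x ^ 2 + x + 1) = x ^ 4 - x := by ring
    rw [this, h4, sub_self]
  rcases mul_eq_zero.mp hmul with h | h
  · rcases mul_eq_zero.mp h with h | h
    · exact absurd h h0
    · exact absurd (sub_eq_zero.mp h) h1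
  · rcases mul_eq_zero.mp h with h | h
    · exact Or.inl (sub_eq_zero.mp h)
    · exact Or.inr (sub_eq_zero.mp h)
lemma add_eq_zero_iff' (a b : F4) : a + b = 0 ↔ a = b :=
  ⟨fun h => by linear_combination h - b*two_zero, fun h => by rw [h]; exact add_self_zero b⟩
lemma natCast_even {k : ℕ} (h : k % 2 = 0) : (k : F4) = 0 := by
  obtain ⟨t, rfl⟩ : ∃ t, k = 2*t := ⟨k/2, by omega⟩
  push_cast; linear_combination (t:F4) * two_zero
lemma natCast_odd {k : ℕ} (h : k % 2 = 1) : (k : F4) = 1 := by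
  obtain ⟨t, rfl⟩ : ∃ t, k = 2*t+1 := ⟨k/2, by omega⟩
  push_cast; linear_combination (t:F4) * two_zero

lemma solve22 (a b c d x y : F4) (hdet : a*d + b*c ≠ 0)
    (h1 : x*a + y*b = 0) (h2 : x*c + y*d = 0) : x = 0 ∧ y = 0 := by
  have hx : x * (a*d + b*c) = 0 := by
    linear_combination d*h1 + b*h2 - y*b*d*two_zero
  have hx0 : x = 0 := by
    rcases mul_eq_zero.mp hx with h | h
    · exact h
    · exact absurd h hdet
  subst hx0
  simp only [zero_mul, zero_add] at h1 h2
  rcases mul_eq_zero.mp h1 with h | hb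
  · exact ⟨rfl, h⟩
  rcases mul_eq_zero.mp h2 with h | hd
  · exact ⟨rfl, h⟩
  exact absurd (by rw [hb, hd]; ring) hdet

/-! ### The five projective points -/

noncomputable def Xv : Fin 5 → F4 × F4 := ![(1,0),(0,1),(1,1),(1,ω4),(1,ω4^2)]
def dIdx : Fin 5 → Fin 5 := ![1,0,2,4,3]
noncomputable def pr (x c : F4 × F4) : F4 := x.1 * c.1 + x.2 * c.2

lemma dIdx_invol (j : Fin 5) : dIdx (dIdx j) = j := by fin_cases j <;> rfl

lemma e11 : (1:F4) + 1 = 0 := by linear_combination two_zero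
lemma h1ω : 1 + ω4 ≠ 0 := fun h => o1_ne0 (by linear_combination h)
lemma h1ω2 : 1 + ω4^2 ≠ 0 := fun h => o_ne0 (by linear_combination h - o_sq - two_zero)
lemma hωω : 1 + ω4*ω4 ≠ 0 := fun h => o_ne0 (by linear_combination h - o_sq - two_zero)
lemma h44 : 1 + ω4^2*ω4^2 ≠ 0 := fun h => o1_ne0 (by linear_combination h - pow4 ω4)
lemma hcube : 1 + ω4*ω4^2 = 0 := by linear_combination o_cube + two_zero
lemma hcube' : 1 + ω4^2*ω4 = 0 := by linear_combination o_cube + two_zero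

lemma pr_table (j k : Fin 5) : pr (Xv j) (Xv k) = 0 ↔ k = dIdx j := by
  fin_cases j <;> fin_cases k <;>
    simp [pr, Xv, dIdx, Fin.ext_iff, o_ne0, o2_ne0, h1ω, h1ω2, hωω, h44, hcube, hcube', e11] <;>
    decide

lemma pr_table' (j k : Fin 5) : pr (Xv j) (Xv k) = 0 ↔ j = dIdx k := by
  rw [pr_table]
  constructor
  · intro h; rw [h, dIdx_invol]
  · intro h; rw [h, dIdx_invol]

lemma Xv_ne0 (j : Fin 5) : Xv j ≠ 0 := by
  fin_cases j <;> simp [Xv, Prod.ext_iff]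

lemma Xv_det (j k : Fin 5) (h : j ≠ k) :
    (Xv j).1 * (Xv k).2 + (Xv j).2 * (Xv k).1 ≠ 0 := by
  have hω2ω : ω4^2 + ω4 ≠ 0 := by rw [o_sum2]; exact one_ne_zero
  have hωω2 : ω4 + ω4^2 ≠ 0 := by intro hh; exact hω2ω (by linear_combination hh)
  fin_cases j <;> fin_cases k <;>
    simp_all [Xv, Fin.ext_iff, o_ne0, o2_ne0, h1ω, h1ω2] <;>
    first
    | exact fun hh => o1_ne0 (by linear_combination hh)
    | exact fun hh => o_ne0 (by linear_combination hh - o_sq - two_zero)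
    | exact fun hh => one_ne_zero (α := F4) (by linear_combination hh - o_sum2)

/-- decomposition of a nonzero vector as scalar times a projective point -/
lemma decomp (c : F4 × F4) (hc : c ≠ 0) :
    ∃ (l : F4) (k : Fin 5), l ≠ 0 ∧ c.1 = l * (Xv k).1 ∧ c.2 = l * (Xv k).2 := by
  by_cases h1 : c.1 = 0
  · have h2 : c.2 ≠ 0 := fun h => hc (Prod.ext h1 h)
    exact ⟨c.2, 1, h2, by simp [Xv, h1], by simp [Xv]⟩
  · have key : c.2 = (c.2 * c.1⁻¹) * c.1 := by field_simp
    rcases F4cases (c.2 * c.1⁻¹) with h | h | h | h <;> rw [h] at key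
    · exact ⟨c.1, 0, h1, by simp [Xv], by simp [Xv]; linear_combination key⟩
    · exact ⟨c.1, 2, h1, by simp [Xv], by simp [Xv]; linear_combination key⟩
    · exact ⟨c.1, 3, h1, by simp [Xv], by simp [Xv]; linear_combination key⟩
    · exact ⟨c.1, 4, h1, by simp [Xv], by simp [Xv]; linear_combination key⟩

end Stmt11
namespace Stmt11

open scoped Classical
open Finset

variable {n : ℕ}

/-! ### Counting -/

noncomputable def Zc (g1 g2 : Fin n → F4) (x : F4 × F4) : ℕ :=
  (Finset.univ.filter fun i => pr x (g1 i, g2 i) = 0).card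

noncomputable def N0 (g1 g2 : Fin n → F4) : ℕ :=
  (Finset.univ.filter fun i => (g1 i, g2 i) = (0 : F4 × F4)).card

lemma Zc_add_wt (g1 g2 : Fin n → F4) (x : F4 × F4) :
    Zc g1 g2 x + wt (x.1 • g1 + x.2 • g2) = n := by
  have key : (Finset.univ.filter fun i => (x.1 • g1 + x.2 • g2) i ≠ 0)
      = (Finset.univ.filter fun i => ¬ pr x (g1 i, g2 i) = 0) := by
    apply Finset.filter_congr
    intro i _
    have h : (x.1 • g1 + x.2 • g2) i = pr x (g1 i, g2 i) := by simp [pr]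
    rw [h]
  rw [wt, key, Zc]
  have := Finset.card_filter_add_card_filter_not
    (s := (Finset.univ : Finset (Fin n))) (p := fun i => pr x (g1 i, g2 i) = 0)
  simpa using this

lemma Zc_smul (g1 g2 : Fin n → F4) (x : F4 × F4) (l : F4) (hl : l ≠ 0) :
    Zc g1 g2 (l • x) = Zc g1 g2 x := by
  unfold Zc
  congr 1
  apply Finset.filter_congr
  intro i _
  have : pr (l • x) (g1 i, g2 i) = l * pr x (g1 i, g2 i) := by
    simp only [pr, Prod.smul_fst, Prod.smul_snd, smul_eq_mul]; ring
  rw [this]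
  constructor
  · intro h
    rcases mul_eq_zero.mp h with h | h
    · exact absurd h hl
    · exact h
  · intro h; rw [h, mul_zero]

lemma killers (c : F4 × F4) :
    (Finset.univ.filter fun j : Fin 5 => pr (Xv j) c = 0).card
      = if c = 0 then 5 else 1 := by
  by_cases hc : c = 0
  · rw [if_pos hc]
    have : (Finset.univ.filter fun j : Fin 5 => pr (Xv j) c = 0) = Finset.univ := by
      apply Finset.filter_true_of_mem
      intro j _
      simp [pr, hc]
    rw [this]; rfl
  · rw [if_neg hc]
    obtain ⟨l, k, hl, h1, h2⟩ := decomp c hc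
    have : (Finset.univ.filter fun j : Fin 5 => pr (Xv j) c = 0) = {dIdx k} := by
      ext j
      simp only [Finset.mem_filter, Finset.mem_univ, true_and, Finset.mem_singleton]
      have hpr : pr (Xv j) c = l * pr (Xv j) (Xv k) := by
        simp only [pr, h1, h2]; ring
      rw [hpr]
      constructor
      · intro h
        rcases mul_eq_zero.mp h with h | h
        · exact absurd h hl
        · exact (pr_table' j k).mp h
      · intro h
        rw [(pr_table' j k).mpr h, mul_zero]
    rw [this, Finset.card_singleton]

lemma sum_Zc (g1 g2 : Fin n → F4) :
    ∑ j : Fin 5, Zc g1 g2 (Xv j) = n + 4 * N0 g1 g2 := by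
  have h1 : ∀ j, Zc g1 g2 (Xv j)
      = ∑ i : Fin n, if pr (Xv j) (g1 i, g2 i) = 0 then 1 else 0 := by
    intro j; rw [Zc, Finset.card_filter]
  have h2 : N0 g1 g2 = ∑ i : Fin n, if (g1 i, g2 i) = (0 : F4 × F4) then 1 else 0 := by
    rw [N0, Finset.card_filter]
  simp only [h1]
  rw [Finset.sum_comm]
  have h3 : ∀ i : Fin n,
      (∑ j : Fin 5, if pr (Xv j) (g1 i, g2 i) = 0 then 1 else 0)
        = 1 + 4 * (if (g1 i, g2 i) = (0 : F4 × F4) then 1 else 0) := by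
    intro i
    have := killers (g1 i, g2 i)
    rw [← Finset.card_filter] at *
    rw [this]
    by_cases h : (g1 i, g2 i) = (0 : F4 × F4) <;> simp [h]
  rw [Finset.sum_congr rfl (fun i _ => h3 i), Finset.sum_add_distrib]
  rw [← Finset.mul_sum, ← h2]
  simp [Finset.sum_const, Finset.card_univ]

end Stmt11
namespace Stmt11

open scoped Classical
open Finset

variable {n : ℕ}

/-! ### Generator pairs -/

structure IsGen (C : Submodule F4 (Fin n → F4)) (g1 g2 : Fin n → F4) : Prop where
  indep : ∀ x y : F4, x • g1 + y • g2 = 0 → x = 0 ∧ y = 0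
  spanC : C = Submodule.span F4 {g1, g2}

lemma IsGen.mem1 {C : Submodule F4 (Fin n → F4)} {g1 g2 : Fin n → F4}
    (h : IsGen C g1 g2) : g1 ∈ C := by
  rw [h.spanC]
  exact Submodule.subset_span (by simp)

lemma IsGen.mem2 {C : Submodule F4 (Fin n → F4)} {g1 g2 : Fin n → F4}
    (h : IsGen C g1 g2) : g2 ∈ C := by
  rw [h.spanC]
  exact Submodule.subset_span (by simp)

lemma IsGen.mem_comb {C : Submodule F4 (Fin n → F4)} {g1 g2 : Fin n → F4}
    (h : IsGen C g1 g2) (x y : F4) : x • g1 + y • g2 ∈ C :=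
  Submodule.add_mem _ (Submodule.smul_mem _ _ h.mem1) (Submodule.smul_mem _ _ h.mem2)

lemma IsGen.comb_ne0 {C : Submodule F4 (Fin n → F4)} {g1 g2 : Fin n → F4}
    (h : IsGen C g1 g2) (x : F4 × F4) (hx : x ≠ 0) : x.1 • g1 + x.2 • g2 ≠ 0 := by
  intro hc
  obtain ⟨h1, h2⟩ := h.indep x.1 x.2 hc
  exact hx (Prod.ext h1 h2)

lemma range_fin_two {α : Type*} (f : Fin 2 → α) : Set.range f = {f 0, f 1} := by
  ext v
  simp only [Set.mem_range, Fin.exists_fin_two, Set.mem_insert_iff, Set.mem_singleton_iff]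
  tauto

lemma exists_gen (C : Submodule F4 (Fin n → F4)) (h : Module.finrank F4 C = 2) :
    ∃ g1 g2, IsGen C g1 g2 := by
  have b : Module.Basis (Fin 2) F4 C := Module.finBasisOfFinrankEq F4 C h
  set G : Fin 2 → (Fin n → F4) := fun j => (b j : Fin n → F4) with hGdef
  have hind : LinearIndependent F4 G :=
    b.linearIndependent.map' C.subtype (Submodule.ker_subtype C)
  have hG2 : ![G 0, G 1] = G := by
    funext j; fin_cases j <;> rfl
  have hpair : ∀ s t : F4, s • G 0 + t • G 1 = 0 → s = 0 ∧ t = 0 :=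
    LinearIndependent.pair_iff.mp (by rw [hG2]; exact hind)
  have hspan : C = Submodule.span F4 {G 0, G 1} := by
    have h1 : Submodule.span F4 (Set.range G)
        = Submodule.map C.subtype (Submodule.span F4 (Set.range ⇑b)) := by
      rw [Submodule.map_span, ← Set.range_comp]
      rfl
    rw [← range_fin_two G, h1, b.span_eq, Submodule.map_subtype_top]
  exact ⟨G 0, G 1, ⟨hpair, hspan⟩⟩

lemma IsGen.finrank_two {C : Submodule F4 (Fin n → F4)} {g1 g2 : Fin n → F4}
    (h : IsGen C g1 g2) : Module.finrank F4 C = 2 := by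
  have hind : LinearIndependent F4 ![g1, g2] := by
    rw [LinearIndependent.pair_iff]
    intro s t hst
    exact h.indep s t hst
  have := finrank_span_eq_card hind
  rw [range_fin_two] at this
  simp only [Matrix.cons_val_zero, Matrix.cons_val_one, Matrix.head_cons] at this
  rw [h.spanC]; refine this.trans ?_
  simp

/-! ### Hermitian inner product -/

lemma herm_left (u v w : Fin n → F4) (x y : F4) :
    hermInner (x • u + y • v) w = x * hermInner u w + y * hermInner v w := by
  simp only [hermInner, Pi.add_apply, Pi.smul_apply, smul_eq_mul, Finset.mul_sum,
    ← Finset.sum_add_distrib]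
  apply Finset.sum_congr rfl
  intro i _
  ring

lemma herm_right (u v w : Fin n → F4) (x y : F4) :
    hermInner w (x • u + y • v) = x ^ 2 * hermInner w u + y ^ 2 * hermInner w v := by
  simp only [hermInner, Pi.add_apply, Pi.smul_apply, smul_eq_mul, Finset.mul_sum,
    ← Finset.sum_add_distrib]
  apply Finset.sum_congr rfl
  intro i _
  linear_combination (w i * x * u i * y * v i) * two_zero

lemma mem_hermDual_iff {C : Submodule F4 (Fin n → F4)} {g1 g2 : Fin n → F4}
    (hg : IsGen C g1 g2) (v : Fin n → F4) :
    v ∈ hermDual C ↔ hermInner v g1 = 0 ∧ hermInner v g2 = 0 := by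
  constructor
  · intro h
    exact ⟨h g1 hg.mem1, h g2 hg.mem2⟩
  · rintro ⟨h1, h2⟩ y hy
    rw [hg.spanC, Submodule.mem_span_pair] at hy
    obtain ⟨a, b, rfl⟩ := hy
    rw [herm_right, h1, h2, mul_zero, mul_zero, add_zero]

lemma LCD_iff {C : Submodule F4 (Fin n → F4)} {g1 g2 : Fin n → F4} (hg : IsGen C g1 g2) :
    IsHermLCD C ↔
      hermInner g1 g1 * hermInner g2 g2 + hermInner g1 g2 * hermInner g2 g1 ≠ 0 := by
  set A := hermInner g1 g1
  set B := hermInner g1 g2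
  set Bc := hermInner g2 g1
  set D := hermInner g2 g2
  constructor
  · intro hlcd hdet
    -- construct a nonzero hull vector
    have main : ∃ x : F4 × F4, x ≠ 0 ∧ x.1 * A + x.2 * Bc = 0 ∧ x.1 * B + x.2 * D = 0 := by
      by_cases hA : A ≠ 0
      · refine ⟨(Bc, A), by simp [hA, Prod.ext_iff], ?_, ?_⟩
        · linear_combination Bc*A*two_zero
        · linear_combination hdet
      · push_neg at hA
        by_cases hD : D ≠ 0
        · refine ⟨(D, B), by simp [hD, Prod.ext_iff], ?_, ?_⟩
          · linear_combination hdet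
          · linear_combination D*B*two_zero
        · push_neg at hD
          rw [hA, hD, mul_zero, zero_add] at hdet
          rcases mul_eq_zero.mp hdet with hB | hBc
          · exact ⟨(1, 0), by simp [Prod.ext_iff], by rw [hA]; ring, by rw [hB]; ring⟩
          · exact ⟨(0, 1), by simp [Prod.ext_iff], by rw [hBc]; ring, by rw [hD]; ring⟩
    obtain ⟨x, hx0, e1, e2⟩ := main
    have hvmem : x.1 • g1 + x.2 • g2 ∈ C ⊓ hermDual C := by
      rw [Submodule.mem_inf]
      refine ⟨hg.mem_comb _ _, ?_⟩
      rw [mem_hermDual_iff hg]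
      constructor
      · rw [herm_left]; exact e1
      · rw [herm_left]; exact e2
    have hbot : C ⊓ hermDual C = ⊥ := hlcd
    rw [hbot, Submodule.mem_bot] at hvmem
    exact hg.comb_ne0 x hx0 hvmem
  · intro hdet
    show C ⊓ hermDual C = ⊥
    rw [Submodule.eq_bot_iff]
    intro v hv
    rw [Submodule.mem_inf] at hv
    obtain ⟨hvC, hvD⟩ := hv
    rw [mem_hermDual_iff hg] at hvD
    rw [hg.spanC, Submodule.mem_span_pair] at hvC
    obtain ⟨a, b, rfl⟩ := hvC
    have e1 : a * A + b * Bc = 0 := by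
      rw [← herm_left]; exact hvD.1
    have e2 : a * B + b * D = 0 := by
      rw [← herm_left]; exact hvD.2
    have hdet' : A * D + Bc * B ≠ 0 := fun hcon => hdet (by linear_combination hcon)
    obtain ⟨ha, hb⟩ := solve22 A Bc B D a b hdet' e1 e2
    rw [ha, hb]
    simp

end Stmt11
namespace Stmt11

open scoped Classical
open Finset

variable {n : ℕ}

/-! ### Gram entries in terms of counts -/

lemma point_cube (x : F4) : x * x ^ 2 = 1 - (if x = 0 then (1:F4) else 0) := by
  by_cases h : x = 0
  · rw [if_pos h, h]; ring
  · rw [if_neg h]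
    have := cube_one x h
    linear_combination this

lemma point_mixed (a b : F4) :
    a * b ^ 2 = (if a + b = 0 then (1:F4) else 0)
      + ω4 * (if a + ω4 * b = 0 then (1:F4) else 0)
      + ω4 ^ 2 * (if a + ω4 ^ 2 * b = 0 then (1:F4) else 0) := by
  by_cases hb : b = 0
  · subst hb
    by_cases ha : a = 0
    · rw [ha]
      simp
      first
      | linear_combination o_sum | linear_combination -o_sum
      | linear_combination o_sum2 | linear_combination -o_sum2
    · simp [ha]
  · have hab : a = (a * b⁻¹) * b := by field_simp
    have hcond : ∀ c : F4, (a + c * b = 0) ↔ (a * b⁻¹ = c) := by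
      intro c
      rw [add_eq_zero_iff']
      constructor
      · intro h
        field_simp
        linear_combination h
      · intro h
        rw [← h] at *
        field_simp
    have hb3 : b ^ 3 = 1 := cube_one b hb
    have hLHS : a * b ^ 2 = a * b⁻¹ := by
      rw [hab]
      field_simp
      linear_combination a * hb3
    rw [hLHS]
    rw [show a + b = a + 1 * b by ring]
    rw [hcond 1, hcond ω4, hcond (ω4^2)]
    rcases F4cases (a * b⁻¹) with h | h | h | h <;> rw [h]
    · rw [if_neg, if_neg, if_neg]
      · ring
      · exact fun hh => o2_ne0 hh.symm
      · exact fun hh => o_ne0 hh.symm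
      · exact fun hh => one_ne_zero hh.symm
    · rw [if_pos rfl, if_neg, if_neg]
      · ring
      · exact fun hh => o2_ne1 hh.symm
      · exact fun hh => o_ne1 hh.symm
    · rw [if_neg o_ne1, if_pos rfl, if_neg]
      · ring
      · exact o_ne_o2
    · rw [if_neg (fun hh => o2_ne1 hh), if_neg (fun hh => o_ne_o2 hh.symm), if_pos rfl]
      ring

lemma sum_ite_card (P : Fin n → Prop) :
    (∑ i : Fin n, if P i then (1:F4) else 0) = ((Finset.univ.filter P).card : F4) := by
  rw [Finset.card_filter, Nat.cast_sum]
  apply Finset.sum_congr rfl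
  intro i _
  by_cases h : P i <;> simp [h]

lemma gram_diag1 (g1 g2 : Fin n → F4) :
    hermInner g1 g1 = (n : F4) - (Zc g1 g2 (Xv 0) : F4) := by
  have key : ∀ i : Fin n, g1 i * g1 i ^ 2
      = 1 - (if pr (Xv 0) (g1 i, g2 i) = 0 then (1:F4) else 0) := by
    intro i
    rw [point_cube]
    have c : (g1 i = 0) ↔ (pr (Xv 0) (g1 i, g2 i) = 0) := by simp [pr, Xv]
    rw [if_congr c rfl rfl]
  rw [hermInner]
  rw [Finset.sum_congr rfl (fun i _ => key i), Finset.sum_sub_distrib]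
  rw [sum_ite_card]
  simp [Zc]

lemma gram_diag2 (g1 g2 : Fin n → F4) :
    hermInner g2 g2 = (n : F4) - (Zc g1 g2 (Xv 1) : F4) := by
  have key : ∀ i : Fin n, g2 i * g2 i ^ 2
      = 1 - (if pr (Xv 1) (g1 i, g2 i) = 0 then (1:F4) else 0) := by
    intro i
    rw [point_cube]
    have c : (g2 i = 0) ↔ (pr (Xv 1) (g1 i, g2 i) = 0) := by simp [pr, Xv]
    rw [if_congr c rfl rfl]
  rw [hermInner]
  rw [Finset.sum_congr rfl (fun i _ => key i), Finset.sum_sub_distrib]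
  rw [sum_ite_card]
  simp [Zc]

lemma gram_off1 (g1 g2 : Fin n → F4) :
    hermInner g1 g2 = (Zc g1 g2 (Xv 2) : F4) + ω4 * (Zc g1 g2 (Xv 3) : F4)
      + ω4 ^ 2 * (Zc g1 g2 (Xv 4) : F4) := by
  have key : ∀ i : Fin n, g1 i * g2 i ^ 2
      = (if pr (Xv 2) (g1 i, g2 i) = 0 then (1:F4) else 0)
        + ω4 * (if pr (Xv 3) (g1 i, g2 i) = 0 then (1:F4) else 0)
        + ω4 ^ 2 * (if pr (Xv 4) (g1 i, g2 i) = 0 then (1:F4) else 0) := by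
    intro i
    rw [point_mixed (g1 i) (g2 i)]
    have c2 : (g1 i + g2 i = 0) ↔ (pr (Xv 2) (g1 i, g2 i) = 0) := by
      simp [pr, Xv]
    have c3 : (g1 i + ω4 * g2 i = 0) ↔ (pr (Xv 3) (g1 i, g2 i) = 0) := by
      simp [pr, Xv]
    have c4 : (g1 i + ω4 ^ 2 * g2 i = 0) ↔ (pr (Xv 4) (g1 i, g2 i) = 0) := by
      simp [pr, Xv]
    rw [if_congr c2 rfl rfl, if_congr c3 rfl rfl, if_congr c4 rfl rfl]
  rw [hermInner]
  rw [Finset.sum_congr rfl (fun i _ => key i)]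
  rw [Finset.sum_add_distrib, Finset.sum_add_distrib, ← Finset.mul_sum, ← Finset.mul_sum]
  rw [sum_ite_card, sum_ite_card, sum_ite_card]
  rfl

lemma herm_swap (u v : Fin n → F4) : hermInner v u = (hermInner u v) ^ 2 := by
  rw [hermInner, hermInner]
  have frob : (∑ i : Fin n, u i * v i ^ 2) ^ 2 = ∑ i : Fin n, (u i * v i ^ 2) ^ 2 :=
    sum_pow_char 2 _ _
  rw [frob]
  apply Finset.sum_congr rfl
  intro i _
  have h4 := pow4 (v i)
  linear_combination (-(u i ^ 2)) * h4

lemma gram_off2 (g1 g2 : Fin n → F4) :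
    hermInner g2 g1 = ((Zc g1 g2 (Xv 2) : F4) + ω4 * (Zc g1 g2 (Xv 3) : F4)
      + ω4 ^ 2 * (Zc g1 g2 (Xv 4) : F4)) ^ 2 := by
  rw [herm_swap, gram_off1]

end Stmt11
namespace Stmt11

open scoped Classical
open Finset

variable {n : ℕ}

lemma natCast_f4 (kk : ℕ) : (kk : F4) = if kk % 2 = 0 then 0 else 1 := by
  rcases Nat.mod_two_eq_zero_or_one kk with h | h
  · rw [if_pos h, natCast_even h]
  · rw [if_neg (by omega), natCast_odd h]

lemma key_class (m : ℕ) (z : Fin 5 → ℕ)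
    (hle : ∀ j, z j ≤ m+1)
    (hsum : z 0 + z 1 + z 2 + z 3 + z 4 = 5*m+2)
    (h3 : z 3 = m+1) (h4 : z 4 = m+1)
    (hdet : (((5*m+2 : ℕ) : F4) - (z 0 : F4)) * (((5*m+2 : ℕ) : F4) - (z 1 : F4))
      + ((z 2 : F4) + ω4 * (z 3 : F4) + ω4^2 * (z 4 : F4))
        * ((z 2 : F4) + ω4 * (z 3 : F4) + ω4^2 * (z 4 : F4)) ^ 2 ≠ 0) :
    z 0 = m ∧ z 1 = m ∧ z 2 = m := by
  have l0 := hle 0; have l1 := hle 1; have l2 := hle 2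
  have hn : ((5*m+2 : ℕ) : F4) = (m : F4) := by
    push_cast
    linear_combination ((2:F4)*(m:F4)+1) * two_zero
  have hc34 : ((m+1 : ℕ) : F4) = (m:F4) + 1 := by push_cast; ring
  rw [hn, h3, h4, hc34] at hdet
  have hB : (z 2 : F4) + ω4 * ((m:F4)+1) + ω4^2 * ((m:F4)+1) = (z 2 : F4) + (m:F4) + 1 := by
    linear_combination ((m:F4)+1) * o_sum2
  rw [hB] at hdet
  rw [natCast_f4 m, natCast_f4 (z 0), natCast_f4 (z 1), natCast_f4 (z 2)] at hdet
  rcases Nat.mod_two_eq_zero_or_one m with hm | hm <;>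
    rcases Nat.mod_two_eq_zero_or_one (z 0) with h0 | h0 <;>
    rcases Nat.mod_two_eq_zero_or_one (z 1) with h1 | h1 <;>
    rcases Nat.mod_two_eq_zero_or_one (z 2) with h2 | h2 <;>
    rw [hm, h0, h1, h2] at hdet <;>
    norm_num at hdet <;>
  first
  | (refine ⟨?_, ?_, ?_⟩ <;> omega)
  | (exact absurd (by linear_combination two_zero) hdet)
  | (exact absurd (by linear_combination (4:F4) * two_zero) hdet)
  | (exact absurd (by linear_combination (14:F4) * two_zero) hdet)
  | (exact absurd (by linear_combination (2:F4) * two_zero) hdet)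
  | (exact absurd (by linear_combination (3:F4) * two_zero) hdet)

lemma constraints {m : ℕ} {C : Submodule F4 (Fin (5*m+2) → F4)}
    {g1 g2 : Fin (5*m+2) → F4} (hg : IsGen C g1 g2)
    (hlb : ∀ x ∈ C, x ≠ 0 → 4*m+1 ≤ wt x) :
    (∀ j, Zc g1 g2 (Xv j) ≤ m+1) ∧ N0 g1 g2 = 0
      ∧ (Zc g1 g2 (Xv 0) + Zc g1 g2 (Xv 1) + Zc g1 g2 (Xv 2)
          + Zc g1 g2 (Xv 3) + Zc g1 g2 (Xv 4) = 5*m+2) := by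
  have hZ : ∀ j : Fin 5, Zc g1 g2 (Xv j) ≤ m+1 := by
    intro j
    have hmem := hg.mem_comb (Xv j).1 (Xv j).2
    have hne := hg.comb_ne0 (Xv j) (Xv_ne0 j)
    have hwt := hlb _ hmem hne
    have hzw := Zc_add_wt g1 g2 (Xv j)
    omega
  have hsum := sum_Zc g1 g2
  rw [Fin.sum_univ_five] at hsum
  have h0 := hZ 0; have h1 := hZ 1; have h2 := hZ 2; have h3 := hZ 3; have h4 := hZ 4
  exact ⟨hZ, by omega, by omega⟩

lemma two_heavy {m : ℕ} (z : Fin 5 → ℕ) (hle : ∀ j, z j ≤ m+1)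
    (hsum : z 0 + z 1 + z 2 + z 3 + z 4 = 5*m+2) :
    ∃ j k : Fin 5, j ≠ k ∧ z j = m+1 ∧ z k = m+1 := by
  have l0 := hle 0; have l1 := hle 1; have l2 := hle 2; have l3 := hle 3; have l4 := hle 4
  have key : (z 0 = m+1 ∧ z 1 = m+1) ∨ (z 0 = m+1 ∧ z 2 = m+1) ∨ (z 0 = m+1 ∧ z 3 = m+1)
      ∨ (z 0 = m+1 ∧ z 4 = m+1) ∨ (z 1 = m+1 ∧ z 2 = m+1) ∨ (z 1 = m+1 ∧ z 3 = m+1)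
      ∨ (z 1 = m+1 ∧ z 4 = m+1) ∨ (z 2 = m+1 ∧ z 3 = m+1) ∨ (z 2 = m+1 ∧ z 4 = m+1)
      ∨ (z 3 = m+1 ∧ z 4 = m+1) := by omega
  rcases key with ⟨a,b⟩|⟨a,b⟩|⟨a,b⟩|⟨a,b⟩|⟨a,b⟩|⟨a,b⟩|⟨a,b⟩|⟨a,b⟩|⟨a,b⟩|⟨a,b⟩
  exacts [⟨0,1,by decide,a,b⟩, ⟨0,2,by decide,a,b⟩, ⟨0,3,by decide,a,b⟩, ⟨0,4,by decide,a,b⟩,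
    ⟨1,2,by decide,a,b⟩, ⟨1,3,by decide,a,b⟩, ⟨1,4,by decide,a,b⟩, ⟨2,3,by decide,a,b⟩,
    ⟨2,4,by decide,a,b⟩, ⟨3,4,by decide,a,b⟩]

/-! ### Change of generators -/

lemma pair_change {C : Submodule F4 (Fin n → F4)} {g1 g2 : Fin n → F4}
    (hg : IsGen C g1 g2) (p q r s : F4) (hdet : p*s + q*r ≠ 0) :
    IsGen C (p • g1 + q • g2) (r • g1 + s • g2) := by
  constructor
  · intro x y hxy
    have hcomb : (x*p + y*r) • g1 + (x*q + y*s) • g2 = 0 := by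
      rw [← hxy]
      funext i
      simp only [Pi.add_apply, Pi.smul_apply, smul_eq_mul]
      ring
    obtain ⟨e1, e2⟩ := hg.indep _ _ hcomb
    have hdet' : p*s + r*q ≠ 0 := fun h => hdet (by linear_combination h)
    exact solve22 p r q s x y hdet' e1 e2
  · have hsub : Submodule.span F4 {p • g1 + q • g2, r • g1 + s • g2}
        ≤ Submodule.span F4 {g1, g2} := by
      rw [Submodule.span_le]
      rintro v hv
      rcases hv with rfl | rfl
      · exact Submodule.mem_span_pair.mpr ⟨p, q, rfl⟩
      · exact Submodule.mem_span_pair.mpr ⟨r, s, rfl⟩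
    have hg1 : g1 ∈ Submodule.span F4 {p • g1 + q • g2, r • g1 + s • g2} := by
      rw [Submodule.mem_span_pair]
      refine ⟨(p*s+q*r)⁻¹ * s, (p*s+q*r)⁻¹ * q, ?_⟩
      funext i
      simp only [Pi.add_apply, Pi.smul_apply, smul_eq_mul]
      field_simp
      ring_nf
      linear_combination (q * s * g2 i) * two_zero
    have hg2 : g2 ∈ Submodule.span F4 {p • g1 + q • g2, r • g1 + s • g2} := by
      rw [Submodule.mem_span_pair]
      refine ⟨(p*s+q*r)⁻¹ * r, (p*s+q*r)⁻¹ * p, ?_⟩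
      funext i
      simp only [Pi.add_apply, Pi.smul_apply, smul_eq_mul]
      field_simp
      ring_nf
      linear_combination (p * r * g1 i) * two_zero
    have hsub2 : Submodule.span F4 {g1, g2}
        ≤ Submodule.span F4 {p • g1 + q • g2, r • g1 + s • g2} := by
      rw [Submodule.span_le]
      rintro v hv
      rcases hv with rfl | rfl
      · exact hg1
      · exact hg2
    rw [hg.spanC]
    exact le_antisymm hsub2 hsub

lemma glmove {C : Submodule F4 (Fin n → F4)} {g1 g2 : Fin n → F4}
    (hg : IsGen C g1 g2) (j k : Fin 5) (hjk : j ≠ k) :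
    ∃ h1 h2 : Fin n → F4, IsGen C h1 h2 ∧ Zc h1 h2 (Xv 3) = Zc g1 g2 (Xv j)
      ∧ Zc h1 h2 (Xv 4) = Zc g1 g2 (Xv k) := by
  set Y := Xv j with hY
  set Z := Xv k with hZ
  set p := ω4^2 * Y.1 + ω4 * Z.1 with hp
  set q := ω4^2 * Y.2 + ω4 * Z.2 with hq
  set r := Y.1 + Z.1 with hr
  set s := Y.2 + Z.2 with hs
  have hdet : p*s + q*r ≠ 0 := by
    have hd := Xv_det j k hjk
    intro h
    apply hd
    rw [← hY, ← hZ] at *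
    linear_combination h - (Y.1*Z.2 + Y.2*Z.1) * o_sum2
      - (ω4^2*Y.1*Y.2 + ω4*Z.1*Z.2) * two_zero
  refine ⟨p • g1 + q • g2, r • g1 + s • g2, pair_change hg p q r s hdet, ?_, ?_⟩
  · unfold Zc
    congr 1
    apply Finset.filter_congr
    intro i _
    have hpt : pr (Xv 3) ((p • g1 + q • g2) i, (r • g1 + s • g2) i)
        = pr (Xv j) (g1 i, g2 i) := by
      have h3 : Xv 3 = (1, ω4) := rfl
      rw [h3, ← hY]
      simp only [pr, Pi.add_apply, Pi.smul_apply, smul_eq_mul, hp, hq, hr, hs]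
      linear_combination (g1 i * Y.1 + g2 i * Y.2) * o_sum2
        + ω4 * (g1 i * Z.1 + g2 i * Z.2) * two_zero
    rw [hpt]
  · unfold Zc
    congr 1
    apply Finset.filter_congr
    intro i _
    have hpt : pr (Xv 4) ((p • g1 + q • g2) i, (r • g1 + s • g2) i)
        = pr (Xv k) (g1 i, g2 i) := by
      have h4 : Xv 4 = (1, ω4^2) := rfl
      rw [h4, ← hZ]
      simp only [pr, Pi.add_apply, Pi.smul_apply, smul_eq_mul, hp, hq, hr, hs]
      linear_combination (g1 i * Z.1 + g2 i * Z.2) * o_sum2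
        + ω4^2 * (g1 i * Y.1 + g2 i * Y.2) * two_zero
    rw [hpt]

end Stmt11
namespace Stmt11

open scoped Classical
open Finset

variable {n : ℕ}

lemma matching {g1 g2 g1' g2' : Fin n → F4}
    (hz : ∀ j, Zc g1 g2 (Xv j) = Zc g1' g2' (Xv j))
    (hnz : ∀ i, (g1 i, g2 i) ≠ (0 : F4 × F4))
    (hnz' : ∀ i, (g1' i, g2' i) ≠ (0 : F4 × F4)) :
    ∃ (σ : Equiv.Perm (Fin n)) (s : Fin n → F4),
      (∀ i, s i ≠ 0) ∧ (∀ i, s i * g1 (σ i) = g1' i) ∧ (∀ i, s i * g2 (σ i) = g2' i) := by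
  classical
  choose l k hl h1 h2 using fun i => decomp (g1 i, g2 i) (hnz i)
  choose l' k' hl' h1' h2' using fun i => decomp (g1' i, g2' i) (hnz' i)
  have fib : ∀ t : Fin 5,
      (Finset.univ.filter fun i => k i = t) = (Finset.univ.filter fun i => pr (Xv (dIdx t)) (g1 i, g2 i) = 0) := by
    intro t
    apply Finset.filter_congr
    intro i _
    have e1 : g1 i = l i * (Xv (k i)).1 := h1 i
    have e2 : g2 i = l i * (Xv (k i)).2 := h2 i
    have hpr : pr (Xv (dIdx t)) (g1 i, g2 i) = l i * pr (Xv (dIdx t)) (Xv (k i)) := by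
      simp only [pr]
      rw [e1, e2]
      ring
    constructor
    · intro h
      rw [hpr, (pr_table (dIdx t) (k i)).mpr (by rw [h, dIdx_invol]), mul_zero]
    · intro h
      simp only [hpr, mul_eq_zero] at h
      rcases h with h | h
      · exact absurd h (hl i)
      · have := (pr_table (dIdx t) (k i)).mp h
        rw [dIdx_invol] at this
        exact this
  have fib' : ∀ t : Fin 5,
      (Finset.univ.filter fun i => k' i = t) = (Finset.univ.filter fun i => pr (Xv (dIdx t)) (g1' i, g2' i) = 0) := by
    intro t
    apply Finset.filter_congr
    intro i _
    have e1 : g1' i = l' i * (Xv (k' i)).1 := h1' i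
    have e2 : g2' i = l' i * (Xv (k' i)).2 := h2' i
    have hpr : pr (Xv (dIdx t)) (g1' i, g2' i) = l' i * pr (Xv (dIdx t)) (Xv (k' i)) := by
      simp only [pr]
      rw [e1, e2]
      ring
    constructor
    · intro h
      rw [hpr, (pr_table (dIdx t) (k' i)).mpr (by rw [h, dIdx_invol]), mul_zero]
    · intro h
      simp only [hpr, mul_eq_zero] at h
      rcases h with h | h
      · exact absurd h (hl' i)
      · have := (pr_table (dIdx t) (k' i)).mp h
        rw [dIdx_invol] at this
        exact this
  have hcard : ∀ t : Fin 5, Fintype.card {i // k' i = t} = Fintype.card {i // k i = t} := by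
    intro t
    rw [Fintype.card_subtype, Fintype.card_subtype]
    have e1 : (Finset.univ.filter fun i => k i = t).card = Zc g1 g2 (Xv (dIdx t)) := by
      rw [fib t]; rfl
    have e2 : (Finset.univ.filter fun i => k' i = t).card = Zc g1' g2' (Xv (dIdx t)) := by
      rw [fib' t]; rfl
    rw [e1, e2, hz (dIdx t)]
  have e : ∀ t : Fin 5, {i // k' i = t} ≃ {i // k i = t} :=
    fun t => Fintype.equivOfCardEq (hcard t)
  set σ0 : Fin n → Fin n := fun i => ((e (k' i)) ⟨i, rfl⟩ : {x // k x = k' i}).1 with hσ0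
  have hσprop : ∀ i, k (σ0 i) = k' i := fun i => ((e (k' i)) ⟨i, rfl⟩).2
  have e_congr : ∀ (t t' : Fin 5) (h : t = t') (x : Fin n) (hx : k' x = t),
      ((e t) ⟨x, hx⟩).1 = ((e t') ⟨x, h ▸ hx⟩).1 := by
    rintro t t' rfl x hx; rfl
  have hinj : Function.Injective σ0 := by
    intro i j hij
    have hk : k' j = k' i := by
      rw [← hσprop i, ← hσprop j, hij]
    have h2 : σ0 j = ((e (k' i)) ⟨j, hk⟩).1 := by
      have := e_congr (k' j) (k' i) hk j rfl
      exact this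
    have h3 : ((e (k' i)) ⟨i, rfl⟩).1 = ((e (k' i)) ⟨j, hk⟩).1 := by
      rw [← h2, ← hij]
    have h4 := (e (k' i)).injective (Subtype.ext h3)
    exact congrArg Subtype.val h4
  have hbij := Finite.injective_iff_bijective.mp hinj
  set σ : Equiv.Perm (Fin n) := Equiv.ofBijective σ0 hbij with hσ
  have happ : ∀ i, σ i = σ0 i := fun i => rfl
  refine ⟨σ, fun i => l' i * (l (σ0 i))⁻¹, ?_, ?_, ?_⟩
  · intro i
    exact mul_ne_zero (hl' i) (inv_ne_zero (hl (σ0 i)))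
  · intro i
    rw [happ i]
    have hg1v : g1 (σ0 i) = l (σ0 i) * (Xv (k (σ0 i))).1 := h1 (σ0 i)
    have e1' : g1' i = l' i * (Xv (k' i)).1 := h1' i
    have hli := hl (σ0 i)
    rw [hg1v, hσprop i, e1']
    field_simp
    try ring
  · intro i
    rw [happ i]
    have hg2v : g2 (σ0 i) = l (σ0 i) * (Xv (k (σ0 i))).2 := h2 (σ0 i)
    have e2' : g2' i = l' i * (Xv (k' i)).2 := h2' i
    have hli := hl (σ0 i)
    rw [hg2v, hσprop i, e2']
    field_simp
    try ring

lemma equiv_of_gens {C C' : Submodule F4 (Fin n → F4)} {g1 g2 g1' g2' : Fin n → F4}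
    (hg : IsGen C g1 g2) (hg' : IsGen C' g1' g2')
    (σ : Equiv.Perm (Fin n)) (s : Fin n → F4) (hs : ∀ i, s i ≠ 0)
    (e1 : ∀ i, s i * g1 (σ i) = g1' i) (e2 : ∀ i, s i * g2 (σ i) = g2' i) :
    codeEquiv C C' := by
  refine ⟨σ, s, hs, ?_⟩
  rw [hg.spanC, hg'.spanC, Submodule.map_span, Set.image_pair]
  have m1 : (monoMap σ s) g1 = g1' := by
    funext i
    show s i * g1 (σ i) = g1' i
    exact e1 i
  have m2 : (monoMap σ s) g2 = g2' := by
    funext i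
    show s i * g2 (σ i) = g2' i
    exact e2 i
  rw [m1, m2]

end Stmt11
namespace Stmt11

open scoped Classical
open Finset

variable {n : ℕ}

lemma N0_zero_iff (g1 g2 : Fin n → F4) :
    N0 g1 g2 = 0 ↔ ∀ i, (g1 i, g2 i) ≠ (0 : F4 × F4) := by
  rw [N0, Finset.card_eq_zero, Finset.filter_eq_empty_iff]
  simp

/-! ### The explicit code -/

def zoneIdx (m : ℕ) (v : ℕ) : Fin 5 :=
  if v = 0 then 0 else if v < 2+m then 1 else if v < 2+m+m then 0
  else if v < 2+m+m+m then 2 else if v < 2+m+m+m+m then 3 else 4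

lemma colzone (m : ℕ) (i : Fin (5*m+2)) :
    (row1 (5*m+2) m i, row2 (5*m+2) m m m m i) = Xv (zoneIdx m i.val) := by
  rcases i with ⟨v, hv⟩
  simp only [row1, row2, zoneIdx]
  split_ifs with h0 h1 h2 h3 h4 <;>
    first
    | (exfalso; omega)
    | simp [Xv, Prod.ext_iff]

lemma Zc_explicit (m : ℕ) (j : Fin 5) :
    Zc (row1 (5*m+2) m) (row2 (5*m+2) m m m m) (Xv j)
      = ((Finset.range (5*m+2)).filter fun v => zoneIdx m v = dIdx j).card := by
  unfold Zc
  have step1 : (Finset.univ.filter fun i : Fin (5*m+2) =>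
      pr (Xv j) (row1 (5*m+2) m i, row2 (5*m+2) m m m m i) = 0)
      = (Finset.univ.filter fun i : Fin (5*m+2) => zoneIdx m i.val = dIdx j) := by
    apply Finset.filter_congr
    intro i _
    rw [colzone m i, pr_table]
  rw [step1]
  rw [Finset.card_filter, Finset.card_filter]
  exact Fin.sum_univ_eq_sum_range (fun v => if zoneIdx m v = dIdx j then 1 else 0) (5*m+2)

lemma zone_t0 (m : ℕ) :
    ((Finset.range (5*m+2)).filter fun v => zoneIdx m v = 0).card = m+1 := by
  have : ((Finset.range (5*m+2)).filter fun v => zoneIdx m v = 0)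
      = insert 0 (Finset.Ico (2+m) (2+m+m)) := by
    ext v
    rw [Finset.mem_filter]
    simp only [Finset.mem_filter, Finset.mem_range, Finset.mem_insert, Finset.mem_Ico, zoneIdx]
    split_ifs with h0 h1 h2 h3 h4 <;> simp [Fin.ext_iff] <;> omega
  rw [this, Finset.card_insert_of_notMem (by simp)]
  rw [Nat.card_Ico]
  omega

lemma zone_t1 (m : ℕ) :
    ((Finset.range (5*m+2)).filter fun v => zoneIdx m v = 1).card = m+1 := by
  have : ((Finset.range (5*m+2)).filter fun v => zoneIdx m v = 1)
      = Finset.Ico 1 (2+m) := by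
    ext v
    rw [Finset.mem_filter]
    simp only [Finset.mem_filter, Finset.mem_range, Finset.mem_Ico, zoneIdx]
    split_ifs with h0 h1 h2 h3 h4 <;> simp [Fin.ext_iff] <;> omega
  rw [this, Nat.card_Ico]
  omega

lemma zone_t2 (m : ℕ) :
    ((Finset.range (5*m+2)).filter fun v => zoneIdx m v = 2).card = m := by
  have : ((Finset.range (5*m+2)).filter fun v => zoneIdx m v = 2)
      = Finset.Ico (2+m+m) (2+m+m+m) := by
    ext v
    rw [Finset.mem_filter]
    simp only [Finset.mem_filter, Finset.mem_range, Finset.mem_Ico, zoneIdx]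
    split_ifs with h0 h1 h2 h3 h4 <;> simp [Fin.ext_iff] <;> omega
  rw [this, Nat.card_Ico]
  omega

lemma zone_t3 (m : ℕ) :
    ((Finset.range (5*m+2)).filter fun v => zoneIdx m v = 3).card = m := by
  have : ((Finset.range (5*m+2)).filter fun v => zoneIdx m v = 3)
      = Finset.Ico (2+m+m+m) (2+m+m+m+m) := by
    ext v
    rw [Finset.mem_filter]
    simp only [Finset.mem_filter, Finset.mem_range, Finset.mem_Ico, zoneIdx]
    split_ifs with h0 h1 h2 h3 h4 <;> simp [Fin.ext_iff] <;> omega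
  rw [this, Nat.card_Ico]
  omega

lemma zone_t4 (m : ℕ) :
    ((Finset.range (5*m+2)).filter fun v => zoneIdx m v = 4).card = m := by
  have : ((Finset.range (5*m+2)).filter fun v => zoneIdx m v = 4)
      = Finset.Ico (2+m+m+m+m) (5*m+2) := by
    ext v
    rw [Finset.mem_filter]
    simp only [Finset.mem_filter, Finset.mem_range, Finset.mem_Ico, zoneIdx]
    split_ifs with h0 h1 h2 h3 h4 <;> simp [Fin.ext_iff] <;> omega
  rw [this, Nat.card_Ico]
  omega

lemma Zc_val (m : ℕ) (j : Fin 5) :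
    Zc (row1 (5*m+2) m) (row2 (5*m+2) m m m m) (Xv j)
      = if j = 0 ∨ j = 1 then m+1 else m := by
  rw [Zc_explicit]
  fin_cases j
  · show ((Finset.range (5*m+2)).filter fun v => zoneIdx m v = dIdx 0).card
        = if (0 : Fin 5) = 0 ∨ (0 : Fin 5) = 1 then m+1 else m
    rw [show dIdx 0 = 1 from rfl, zone_t1]; norm_num
  · show ((Finset.range (5*m+2)).filter fun v => zoneIdx m v = dIdx 1).card
        = if (1 : Fin 5) = 0 ∨ (1 : Fin 5) = 1 then m+1 else m
    rw [show dIdx 1 = 0 from rfl, zone_t0]; norm_num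
  · show ((Finset.range (5*m+2)).filter fun v => zoneIdx m v = dIdx 2).card
        = if (2 : Fin 5) = 0 ∨ (2 : Fin 5) = 1 then m+1 else m
    rw [show dIdx 2 = 2 from rfl, zone_t2]
    rw [if_neg (by decide)]
  · show ((Finset.range (5*m+2)).filter fun v => zoneIdx m v = dIdx 3).card
        = if (3 : Fin 5) = 0 ∨ (3 : Fin 5) = 1 then m+1 else m
    rw [show dIdx 3 = 4 from rfl, zone_t4]
    rw [if_neg (by decide)]
  · show ((Finset.range (5*m+2)).filter fun v => zoneIdx m v = dIdx 4).card
        = if (4 : Fin 5) = 0 ∨ (4 : Fin 5) = 1 then m+1 else m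
    rw [show dIdx 4 = 3 from rfl, zone_t3]
    rw [if_neg (by decide)]

lemma gen_explicit (m : ℕ) :
    IsGen (Ccode (5*m+2) m m m m m) (row1 (5*m+2) m) (row2 (5*m+2) m m m m) := by
  constructor
  · intro x y hxy
    have hi0 : (0 : ℕ) < 5*m+2 := by omega
    have hi1 : (1 : ℕ) < 5*m+2 := by omega
    have h0 := congrFun hxy ⟨0, hi0⟩
    have h1 := congrFun hxy ⟨1, hi1⟩
    have e10 : row1 (5*m+2) m ⟨0, hi0⟩ = 1 := by
      simp [row1]
    have e20 : row2 (5*m+2) m m m m ⟨0, hi0⟩ = 0 := by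
      simp [row2]
    have e11 : row1 (5*m+2) m ⟨1, hi1⟩ = 0 := by
      simp only [row1]
      rw [if_neg (by omega), if_pos (by omega)]
    have e21 : row2 (5*m+2) m m m m ⟨1, hi1⟩ = 1 := by
      simp only [row2]
      rw [if_neg (by omega), if_pos (by omega)]
    simp only [Pi.add_apply, Pi.smul_apply, smul_eq_mul, Pi.zero_apply, e10, e20, e11, e21]
      at h0 h1
    constructor
    · linear_combination h0
    · linear_combination h1
  · rfl

lemma optdist_52 (m : ℕ) : optimalDist (5*m+2) = 4*m+1 := by
  unfold optimalDist
  rw [if_pos (by omega)]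
  omega

lemma minwt_explicit (m : ℕ) : hasMinWeight (Ccode (5*m+2) m m m m m) (4*m+1) := by
  set g1 := row1 (5*m+2) m
  set g2 := row2 (5*m+2) m m m m
  have hg := gen_explicit m
  have hZle : ∀ x : F4 × F4, x ≠ 0 → Zc g1 g2 x ≤ m+1 := by
    intro x hx
    obtain ⟨l, k, hl, h1, h2⟩ := decomp x hx
    have hxl : x = l • Xv k := by
      apply Prod.ext
      · simpa using h1
      · simpa using h2
    rw [hxl, Zc_smul g1 g2 (Xv k) l hl, Zc_val m k]
    split_ifs <;> omega
  constructor
  · intro v hv hv0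
    rw [hg.spanC, Submodule.mem_span_pair] at hv
    obtain ⟨a, b, rfl⟩ := hv
    have hx : ((a, b) : F4 × F4) ≠ 0 := by
      intro h
      rw [Prod.ext_iff] at h
      apply hv0
      rw [show a = 0 from h.1, show b = 0 from h.2]
      simp
    have hzw : Zc g1 g2 (a, b) + wt (a • g1 + b • g2) = 5*m+2 :=
      Zc_add_wt g1 g2 (a, b)
    have := hZle (a, b) hx
    show 4*m+1 ≤ wt (a • g1 + b • g2)
    omega
  · refine ⟨g1, hg.mem1, ?_, ?_⟩
    · intro h
      have hi0 : (0 : ℕ) < 5*m+2 := by omega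
      have := congrFun h ⟨0, hi0⟩
      simp [g1, row1] at this
    · have hzw : Zc g1 g2 ((1:F4), (0:F4)) + wt ((1:F4) • g1 + (0:F4) • g2) = 5*m+2 :=
        Zc_add_wt g1 g2 (1, 0)
      have hcomb : (1:F4) • g1 + (0:F4) • g2 = g1 := by
        funext i
        simp
      rw [hcomb] at hzw
      have hz0 : Zc g1 g2 ((1:F4), (0:F4)) = m+1 := by
        have : ((1:F4), (0:F4)) = Xv 0 := rfl
        rw [this, Zc_val m 0]
        simp
      omega

lemma lcd_explicit (m : ℕ) : IsHermLCD (Ccode (5*m+2) m m m m m) := by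
  set g1 := row1 (5*m+2) m
  set g2 := row2 (5*m+2) m m m m
  have hg := gen_explicit m
  rw [LCD_iff hg, gram_diag1 g1 g2, gram_diag2 g1 g2, gram_off1 g1 g2, gram_off2 g1 g2]
  have hz0 : Zc g1 g2 (Xv 0) = m+1 := by rw [Zc_val]; simp
  have hz1 : Zc g1 g2 (Xv 1) = m+1 := by rw [Zc_val]; simp
  have hz2 : Zc g1 g2 (Xv 2) = m := by rw [Zc_val]; simp
  have hz3 : Zc g1 g2 (Xv 3) = m := by rw [Zc_val]; simp
  have hz4 : Zc g1 g2 (Xv 4) = m := by rw [Zc_val]; simp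
  rw [hz0, hz1, hz2, hz3, hz4]
  have hA : ((5*m+2 : ℕ) : F4) - ((m+1 : ℕ) : F4) = 1 := by
    push_cast
    linear_combination 2*(m:F4)*two_zero
  have hB : ((m : ℕ) : F4) + ω4 * ((m : ℕ) : F4) + ω4^2 * ((m : ℕ) : F4) = 0 := by
    linear_combination (m:F4) * o_sum
  rw [hA, hB]
  simp

lemma exists_optimal (m : ℕ) :
    IsOptimalLCD (5*m+2) (4*m+1) (Ccode (5*m+2) m m m m m) :=
  ⟨(gen_explicit m).finrank_two, minwt_explicit m, lcd_explicit m, (optdist_52 m).symm⟩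

/-! ### Classification -/

lemma classify {m : ℕ} {C : Submodule F4 (Fin (5*m+2) → F4)}
    (hrk : Module.finrank F4 C = 2) (hmw : hasMinWeight C (4*m+1)) (hlcd : IsHermLCD C) :
    ∃ h1 h2 : Fin (5*m+2) → F4, IsGen C h1 h2 ∧ (∀ i, (h1 i, h2 i) ≠ (0 : F4 × F4))
      ∧ (∀ j : Fin 5, Zc h1 h2 (Xv j) = if j = 0 ∨ j = 1 ∨ j = 2 then m else m+1) := by
  obtain ⟨g1, g2, hg⟩ := exists_gen C hrk
  have hlb := hmw.1
  obtain ⟨hle, hN0, hsum⟩ := constraints hg hlb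
  obtain ⟨j, k, hjk, hj, hk⟩ := two_heavy (fun j => Zc g1 g2 (Xv j)) hle hsum
  obtain ⟨h1, h2, hg2, hz3, hz4⟩ := glmove hg j k hjk
  obtain ⟨hle2, hN02, hsum2⟩ := constraints hg2 hlb
  have hz3' : Zc h1 h2 (Xv 3) = m+1 := by rw [hz3]; exact hj
  have hz4' : Zc h1 h2 (Xv 4) = m+1 := by rw [hz4]; exact hk
  have hdet := (LCD_iff hg2).mp hlcd
  rw [gram_diag1 h1 h2, gram_diag2 h1 h2, gram_off1 h1 h2, gram_off2 h1 h2] at hdet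
  obtain ⟨hz0', hz1', hz2'⟩ := key_class m (fun j => Zc h1 h2 (Xv j)) hle2
    (by simpa using hsum2) hz3' hz4' hdet
  refine ⟨h1, h2, hg2, (N0_zero_iff h1 h2).mp hN02, ?_⟩
  intro t
  fin_cases t
  · simpa using hz0'
  · simpa using hz1'
  · simpa using hz2'
  · simpa using hz3'
  · simpa using hz4'

end Stmt11

/-- for every `m ≥ 0` there exists an optimal Hermitian LCD
`[5m + 2, 2, 4m + 1]` code, and it is unique up to equivalence. -/
theorem stmt11 (m : ℕ) :
    (∃ C : Submodule F4 (Fin (5 * m + 2) → F4), IsOptimalLCD (5 * m + 2) (4 * m + 1) C) ∧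
    ∀ C C' : Submodule F4 (Fin (5 * m + 2) → F4),
      IsOptimalLCD (5 * m + 2) (4 * m + 1) C → IsOptimalLCD (5 * m + 2) (4 * m + 1) C' →
        codeEquiv C C' := by
  constructor
  · exact ⟨Ccode (5 * m + 2) m m m m m, Stmt11.exists_optimal m⟩
  · intro C C' hC hC'
    obtain ⟨hrk, hmw, hlcd, -⟩ := hC
    obtain ⟨hrk', hmw', hlcd', -⟩ := hC'
    obtain ⟨h1, h2, hg, hnz, hzv⟩ := Stmt11.classify hrk hmw hlcd
    obtain ⟨h1', h2', hg', hnz', hzv'⟩ := Stmt11.classify hrk' hmw' hlcd'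
    obtain ⟨σ, s, hs, e1, e2⟩ :=
      Stmt11.matching (g1 := h1) (g2 := h2) (g1' := h1') (g2' := h2')
        (fun j => by rw [hzv j, hzv' j]) hnz hnz'
    exact Stmt11.equiv_of_gens hg hg' σ s hs e1 e2
end
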